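/- arXiv:2601.00782 — 8 statements merged into one kernel-verified Lean document; each statement's English description precedes it below -/
import Mathlib

section
/- The convolution of two log-concave sequences of nonnegative real numbers is log-concave. Equivalently, if p(t) and q(t) are polynomials with nonnegative log-concave coefficient sequences with no internal zeros, then the coefficient sequence of p(t)q(t) is log-concave. -/
noncomputable def extz (a : ℕ → ℝ) : ℤ → ℝ := fun m => if 0 ≤ m then a m.toNat else 0

lemma extz_nonneg (a : ℕ → ℝ) (h : ∀ i, 0 ≤ a i) (m : ℤ) : 0 ≤ extz a m := by
  unfold extz; split
  · exact h _
  · exact le_refl 0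

lemma extz_nat (a : ℕ → ℝ) (i : ℕ) : extz a (i : ℤ) = a i := by simp [extz]

lemma extz_neg (a : ℕ → ℝ) (m : ℤ) (h : m < 0) : extz a m = 0 := by
  simp [extz, not_le.2 h]

lemma extz_lc (a : ℕ → ℝ) (h0 : ∀ i, 0 ≤ a i)
    (hlc : ∀ i, 1 ≤ i → a (i - 1) * a (i + 1) ≤ a i ^ 2) (m : ℤ) :
    extz a (m - 1) * extz a (m + 1) ≤ extz a m ^ 2 := by
  by_cases h : 1 ≤ m
  · have e1 : extz a (m - 1) = a (m.toNat - 1) := by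
      unfold extz; rw [if_pos (by omega)]; congr 1; omega
    have e2 : extz a (m + 1) = a (m.toNat + 1) := by
      unfold extz; rw [if_pos (by omega)]; congr 1; omega
    have e3 : extz a m = a m.toNat := by unfold extz; rw [if_pos (by omega)]
    rw [e1, e2, e3]
    exact hlc m.toNat (by omega)
  · have e1 : extz a (m - 1) = 0 := extz_neg a _ (by omega)
    rw [e1, zero_mul]
    exact sq_nonneg _

lemma extz_iz (a : ℕ → ℝ)
    (hiz : ∀ i j k, i < j → j < k → 0 < a i → 0 < a k → 0 < a j)
    (i j k : ℤ) (hij : i < j) (hjk : j < k) (hi : 0 < extz a i) (hk : 0 < extz a k) :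
    0 < extz a j := by
  have h0i : 0 ≤ i := by
    by_contra h
    rw [extz_neg a i (by omega)] at hi
    exact lt_irrefl _ hi
  have ei : extz a i = a i.toNat := by unfold extz; rw [if_pos h0i]
  have ej : extz a j = a j.toNat := by unfold extz; rw [if_pos (by omega)]
  have ek : extz a k = a k.toNat := by unfold extz; rw [if_pos (by omega)]
  rw [ej]
  rw [ei] at hi; rw [ek] at hk
  exact hiz i.toNat j.toNat k.toNat (by omega) (by omega) hi hk

/-- The key two-index log-concavity lemma. -/
lemma lc_gen (F : ℤ → ℝ) (h0 : ∀ i, 0 ≤ F i)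
    (hlc : ∀ i : ℤ, F (i - 1) * F (i + 1) ≤ F i ^ 2)
    (hiz : ∀ i j k : ℤ, i < j → j < k → 0 < F i → 0 < F k → 0 < F j)
    (p q : ℤ) (hpq : p ≤ q) : F (p - 1) * F (q + 1) ≤ F p * F q := by
  refine Int.le_induction (motive := fun r _ => F (p - 1) * F (r + 1) ≤ F p * F r) ?_ ?_ q hpq
  · have := hlc p; nlinarith [h0 (p - 1), h0 (p + 1), h0 p]
  · intro q hq ih
    have e2 : q + 1 + 1 = q + 2 := by ring
    rw [e2]
    have hlcq : F q * F (q + 2) ≤ F (q + 1) ^ 2 := by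
      have := hlc (q + 1)
      have e3 : q + 1 - 1 = q := by ring
      rw [e3, e2] at this
      exact this
    rcases eq_or_lt_of_le (h0 (q + 1)) with hq1 | hq1
    · -- F (q+1) = 0
      rcases eq_or_lt_of_le (h0 (p - 1)) with hp1 | hp1
      · rw [← hp1, zero_mul]; exact mul_nonneg (h0 p) (h0 (q + 1))
      · rcases eq_or_lt_of_le (h0 (q + 2)) with hq2 | hq2
        · rw [← hq2, mul_zero]; exact mul_nonneg (h0 p) (h0 (q + 1))
        · exfalso
          have := hiz (p - 1) (q + 1) (q + 2) (by omega) (by omega) hp1 hq2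
          rw [← hq1] at this
          exact lt_irrefl _ this
    · -- F (q+1) > 0
      rcases eq_or_lt_of_le (h0 q) with hq0 | hq0
      · -- F q = 0
        rcases eq_or_lt_of_le (h0 (p - 1)) with hp1 | hp1
        · rw [← hp1, zero_mul]; exact mul_nonneg (h0 p) (h0 (q + 1))
        · exfalso
          have := hiz (p - 1) q (q + 1) (by omega) (by omega) hp1 hq1
          rw [← hq0] at this
          exact lt_irrefl _ this
      · -- F q > 0
        have h1 : F (p - 1) * (F q * F (q + 2)) ≤ F (p - 1) * F (q + 1) ^ 2 :=
          mul_le_mul_of_nonneg_left hlcq (h0 (p - 1))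
        have h2 : (F (p - 1) * F (q + 1)) * F (q + 1) ≤ (F p * F q) * F (q + 1) :=
          mul_le_mul_of_nonneg_right ih (h0 (q + 1))
        have h3 : F q * (F (p - 1) * F (q + 2)) ≤ F q * (F p * F (q + 1)) := by nlinarith
        exact le_of_mul_le_mul_left h3 hq0

lemma conv_eq (a b : ℕ → ℝ) (n : ℕ) (t : ℤ) (T : Finset ℤ)
    (hT : Finset.Icc t ((n : ℤ) + t) ⊆ T) :
    ∑ m ∈ T, extz a (m - t) * extz b ((n : ℤ) + t - m)
      = ∑ i ∈ Finset.range (n + 1), a i * b (n - i) := by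
  rw [← Finset.sum_subset hT (fun m _ hm => ?_)]
  · refine Finset.sum_nbij' (fun m => (m - t).toNat) (fun i => (i : ℤ) + t) ?_ ?_ ?_ ?_ ?_
    · intro m hm
      simp only [Finset.mem_Icc] at hm
      simp only [Finset.mem_range]
      omega
    · intro i hi
      simp only [Finset.mem_range] at hi
      simp only [Finset.mem_Icc]
      omega
    · intro m hm
      simp only [Finset.mem_Icc] at hm
      show ((m - t).toNat : ℤ) + t = m
      omega
    · intro i hi
      simp only [Finset.mem_range] at hi
      show ((i : ℤ) + t - t).toNat = i
      omega
    · intro m hm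
      simp only [Finset.mem_Icc] at hm
      have e1 : extz a (m - t) = a (m - t).toNat := by
        unfold extz; rw [if_pos (by omega)]
      have e2 : extz b ((n : ℤ) + t - m) = b (n - (m - t).toNat) := by
        unfold extz; rw [if_pos (by omega)]; congr 1; omega
      rw [e1, e2]
  · -- vanishing outside Icc
    simp only [Finset.mem_Icc, not_and_or, not_le] at hm
    rcases hm with hm | hm
    · rw [extz_neg a _ (by omega), zero_mul]
    · rw [extz_neg b _ (by omega), mul_zero]

lemma cauchy_binet (G F : ℤ → ℝ) (K : ℤ) (S : Finset ℤ)
    (hG0 : ∀ m, 0 ≤ G m) (hF0 : ∀ m, 0 ≤ F m)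
    (hG : ∀ p q : ℤ, p ≤ q → G (p - 1) * G (q + 1) ≤ G p * G q)
    (hF : ∀ p q : ℤ, p ≤ q → F (p - 1) * F (q + 1) ≤ F p * F q) :
    (∑ m ∈ S, G (m - 1) * F (K - m)) * (∑ m ∈ S, G m * F (K + 1 - m))
      ≤ (∑ m ∈ S, G m * F (K - m)) * (∑ m ∈ S, G (m - 1) * F (K + 1 - m)) := by
  set f : ℤ → ℝ := fun m => G m with hf
  set g : ℤ → ℝ := fun m => G (m - 1) with hg
  set u : ℤ → ℝ := fun m => F (K - m) with hu
  set v : ℤ → ℝ := fun m => F (K + 1 - m) with hv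
  have key : (∑ m ∈ S, f m * u m) * (∑ n ∈ S, g n * v n)
      - (∑ m ∈ S, g m * u m) * (∑ n ∈ S, f n * v n)
      = ∑ m ∈ S, ∑ n ∈ S, (u m * v n) * (f m * g n - g m * f n) := by
    rw [Finset.sum_mul_sum, Finset.sum_mul_sum, ← Finset.sum_sub_distrib]
    refine Finset.sum_congr rfl fun m _ => ?_
    rw [← Finset.sum_sub_distrib]
    refine Finset.sum_congr rfl fun n _ => ?_
    ring
  have keycomm : (∑ m ∈ S, ∑ n ∈ S, (u m * v n) * (f m * g n - g m * f n))
      = ∑ m ∈ S, ∑ n ∈ S, (u n * v m) * (f n * g m - g n * f m) := Finset.sum_comm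
  have h2 : 2 * ((∑ m ∈ S, f m * u m) * (∑ n ∈ S, g n * v n)
      - (∑ m ∈ S, g m * u m) * (∑ n ∈ S, f n * v n))
      = ∑ m ∈ S, ∑ n ∈ S,
          ((f m * g n - f n * g m) * (u m * v n - u n * v m)) := by
    rw [two_mul]
    nth_rewrite 2 [key]
    rw [keycomm, key, ← Finset.sum_add_distrib]
    refine Finset.sum_congr rfl fun m _ => ?_
    rw [← Finset.sum_add_distrib]
    refine Finset.sum_congr rfl fun n _ => ?_
    ring
  have hnn : 0 ≤ ∑ m ∈ S, ∑ n ∈ S,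
      ((f m * g n - f n * g m) * (u m * v n - u n * v m)) := by
    refine Finset.sum_nonneg fun m _ => Finset.sum_nonneg fun n _ => ?_
    have fact : ∀ m n : ℤ, m < n →
        0 ≤ (f m * g n - f n * g m) ∧ 0 ≤ (u m * v n - u n * v m) := by
      intro m n hmn
      constructor
      · have h := hG m (n - 1) (by omega)
        have e : n - 1 + 1 = n := by ring
        rw [e] at h
        simp only [hf, hg]
        linarith
      · have h := hF (K + 1 - n) (K - m) (by omega)
        have e1 : K + 1 - n - 1 = K - n := by ring
        have e2 : K - m + 1 = K + 1 - m := by ring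
        rw [e1, e2] at h
        simp only [hu, hv]
        linarith
    rcases lt_trichotomy m n with h | h | h
    · obtain ⟨h1, h2⟩ := fact m n h
      exact mul_nonneg h1 h2
    · subst h; simp
    · obtain ⟨h1, h2⟩ := fact n m h
      have e1 : f m * g n - f n * g m = -(f n * g m - f m * g n) := by ring
      have e2 : u m * v n - u n * v m = -(u n * v m - u m * v n) := by ring
      nlinarith
  nlinarith [h2, hnn]

/-- The convolution of two log-concave sequences of nonnegative real numbers
(with no internal zeros, supported in finite ranges) is log-concave. -/
theorem stmt1 (da db : ℕ) (a b : ℕ → ℝ)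
    (ha0 : ∀ i, 0 ≤ a i) (hb0 : ∀ i, 0 ≤ b i)
    (hasupp : ∀ i, da < i → a i = 0) (hbsupp : ∀ i, db < i → b i = 0)
    (halc : ∀ i, 1 ≤ i → a (i - 1) * a (i + 1) ≤ a i ^ 2)
    (hblc : ∀ i, 1 ≤ i → b (i - 1) * b (i + 1) ≤ b i ^ 2)
    (haiz : ∀ i j k, i < j → j < k → 0 < a i → 0 < a k → 0 < a j)
    (hbiz : ∀ i j k, i < j → j < k → 0 < b i → 0 < b k → 0 < b j)
    (c : ℕ → ℝ) (hc : ∀ k, c k = ∑ i ∈ Finset.range (k + 1), a i * b (k - i)) :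
    ∀ k, 1 ≤ k → c (k - 1) * c (k + 1) ≤ c k ^ 2 := by
  intro k hk
  have hGlc : ∀ p q : ℤ, p ≤ q → extz a (p - 1) * extz a (q + 1) ≤ extz a p * extz a q :=
    lc_gen (extz a) (extz_nonneg a ha0) (extz_lc a ha0 halc) (extz_iz a haiz)
  have hFlc : ∀ p q : ℤ, p ≤ q → extz b (p - 1) * extz b (q + 1) ≤ extz b p * extz b q :=
    lc_gen (extz b) (extz_nonneg b hb0) (extz_lc b hb0 hblc) (extz_iz b hbiz)
  have efu : ∑ m ∈ Finset.Icc (-1 : ℤ) ((k : ℤ) + 2), extz a m * extz b ((k : ℤ) - m)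
      = c k := by
    have h := conv_eq a b k 0 (Finset.Icc (-1 : ℤ) ((k : ℤ) + 2)) (by
      intro x hx; simp only [Finset.mem_Icc] at hx ⊢; omega)
    rw [hc k, ← h]
    exact Finset.sum_congr rfl fun m _ => by first | rfl | (congr 2 <;> omega)
  have efv : ∑ m ∈ Finset.Icc (-1 : ℤ) ((k : ℤ) + 2), extz a m * extz b ((k : ℤ) + 1 - m)
      = c (k + 1) := by
    have h := conv_eq a b (k + 1) 0 (Finset.Icc (-1 : ℤ) ((k : ℤ) + 2)) (by
      intro x hx; simp only [Finset.mem_Icc] at hx ⊢; omega)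
    rw [hc (k + 1), ← h]
    exact Finset.sum_congr rfl fun m _ => by first | rfl | (congr 2 <;> omega)
  have egu : ∑ m ∈ Finset.Icc (-1 : ℤ) ((k : ℤ) + 2), extz a (m - 1) * extz b ((k : ℤ) - m)
      = c (k - 1) := by
    have h := conv_eq a b (k - 1) 1 (Finset.Icc (-1 : ℤ) ((k : ℤ) + 2)) (by
      intro x hx; simp only [Finset.mem_Icc] at hx ⊢; omega)
    rw [hc (k - 1), ← h]
    exact Finset.sum_congr rfl fun m _ => by first | rfl | (congr 2 <;> omega)
  have egv : ∑ m ∈ Finset.Icc (-1 : ℤ) ((k : ℤ) + 2), extz a (m - 1) * extz b ((k : ℤ) + 1 - m)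
      = c k := by
    have h := conv_eq a b k 1 (Finset.Icc (-1 : ℤ) ((k : ℤ) + 2)) (by
      intro x hx; simp only [Finset.mem_Icc] at hx ⊢; omega)
    rw [hc k, ← h]
  have main := cauchy_binet (extz a) (extz b) (k : ℤ) (Finset.Icc (-1 : ℤ) ((k : ℤ) + 2))
    (extz_nonneg a ha0) (extz_nonneg b hb0) hGlc hFlc
  rw [efu, efv, egu, egv] at main
  nlinarith [main]
end

section
/- If P_1 and P_2 are finite ranked posets each admitting a symmetric chain decomposition, then their Cartesian product P_1 × P_2 (ordered componentwise, with rank the sum of ranks) admits a symmetric chain decomposition. In particular, every finite product of chains C_{r_1} × C_{r_2} × ... × C_{r_n} admits a symmetric chain decomposition. -/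
/-- `S` is a symmetric chain decomposition of the poset `Q` (with rank function `ρ` and
total rank `n`): a partition of `Q` into saturated chains, each going from rank `r` to
rank `n - r`. -/
def IsSCD {Q : Type} [PartialOrder Q] (ρ : Q → ℕ) (n : ℕ) (S : Finset (List Q)) : Prop :=
  (∀ q : Q, ∃! l, l ∈ S ∧ q ∈ l) ∧
  ∀ l ∈ S, l ≠ [] ∧ l.Chain' (· ⋖ ·) ∧
    ∃ x y, l.head? = some x ∧ l.getLast? = some y ∧ ρ x + ρ y = n


set_option linter.unusedSectionVars false


section MoreHelpers
variable {Q : Type} [PartialOrder Q] [Inhabited Q] {ρ : Q → ℕ}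

lemma rank_getElem' (hcov : ∀ x y : Q, x ⋖ y → ρ y = ρ x + 1) {l : List Q}
    (hc : l.Chain' (· ⋖ ·)) (x : ℕ) (hx : x < l.length) (h0 : 0 < l.length) :
    ρ (l[x]'hx) = ρ (l[0]'h0) + x := by
  induction x with
  | zero => rfl
  | succ m ih =>
    have hm : m < l.length - 1 := by omega
    have hcc := List.isChain_iff_getElem.mp hc m (by omega)
    have := hcov _ _ hcc
    rw [show (l[m+1]'hx) = l[m + 1]'(by omega) from rfl, this, ih (by omega)]
    ring

lemma rank_getD (hcov : ∀ x y : Q, x ⋖ y → ρ y = ρ x + 1) {l : List Q}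
    (hc : l.Chain' (· ⋖ ·)) (x : ℕ) (hx : x < l.length) :
    ρ (l.getD x default) = ρ (l.getD 0 default) + x := by
  have h0 : 0 < l.length := by omega
  rw [List.getD_eq_getElem _ _ hx, List.getD_eq_getElem _ _ h0]
  exact rank_getElem' hcov hc x hx h0

lemma getD_inj (hcov : ∀ x y : Q, x ⋖ y → ρ y = ρ x + 1) {l : List Q}
    (hc : l.Chain' (· ⋖ ·)) {x y : ℕ} (hx : x < l.length) (hy : y < l.length)
    (h : l.getD x default = l.getD y default) : x = y := by
  have e1 := rank_getD hcov hc x hx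
  have e2 := rank_getD hcov hc y hy
  rw [h] at e1
  omega

lemma head?_getD {l : List Q} (hne : l ≠ []) : l.head? = some (l.getD 0 default) := by
  have h0 : 0 < l.length := List.length_pos_iff.mpr hne
  rw [List.head?_eq_getElem?, List.getElem?_eq_getElem h0, List.getD_eq_getElem _ _ h0]

lemma getLast?_getD {l : List Q} (hne : l ≠ []) :
    l.getLast? = some (l.getD (l.length - 1) default) := by
  have h0 : 0 < l.length := List.length_pos_iff.mpr hne
  rw [List.getLast?_eq_getElem?, List.getElem?_eq_getElem (by omega),
    List.getD_eq_getElem _ _ (by omega)]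

lemma mem_getD {l : List Q} {x : ℕ} (hx : x < l.length) : l.getD x default ∈ l := by
  rw [List.getD_eq_getElem _ _ hx]
  exact List.getElem_mem hx

lemma getD_mem_iff {l : List Q} {p : Q} (hp : p ∈ l) :
    ∃ x, x < l.length ∧ p = l.getD x default := by
  obtain ⟨x, hx, h⟩ := List.mem_iff_getElem.mp hp
  exact ⟨x, hx, by rw [List.getD_eq_getElem _ _ hx, h]⟩

end MoreHelpers

section Grid
variable {P₁ P₂ : Type} [PartialOrder P₁] [PartialOrder P₂] [Inhabited P₁] [Inhabited P₂]

/-- The `i`-th symmetric chain in the grid product of chains `l₁` and `l₂`. -/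
def grid (l₁ : List P₁) (l₂ : List P₂) (i : ℕ) : List (P₁ × P₂) :=
  ((List.range (l₂.length - 1 - i + 1)).map fun j => (l₁.getD i default, l₂.getD j default)) ++
  ((List.range (l₁.length - 1 - i)).map fun j =>
    (l₁.getD (i + 1 + j) default, l₂.getD (l₂.length - 1 - i) default))

lemma mem_grid_iff {l₁ : List P₁} {l₂ : List P₂} {i : ℕ} {p : P₁} {q : P₂}
    (h1 : 0 < l₁.length) (h2 : 0 < l₂.length)
    (hi : i ≤ min (l₁.length - 1) (l₂.length - 1)) :
    (p, q) ∈ grid l₁ l₂ i ↔ ∃ x y : ℕ, x ≤ l₁.length - 1 ∧ y ≤ l₂.length - 1 ∧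
      p = l₁.getD x default ∧ q = l₂.getD y default ∧
      ((x = i ∧ y ≤ l₂.length - 1 - i) ∨ (i < x ∧ y = l₂.length - 1 - i)) := by
  set a := l₁.length - 1
  set b := l₂.length - 1
  simp only [grid, List.mem_append, List.mem_map, List.mem_range, Prod.mk.injEq]
  constructor
  · rintro (⟨j, hj, hp, hq⟩ | ⟨j, hj, hp, hq⟩)
    · exact ⟨i, j, by omega, by omega, hp.symm, hq.symm, Or.inl ⟨rfl, by omega⟩⟩
    · exact ⟨i + 1 + j, b - i, by omega, by omega, hp.symm, hq.symm, Or.inr ⟨by omega, rfl⟩⟩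
  · rintro ⟨x, y, hx, hy, hp, hq, (⟨rfl, hyi⟩ | ⟨hix, rfl⟩)⟩
    · exact Or.inl ⟨y, by omega, hp.symm, hq.symm⟩
    · exact Or.inr ⟨x - i - 1, by omega, by rw [hp]; congr 1; omega, hq.symm⟩

lemma chain'_map_range {α : Type} (R : α → α → Prop) (m : ℕ) (u : ℕ → α)
    (h : ∀ j, j + 1 < m → R (u j) (u (j + 1))) :
    List.Chain' R ((List.range m).map u) := by
  show List.IsChain _ _
  rw [List.isChain_iff_getElem]
  intro j hj
  simp only [List.length_map, List.length_range] at hj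
  simp only [List.get_eq_getElem, List.getElem_map, List.getElem_range]
  exact h j (by omega)

lemma head?_map_range {α : Type} (m : ℕ) (u : ℕ → α) (hm : 0 < m) :
    (((List.range m).map u)).head? = some (u 0) := by
  rw [List.head?_eq_getElem?]
  rw [List.getElem?_eq_getElem (by simpa using hm)]
  simp

lemma getLast?_map_range {α : Type} (m : ℕ) (u : ℕ → α) (hm : 0 < m) :
    (((List.range m).map u)).getLast? = some (u (m - 1)) := by
  rw [List.getLast?_eq_getElem?]
  have hlen : ((List.range m).map u).length = m := by simp
  rw [List.getElem?_eq_getElem (by omega)]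
  simp only [List.getElem_map, List.getElem_range, hlen, Option.some.injEq]

end Grid


section Transport
variable {Q Q' : Type} [PartialOrder Q] [PartialOrder Q']

lemma orderIso_covBy (e : Q ≃o Q') {x y : Q} (h : x ⋖ y) : e x ⋖ e y := by
  constructor
  · exact e.lt_iff_lt.mpr h.lt
  · intro z h1 h2
    exact h.2 (show x < e.symm z by simpa using e.symm.lt_iff_lt.mpr h1)
      (show e.symm z < y by simpa using e.symm.lt_iff_lt.mpr h2)

lemma scd_transport (e : Q ≃o Q') (ρ' : Q' → ℕ) (n : ℕ) (S : Finset (List Q))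
    (h : IsSCD (fun q => ρ' (e q)) n S) :
    IsSCD ρ' n (@Finset.image _ _ (Classical.decEq _) (List.map ⇑e) S) := by
  classical
  rw [Subsingleton.elim (Classical.decEq (List Q')) inferInstance]
  obtain ⟨h1, h2⟩ := h
  constructor
  · intro q'
    obtain ⟨l, ⟨hlS, hql⟩, huniq⟩ := h1 (e.symm q')
    refine ⟨l.map e, ⟨Finset.mem_image_of_mem _ hlS, ?_⟩, ?_⟩
    · rw [List.mem_map]; exact ⟨_, hql, by simp⟩
    · rintro l' ⟨hl'S, hql'⟩
      rw [Finset.mem_image] at hl'S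
      obtain ⟨m, hmS, rfl⟩ := hl'S
      rw [List.mem_map] at hql'
      obtain ⟨x, hxm, hx⟩ := hql'
      have : x = e.symm q' := by rw [← hx]; simp
      subst this
      rw [huniq m ⟨hmS, hxm⟩]
  · intro l' hl'
    rw [Finset.mem_image] at hl'
    obtain ⟨m, hmS, rfl⟩ := hl'
    obtain ⟨hne, hch, x, y, hx, hy, hr⟩ := h2 m hmS
    refine ⟨by simpa using hne, ?_, e x, e y, ?_, ?_, hr⟩
    · show List.IsChain _ _
      rw [List.isChain_map]
      exact hch.imp (fun a b hab => orderIso_covBy e hab)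
    · rw [List.head?_map, hx]; rfl
    · rw [List.getLast?_map, hy]; rfl

lemma hcov_transport (e : Q ≃o Q') (ρ' : Q' → ℕ)
    (h : ∀ x y : Q, x ⋖ y → ρ' (e y) = ρ' (e x) + 1) :
    ∀ x y : Q', x ⋖ y → ρ' y = ρ' x + 1 := by
  intro x y hxy
  have := h (e.symm x) (e.symm y) (orderIso_covBy e.symm hxy)
  simpa using this

end Transport
section ProdSCD
variable {P₁ P₂ : Type} [PartialOrder P₁] [PartialOrder P₂] [Inhabited P₁] [Inhabited P₂]
  {ρ₁ : P₁ → ℕ} {ρ₂ : P₂ → ℕ} {n₁ n₂ : ℕ}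

lemma grid_uniq (hcov₁ : ∀ x y : P₁, x ⋖ y → ρ₁ y = ρ₁ x + 1)
    (hcov₂ : ∀ x y : P₂, x ⋖ y → ρ₂ y = ρ₂ x + 1)
    {l₁ : List P₁} {l₂ : List P₂} (hc₁ : l₁.Chain' (· ⋖ ·)) (hc₂ : l₂.Chain' (· ⋖ ·))
    (h1 : 0 < l₁.length) (h2 : 0 < l₂.length) {i i' : ℕ} {p : P₁} {q : P₂}
    (hi : i ≤ min (l₁.length - 1) (l₂.length - 1))
    (hi' : i' ≤ min (l₁.length - 1) (l₂.length - 1))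
    (hm : (p, q) ∈ grid l₁ l₂ i) (hm' : (p, q) ∈ grid l₁ l₂ i') : i = i' := by
  obtain ⟨x, y, hx, hy, hp, hq, hd⟩ := (mem_grid_iff h1 h2 hi).mp hm
  obtain ⟨x', y', hx', hy', hp', hq', hd'⟩ := (mem_grid_iff h1 h2 hi').mp hm'
  have hxx : x = x' := getD_inj hcov₁ hc₁ (by omega) (by omega) (hp ▸ hp')
  have hyy : y = y' := getD_inj hcov₂ hc₂ (by omega) (by omega) (hq ▸ hq')
  omega

lemma prod_scd (hcov₁ : ∀ x y : P₁, x ⋖ y → ρ₁ y = ρ₁ x + 1)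
    (hcov₂ : ∀ x y : P₂, x ⋖ y → ρ₂ y = ρ₂ x + 1)
    {S₁ : Finset (List P₁)} {S₂ : Finset (List P₂)}
    (hS₁ : IsSCD ρ₁ n₁ S₁) (hS₂ : IsSCD ρ₂ n₂ S₂) :
    ∃ S, IsSCD (fun p : P₁ × P₂ => ρ₁ p.1 + ρ₂ p.2) (n₁ + n₂) S := by
  classical
  obtain ⟨hu₁, hl₁⟩ := hS₁
  obtain ⟨hu₂, hl₂⟩ := hS₂
  refine ⟨S₁.biUnion fun l₁ => S₂.biUnion fun l₂ =>
    (Finset.range (min (l₁.length - 1) (l₂.length - 1) + 1)).image (grid l₁ l₂), ?_, ?_⟩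
  · -- partition property
    rintro ⟨p, q⟩
    obtain ⟨l₁, ⟨hl₁S, hpl₁⟩, huniq₁⟩ := hu₁ p
    obtain ⟨l₂, ⟨hl₂S, hql₂⟩, huniq₂⟩ := hu₂ q
    obtain ⟨hne₁, hc₁, -⟩ := hl₁ l₁ hl₁S
    obtain ⟨hne₂, hc₂, -⟩ := hl₂ l₂ hl₂S
    have h1 : 0 < l₁.length := List.length_pos_iff.mpr hne₁
    have h2 : 0 < l₂.length := List.length_pos_iff.mpr hne₂
    set a := l₁.length - 1 with ha
    set b := l₂.length - 1 with hb
    obtain ⟨x, hx, hpx⟩ := getD_mem_iff hpl₁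
    obtain ⟨y, hy, hqy⟩ := getD_mem_iff hql₂
    set i := if x + y ≤ b then x else b - y with hidef
    have hi : i ≤ min a b := by rw [hidef]; split <;> omega
    have hmem : (p, q) ∈ grid l₁ l₂ i := by
      rw [mem_grid_iff h1 h2 hi]
      refine ⟨x, y, by omega, by omega, hpx, hqy, ?_⟩
      rw [hidef]; split
      · left; constructor
        · rfl
        · omega
      · right; omega
    refine ⟨grid l₁ l₂ i, ⟨?_, hmem⟩, ?_⟩
    · rw [Finset.mem_biUnion]
      refine ⟨l₁, hl₁S, ?_⟩
      rw [Finset.mem_biUnion]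
      refine ⟨l₂, hl₂S, ?_⟩
      rw [Finset.mem_image]
      exact ⟨i, Finset.mem_range.mpr (by omega), rfl⟩
    · rintro l ⟨hlS, hql⟩
      rw [Finset.mem_biUnion] at hlS
      obtain ⟨l₁', hl₁'S, hlS⟩ := hlS
      rw [Finset.mem_biUnion] at hlS
      obtain ⟨l₂', hl₂'S, hlS⟩ := hlS
      rw [Finset.mem_image] at hlS
      obtain ⟨i', hi'r, rfl⟩ := hlS
      rw [Finset.mem_range] at hi'r
      obtain ⟨hne₁', hc₁', -⟩ := hl₁ l₁' hl₁'S
      obtain ⟨hne₂', hc₂', -⟩ := hl₂ l₂' hl₂'S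
      have h1' : 0 < l₁'.length := List.length_pos_iff.mpr hne₁'
      have h2' : 0 < l₂'.length := List.length_pos_iff.mpr hne₂'
      have hi'' : i' ≤ min (l₁'.length - 1) (l₂'.length - 1) := by omega
      obtain ⟨x', y', hx', hy', hp', hq', -⟩ := (mem_grid_iff h1' h2' hi'').mp hql
      have hpm : p ∈ l₁' := hp' ▸ mem_getD (by omega)
      have hqm : q ∈ l₂' := hq' ▸ mem_getD (by omega)
      have e1 : l₁' = l₁ := huniq₁ l₁' ⟨hl₁'S, hpm⟩
      have e2 : l₂' = l₂ := huniq₂ l₂' ⟨hl₂'S, hqm⟩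
      subst e1; subst e2
      rw [grid_uniq hcov₁ hcov₂ hc₁ hc₂ h1 h2 hi'' hi hql hmem]
  · -- each block is a symmetric saturated chain
    intro l hlS
    rw [Finset.mem_biUnion] at hlS
    obtain ⟨l₁, hl₁S, hlS⟩ := hlS
    rw [Finset.mem_biUnion] at hlS
    obtain ⟨l₂, hl₂S, hlS⟩ := hlS
    rw [Finset.mem_image] at hlS
    obtain ⟨i, hir, rfl⟩ := hlS
    rw [Finset.mem_range] at hir
    obtain ⟨hne₁, hc₁, u₁, v₁, hh₁, hg₁, hr₁⟩ := hl₁ l₁ hl₁S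
    obtain ⟨hne₂, hc₂, u₂, v₂, hh₂, hg₂, hr₂⟩ := hl₂ l₂ hl₂S
    have h1 : 0 < l₁.length := List.length_pos_iff.mpr hne₁
    have h2 : 0 < l₂.length := List.length_pos_iff.mpr hne₂
    have hia : i ≤ l₁.length - 1 := by omega
    have hib : i ≤ l₂.length - 1 := by omega
    have hu₁' : u₁ = l₁.getD 0 default := by
      rw [head?_getD hne₁] at hh₁; exact (Option.some_inj.mp hh₁).symm
    have hv₁' : v₁ = l₁.getD (l₁.length - 1) default := by
      rw [getLast?_getD hne₁] at hg₁; exact (Option.some_inj.mp hg₁).symm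
    have hu₂' : u₂ = l₂.getD 0 default := by
      rw [head?_getD hne₂] at hh₂; exact (Option.some_inj.mp hh₂).symm
    have hv₂' : v₂ = l₂.getD (l₂.length - 1) default := by
      rw [getLast?_getD hne₂] at hg₂; exact (Option.some_inj.mp hg₂).symm
    have hcf : ∀ x, x + 1 < l₁.length → l₁.getD x default ⋖ l₁.getD (x+1) default := by
      intro x hx
      rw [List.getD_eq_getElem _ _ (show x < l₁.length by omega), List.getD_eq_getElem _ _ hx]
      simpa using List.isChain_iff_getElem.mp hc₁ x (by omega)
    have hcg : ∀ y, y + 1 < l₂.length → l₂.getD y default ⋖ l₂.getD (y+1) default := by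
      intro y hy
      rw [List.getD_eq_getElem _ _ (show y < l₂.length by omega), List.getD_eq_getElem _ _ hy]
      simpa using List.isChain_iff_getElem.mp hc₂ y (by omega)
    refine ⟨?_, ?_, (l₁.getD i default, l₂.getD 0 default),
        (l₁.getD (l₁.length - 1) default, l₂.getD (l₂.length - 1 - i) default), ?_, ?_, ?_⟩
    · -- nonempty
      have hlen : (grid l₁ l₂ i).length = (l₂.length - 1 - i + 1) + (l₁.length - 1 - i) := by
        simp [grid]
      intro hcon
      rw [hcon] at hlen
      simp at hlen
      omega
    · -- chain'
      show List.IsChain _ _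
      rw [grid, List.isChain_append]
      refine ⟨?_, ?_, ?_⟩
      · apply chain'_map_range
        intro j hj
        exact Prod.mk_covBy_mk_iff.mpr (Or.inr ⟨hcg j (by omega), rfl⟩)
      · apply chain'_map_range
        intro j hj
        have : i + 1 + (j + 1) = (i + 1 + j) + 1 := by omega
        rw [this]
        exact Prod.mk_covBy_mk_iff.mpr (Or.inl ⟨hcf (i + 1 + j) (by omega), rfl⟩)
      · intro x hx y hy
        by_cases hai : l₁.length - 1 - i = 0
        · rw [hai] at hy; simp at hy
        · rw [getLast?_map_range _ _ (by omega)] at hx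
          rw [head?_map_range _ _ (by omega)] at hy
          simp only [Option.mem_def, Option.some_inj] at hx hy
          subst hx; subst hy
          have : (l₂.length - 1 - i + 1) - 1 = l₂.length - 1 - i := by omega
          rw [this]
          exact Prod.mk_covBy_mk_iff.mpr (Or.inl ⟨by simpa using hcf i (by omega), rfl⟩)
    · -- head?
      rw [grid, List.head?_append, head?_map_range _ _ (by omega)]
      rfl
    · -- getLast?
      rw [grid, List.getLast?_append]
      by_cases hai : l₁.length - 1 - i = 0
      · rw [hai]
        simp only [List.range_zero, List.map_nil, List.getLast?_nil, Option.none_or]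
        rw [getLast?_map_range _ _ (by omega)]
        have h1' : (l₂.length - 1 - i + 1) - 1 = l₂.length - 1 - i := by omega
        have h2' : i = l₁.length - 1 := by omega
        rw [h1', h2']
      · rw [getLast?_map_range _ _ (by omega)]
        have : i + 1 + (l₁.length - 1 - i - 1) = l₁.length - 1 := by omega
        rw [this]
        rfl
    · -- rank symmetry
      have e1 := rank_getD hcov₁ hc₁ i (by omega)
      have e2 := rank_getD hcov₁ hc₁ (l₁.length - 1) (by omega)
      have e3 := rank_getD hcov₂ hc₂ (l₂.length - 1 - i) (by omega)
      have e4 := rank_getD hcov₂ hc₂ (l₂.length - 1) (by omega)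
      rw [hu₁', hv₁'] at hr₁
      rw [hu₂', hv₂'] at hr₂
      simp only []
      omega

end ProdSCD

section FinChain

lemma fin_hcov (r : ℕ) : ∀ x y : Fin (r + 1), x ⋖ y → (y : ℕ) = (x : ℕ) + 1 :=
  fun _ _ h => (Nat.covBy_iff_add_one_eq.mp (Fin.coe_covBy_iff.mpr h)).symm

lemma fin_scd (r : ℕ) :
    IsSCD (fun x : Fin (r + 1) => (x : ℕ)) r {List.finRange (r + 1)} := by
  constructor
  · intro q
    refine ⟨List.finRange (r + 1), ⟨Finset.mem_singleton_self _, List.mem_finRange q⟩, ?_⟩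
    rintro l ⟨hl, -⟩
    exact Finset.mem_singleton.mp hl
  · intro l hl
    rw [Finset.mem_singleton] at hl; subst hl
    have hlen := List.length_finRange (n := r + 1)
    refine ⟨?_, ?_, 0, Fin.last r, ?_, ?_, by simp⟩
    · intro h; rw [h] at hlen; simp at hlen
    · show List.IsChain _ _
      rw [List.isChain_iff_getElem]
      intro i hi
      simp only [List.get_eq_getElem, List.getElem_finRange]
      apply Fin.coe_covBy_iff.mp
      apply Nat.covBy_iff_add_one_eq.mpr
      simp
    · rw [List.head?_eq_getElem?, List.getElem?_eq_getElem (by omega)]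
      simp only [List.getElem_finRange, Option.some_inj]
      ext
      simp
    · rw [List.getLast?_eq_getElem?, List.getElem?_eq_getElem (by omega)]
      simp only [List.getElem_finRange, Option.some_inj]
      ext
      simp [hlen]

end FinChain

section Pi

/-- Order isomorphism between a pi type over `Fin (k+1)` and the product of its head
component and the pi type of the tail. -/
def consOrderIso (k : ℕ) (m : Fin (k + 1) → ℕ) :
    (∀ i : Fin (k + 1), Fin (m i)) ≃o (Fin (m 0) × ∀ i : Fin k, Fin (m i.succ)) where
  toFun a := (a 0, fun i => a i.succ)
  invFun p := Fin.cons p.1 p.2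
  left_inv a := by
    funext i
    induction i using Fin.cases <;> simp
  right_inv p := by
    ext <;> simp
  map_rel_iff' := by
    intro a b
    constructor
    · intro h i
      induction i using Fin.cases
      · exact h.1
      · exact h.2 _
    · intro h
      exact ⟨h 0, fun i => h i.succ⟩

lemma pi_scd : ∀ (k : ℕ) (r : Fin k → ℕ),
    (∀ x y : (∀ i, Fin (r i + 1)), x ⋖ y → (∑ i, ((y i : ℕ))) = (∑ i, ((x i : ℕ))) + 1) ∧
    ∃ S : Finset (List (∀ i, Fin (r i + 1))),
      IsSCD (fun a => ∑ i, ((a i : ℕ))) (∑ i, r i) S := by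
  intro k
  induction k with
  | zero =>
    intro r
    constructor
    · intro x y h
      exact absurd (funext fun i => i.elim0 : x = y) h.lt.ne
    · refine ⟨{[fun i => i.elim0]}, ?_, ?_⟩
      · intro q
        refine ⟨[fun i => i.elim0], ⟨Finset.mem_singleton_self _, ?_⟩, ?_⟩
        · have : q = fun i => i.elim0 := funext fun i => i.elim0
          rw [this]; exact List.mem_singleton_self _
        · rintro l ⟨hl, -⟩; exact Finset.mem_singleton.mp hl
      · intro l hl
        rw [Finset.mem_singleton] at hl; subst hl
        exact ⟨by simp, List.isChain_singleton _, _, _, rfl, rfl, by simp⟩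
  | succ k ih =>
    intro r
    obtain ⟨ihcov, Spi, hSpi⟩ := ih (fun i => r i.succ)
    set e := consOrderIso k (fun i => r i + 1) with he
    have hcovprod : ∀ x y : Fin (r 0 + 1) × (∀ i : Fin k, Fin (r i.succ + 1)), x ⋖ y →
        ((y.1 : ℕ) + ∑ i, ((y.2 i : ℕ))) = ((x.1 : ℕ) + ∑ i, ((x.2 i : ℕ))) + 1 := by
      rintro ⟨x1, x2⟩ ⟨y1, y2⟩ h
      rcases Prod.mk_covBy_mk_iff.mp h with ⟨hc, rfl⟩ | ⟨hc, rfl⟩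
      · have := fin_hcov (r 0) _ _ hc; dsimp only; omega
      · have := ihcov _ _ hc; dsimp only; omega
    have hρ : (fun p : Fin (r 0 + 1) × (∀ i : Fin k, Fin (r i.succ + 1)) =>
        (fun a : ∀ i : Fin (k+1), Fin (r i + 1) => ∑ i, ((a i : ℕ))) (e.symm p)) =
        fun p => (p.1 : ℕ) + ∑ i, ((p.2 i : ℕ)) := by
      funext p
      have : (e.symm p : ∀ i : Fin (k+1), Fin (r i + 1)) = Fin.cons p.1 p.2 := rfl
      simp only [this]
      rw [Fin.sum_univ_succ]
      simp
    constructor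
    · apply hcov_transport e.symm
      intro x y h
      have hx := congrFun hρ x
      have hy := congrFun hρ y
      simp only at hx hy
      rw [hx, hy]
      exact hcovprod x y h
    · obtain ⟨Sp, hSp⟩ := prod_scd (fin_hcov (r 0)) ihcov (fin_scd (r 0)) hSpi
      have h' := scd_transport e.symm (fun a => ∑ i, ((a i : ℕ)))
        (r 0 + ∑ i : Fin k, r i.succ) Sp (by rw [hρ]; exact hSp)
      rw [show (∑ i : Fin (k+1), r i) = r 0 + ∑ i : Fin k, r i.succ from Fin.sum_univ_succ r]
      exact ⟨_, h'⟩

end Pi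

/-- If two finite ranked posets admit symmetric chain decompositions, so does
their Cartesian product; in particular every finite product of chains admits one. -/
theorem stmt4 {P₁ P₂ : Type} [Fintype P₁] [Fintype P₂] [PartialOrder P₁] [PartialOrder P₂]
    (ρ₁ : P₁ → ℕ) (ρ₂ : P₂ → ℕ) (n₁ n₂ : ℕ)
    (hcov₁ : ∀ x y : P₁, x ⋖ y → ρ₁ y = ρ₁ x + 1)
    (hcov₂ : ∀ x y : P₂, x ⋖ y → ρ₂ y = ρ₂ x + 1)
    (h₁ : ∃ S, IsSCD ρ₁ n₁ S) (h₂ : ∃ S, IsSCD ρ₂ n₂ S) :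
    (∃ S, IsSCD (fun p : P₁ × P₂ => ρ₁ p.1 + ρ₂ p.2) (n₁ + n₂) S) ∧
    (∀ (k : ℕ) (r : Fin k → ℕ),
      ∃ S : Finset (List (∀ i, Fin (r i + 1))),
        IsSCD (fun a => ∑ i, (a i : ℕ)) (∑ i, r i) S) := by
  constructor
  · by_cases hP₁ : Nonempty P₁
    · by_cases hP₂ : Nonempty P₂
      · haveI := Classical.inhabited_of_nonempty hP₁
        haveI := Classical.inhabited_of_nonempty hP₂
        obtain ⟨S₁, hS₁⟩ := h₁
        obtain ⟨S₂, hS₂⟩ := h₂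
        exact prod_scd hcov₁ hcov₂ hS₁ hS₂
      · exact ⟨∅, fun q => absurd ⟨q.2⟩ hP₂, fun l hl => by simp at hl⟩
    · exact ⟨∅, fun q => absurd ⟨q.1⟩ hP₁, fun l hl => by simp at hl⟩
  · intro k r
    exact (pi_scd k r).2
end

section
/- For the product of chains P = C_{r_1} × C_{r_2} × ... × C_{r_n}, there exists a symmetric chain decomposition S whose set of initial elements is exactly { (a_1, ..., a_n) : 0 ≤ a_s ≤ r_s for all s, and a_s ≤ Σ_{i=s+1}^{n} (r_i - 2 a_i) for all s }. -/
section Infra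

variable {Q : Type} [PartialOrder Q]

lemma chain_nodup {l : List Q} (h : l.Chain' (· ⋖ ·)) : l.Nodup := by
  have h' : l.Chain' (· < ·) := h.imp fun a b hab => hab.lt
  rw [List.Chain', List.isChain_iff_pairwise] at h'
  exact h'.imp ne_of_lt

lemma rank_getElem (ρ : Q → ℕ) (hρ : ∀ a b : Q, a ⋖ b → ρ b = ρ a + 1)
    {l : List Q} (hl : l.Chain' (· ⋖ ·)) (k : ℕ) (hk : k < l.length) :
    ρ (l[k]) = ρ (l[0]'(Nat.zero_lt_of_lt hk)) + k := by
  induction k with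
  | zero => simp
  | succ k ih =>
    have hk' : k < l.length := Nat.lt_of_succ_lt hk
    have hcov : l[k] ⋖ l[k+1] := by
      rw [List.Chain', List.isChain_iff_getElem] at hl
      have := hl k (by omega)
      simpa [List.get_eq_getElem] using this
    rw [hρ _ _ hcov, ih hk']
    omega

lemma mem_finRange_drop {r s : ℕ} {y : Fin r} :
    y ∈ (List.finRange r).drop s ↔ s ≤ y.val := by
  rw [List.mem_iff_getElem]
  constructor
  · rintro ⟨k, hk, rfl⟩
    simp only [List.getElem_drop, List.getElem_finRange]
    simp
  · intro hs
    have hy := y.isLt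
    refine ⟨y.val - s, by simpa using by omega, ?_⟩
    simp only [List.getElem_drop, List.getElem_finRange]
    ext
    simp
    omega

lemma chain'_covBy_finRange (r : ℕ) : (List.finRange r).Chain' (· ⋖ ·) := by
  rw [List.Chain', List.isChain_iff_getElem]
  intro i hi
  simp only [List.get_eq_getElem, List.getElem_finRange]
  rw [← Fin.coe_covBy_iff, Order.covBy_iff_add_one_eq]
  simp

end Infra

section ChainDef

variable {Q : Type} [PartialOrder Q]

/-- One symmetric chain in the grid `C_r × (chain l)`: horizontal segment at height `j`,
then vertical segment. -/
def scdChain (r : ℕ) (j : Fin (r+1)) (l : List Q) : List (Fin (r+1) × Q) :=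
  (l.take (l.length - j.val)).map (fun x => (j, x)) ++
    ((l.take (l.length - j.val)).getLast?.elim []
      (fun q => ((List.finRange (r+1)).drop (j.val+1)).map (fun y => (y, q))))

variable {r : ℕ} {j : Fin (r+1)} {l : List Q} {q : Q}

lemma getLast?_take (hj : j.val < l.length)
    (hq : l[l.length - 1 - j.val]? = some q) :
    (l.take (l.length - j.val)).getLast? = some q := by
  rw [List.getLast?_eq_getElem?, List.getElem?_take, List.length_take]
  have : (l.length - j.val) ⊓ l.length = l.length - j.val := by omega
  rw [this, if_pos (by omega)]
  rwa [show l.length - j.val - 1 = l.length - 1 - j.val by omega]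

lemma scdChain_eq (hj : j.val < l.length) (hq : l[l.length - 1 - j.val]? = some q) :
    scdChain r j l = (l.take (l.length - j.val)).map (fun x => (j, x)) ++
      ((List.finRange (r+1)).drop (j.val+1)).map (fun y => (y, q)) := by
  unfold scdChain
  rw [getLast?_take hj hq]
  rfl

lemma scdChain_head? (hj : j.val < l.length) (hq : l[l.length - 1 - j.val]? = some q)
    (x : Q) (hx : l.head? = some x) :
    (scdChain r j l).head? = some (j, x) := by
  rw [scdChain_eq hj hq, List.head?_append, List.head?_map]
  have : (l.take (l.length - j.val)).head? = some x := by
    rw [List.head?_eq_getElem?, List.getElem?_take, if_pos (by omega),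
      ← List.head?_eq_getElem?]
    exact hx
  rw [this]
  rfl

lemma scdChain_getLast? (hj : j.val < l.length) (hq : l[l.length - 1 - j.val]? = some q) :
    (scdChain r j l).getLast? = some (⟨r, Nat.lt_succ_self r⟩, q) := by
  rw [scdChain_eq hj hq, List.getLast?_append, List.getLast?_map]
  have hlen : ((List.finRange (r+1)).drop (j.val+1)).length = r - j.val := by simp
  rcases Nat.lt_or_ge j.val r with h | h
  · have hfin : ((List.finRange (r+1)).drop (j.val+1))[r - j.val - 1]? =
        some (⟨r, Nat.lt_succ_self r⟩ : Fin (r+1)) := by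
      rw [List.getElem?_drop, List.getElem?_eq_getElem (by simp; omega),
        List.getElem_finRange]
      congr 1
      ext
      simp
      omega
    rw [List.getLast?_eq_getElem?, hlen, hfin]
    simp
  · have hjr : j.val = r := by omega
    have hdrop : ((List.finRange (r+1)).drop (j.val+1)) = [] := by
      apply List.eq_nil_of_length_eq_zero
      rw [hlen]; omega
    rw [hdrop]
    simp only [List.map_nil, List.getLast?_nil, Option.none_or, List.getLast?_map,
      getLast?_take hj hq, Option.map_some]
    have : j = (⟨r, Nat.lt_succ_self r⟩ : Fin (r+1)) := Fin.ext hjr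
    rw [this]
    simp

lemma scdChain_mem_iff (hj : j.val < l.length) (hq : l[l.length - 1 - j.val]? = some q)
    {p : Fin (r+1) × Q} :
    p ∈ scdChain r j l ↔
      (p.1 = j ∧ p.2 ∈ l.take (l.length - j.val)) ∨ (j.val < p.1.val ∧ p.2 = q) := by
  obtain ⟨p1, p2⟩ := p
  rw [scdChain_eq hj hq, List.mem_append, List.mem_map, List.mem_map]
  simp only [Prod.mk.injEq]
  constructor
  · rintro (⟨x, hx, rfl, rfl⟩ | ⟨y, hy, rfl, rfl⟩)
    · exact Or.inl ⟨rfl, hx⟩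
    · exact Or.inr ⟨by simpa using Nat.lt_of_succ_le (mem_finRange_drop.1 hy), rfl⟩
  · rintro (⟨rfl, h2⟩ | ⟨h1, rfl⟩)
    · exact Or.inl ⟨p2, h2, rfl, rfl⟩
    · exact Or.inr ⟨p1, mem_finRange_drop.2 (by omega), rfl, rfl⟩

lemma scdChain_chain' (hj : j.val < l.length) (hq : l[l.length - 1 - j.val]? = some q)
    (hc : l.Chain' (· ⋖ ·)) : (scdChain r j l).Chain' (· ⋖ ·) := by
  rw [scdChain_eq hj hq]
  apply List.IsChain.append
  · rw [List.isChain_map]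
    exact (hc.take _).imp (fun a b h => Prod.mk_covBy_mk_iff_right.2 h)
  · rw [List.isChain_map]
    exact (((chain'_covBy_finRange (r+1)).drop _)).imp
      (fun a b h => Prod.mk_covBy_mk_iff_left.2 h)
  · intro x hx y hy
    rw [Option.mem_def, List.getLast?_map, getLast?_take hj hq, Option.map_some] at hx
    rw [Option.mem_def, List.head?_map, List.head?_drop] at hy
    rcases Nat.lt_or_ge (j.val + 1) (r + 1) with h | h
    · rw [List.getElem?_eq_getElem (by simpa using h), List.getElem_finRange] at hy
      simp only [Option.map_some, Option.some.injEq] at hx hy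
      subst hx; subst hy
      refine Prod.mk_covBy_mk_iff_left.2 ?_
      rw [← Fin.coe_covBy_iff, Order.covBy_iff_add_one_eq]
      simp
    · rw [List.getElem?_eq_none (by simpa using h)] at hy
      simp at hy

lemma scdChain_ne_nil (hj : j.val < l.length) (hq : l[l.length - 1 - j.val]? = some q) :
    scdChain r j l ≠ [] := by
  rw [scdChain_eq hj hq]
  intro hcon
  rcases List.append_eq_nil_iff.1 hcon with ⟨h1, -⟩
  apply_fun List.length at h1
  simp at h1
  omega

end ChainDef

section ListHelp
variable {α : Type*}

lemma mem_take_of_lt {l : List α} {k s : ℕ} (hk : k < l.length) (h : k < s) :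
    l[k] ∈ l.take s := by
  have hk' : k < (l.take s).length := by simp; omega
  have : (l.take s)[k] = l[k] := List.getElem_take
  rw [← this]
  exact List.getElem_mem _

lemma lt_of_mem_take {l : List α} (hnd : l.Nodup) {k s : ℕ} (hk : k < l.length)
    (h : l[k] ∈ l.take s) : k < s := by
  rw [List.mem_iff_getElem] at h
  obtain ⟨i, hi, hieq⟩ := h
  rw [List.getElem_take] at hieq
  have : i = k := (hnd.getElem_inj_iff).1 hieq
  simp at hi
  omega

end ListHelp

section Step

variable {Q : Type} [PartialOrder Q] [DecidableEq Q]

lemma scd_length_eq (ρ : Q → ℕ) (N : ℕ) (hρ : ∀ a b : Q, a ⋖ b → ρ b = ρ a + 1)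
    {l : List Q} (hne : l ≠ []) (hc : l.Chain' (· ⋖ ·))
    (hN : ρ (l.head hne) + ρ (l.getLast hne) = N) :
    N = 2 * ρ (l.head hne) + (l.length - 1) := by
  have hpos : 0 < l.length := List.length_pos_iff.2 hne
  have h1 : ρ (l.getLast hne) = ρ (l[0]'hpos) + (l.length - 1) := by
    rw [List.getLast_eq_getElem]
    exact rank_getElem ρ hρ hc _ (by omega)
  rw [List.head_eq_getElem] at hN ⊢
  omega

theorem scd_step (ρ : Q → ℕ) (N : ℕ) (hρ : ∀ a b : Q, a ⋖ b → ρ b = ρ a + 1)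
    (r : ℕ) (S : Finset (List Q)) (hS : IsSCD ρ N S) :
    ∃ S' : Finset (List (Fin (r+1) × Q)),
      IsSCD (fun p => p.1.val + ρ p.2) (r + N) S' ∧
      ∀ p : Fin (r+1) × Q,
        (∃ l ∈ S', l.head? = some p) ↔
          (∃ l ∈ S, l.head? = some p.2) ∧ p.1.val + 2 * ρ p.2 ≤ N := by
  classical
  set S' : Finset (List (Fin (r+1) × Q)) := ((S ×ˢ (Finset.univ : Finset (Fin (r+1)))).filter
      (fun x => x.2.val < x.1.length)).image (fun x => scdChain r x.2 x.1) with hS'def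
  have hmem₁ : ∀ (l : List Q) (j : Fin (r+1)), l ∈ S → j.val < l.length →
      scdChain r j l ∈ S' := by
    intro l j hl hj
    rw [hS'def]
    exact Finset.mem_image.2 ⟨(l, j), Finset.mem_filter.2
      ⟨Finset.mem_product.2 ⟨hl, Finset.mem_univ _⟩, hj⟩, rfl⟩
  have hmem₂ : ∀ l' ∈ S', ∃ l ∈ S, ∃ j : Fin (r+1), j.val < l.length ∧ scdChain r j l = l' := by
    intro l' hl'
    rw [hS'def] at hl'
    obtain ⟨⟨l, j⟩, hmem, heq⟩ := Finset.mem_image.1 hl'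
    obtain ⟨hprod, hlen⟩ := Finset.mem_filter.1 hmem
    exact ⟨l, (Finset.mem_product.1 hprod).1, j, hlen, heq⟩
  -- basic facts for a member of S
  have hfacts : ∀ l ∈ S, ∃ hne : l ≠ [], l.Chain' (· ⋖ ·) ∧
      N = 2 * ρ (l.head hne) + (l.length - 1) := by
    intro l hl
    obtain ⟨hne, hchain, x, y, hx, hy, hrk⟩ := hS.2 l hl
    refine ⟨hne, hchain, ?_⟩
    apply scd_length_eq ρ N hρ hne hchain
    rw [List.head?_eq_head hne] at hx
    rw [List.getLast?_eq_getLast hne] at hy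
    rw [Option.some.inj hx, Option.some.inj hy]
    exact hrk
  refine ⟨S', ⟨?_, ?_⟩, ?_⟩
  · -- partition property
    rintro ⟨y, x⟩
    obtain ⟨l, ⟨hlS, hxl⟩, huniq⟩ := hS.1 x
    obtain ⟨hne, hchain, hkey⟩ := hfacts l hlS
    have hnd := chain_nodup hchain
    obtain ⟨k, hk, rfl⟩ := List.mem_iff_getElem.1 hxl
    have hyr := y.isLt
    obtain ⟨j, hjval⟩ : ∃ j : Fin (r+1), j.val = min y.val (l.length - 1 - k) :=
      ⟨⟨_, by omega⟩, rfl⟩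
    have hjl : j.val < l.length := by omega
    have hq : l[l.length - 1 - j.val]? = some (l[l.length - 1 - j.val]'(by omega)) :=
      List.getElem?_eq_getElem _
    have hmemiff := scdChain_mem_iff (j := j) hjl hq (p := ((y, l[k]) : Fin (r+1) × Q))
    dsimp only at hmemiff
    refine ⟨scdChain r j l, ⟨hmem₁ l j hlS hjl, ?_⟩, ?_⟩
    · rw [hmemiff]
      rcases le_or_gt y.val (l.length - 1 - k) with hcase | hcase
      · refine Or.inl ⟨Fin.ext (by omega), ?_⟩
        exact mem_take_of_lt hk (by omega)
      · refine Or.inr ⟨by omega, ?_⟩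
        simp only [show l.length - 1 - j.val = k by omega]
    · -- uniqueness
      rintro l'' ⟨hl''S, hpmem⟩
      obtain ⟨l₂, hl₂S, j₂, hj₂, rfl⟩ := hmem₂ l'' hl''S
      have hq₂ : l₂[l₂.length - 1 - j₂.val]? = some (l₂[l₂.length - 1 - j₂.val]'(by omega)) :=
        List.getElem?_eq_getElem _
      rw [scdChain_mem_iff hj₂ hq₂] at hpmem
      dsimp only at hpmem
      -- in both cases l[k] ∈ l₂
      have hxl₂ : l[k] ∈ l₂ := by
        rcases hpmem with ⟨-, h⟩ | ⟨-, h⟩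
        · exact List.take_subset _ _ h
        · rw [h]; exact List.getElem_mem _
      obtain rfl : l₂ = l := huniq l₂ ⟨hl₂S, hxl₂⟩
      have hjeq : j₂ = j := by
        apply Fin.ext
        rcases hpmem with ⟨h1, h2⟩ | ⟨h1, h2⟩
        · have hky := lt_of_mem_take hnd hk h2
          have hyj : y.val = j₂.val := congrArg Fin.val h1
          omega
        · have hkq := (hnd.getElem_inj_iff).1 h2
          have hjy : j₂.val < y.val := h1
          omega
      rw [hjeq]
  · -- chain conditions
    intro l' hl'
    obtain ⟨l, hlS, j, hj, rfl⟩ := hmem₂ l' hl'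
    obtain ⟨hne, hchain, hkey⟩ := hfacts l hlS
    have hq : l[l.length - 1 - j.val]? = some (l[l.length - 1 - j.val]'(by omega)) :=
      List.getElem?_eq_getElem _
    refine ⟨scdChain_ne_nil hj hq, scdChain_chain' hj hq hchain, ?_⟩
    refine ⟨(j, l.head hne), (⟨r, Nat.lt_succ_self r⟩, l[l.length - 1 - j.val]'(by omega)), ?_, ?_, ?_⟩
    · exact scdChain_head? hj hq _ (List.head?_eq_head hne)
    · exact scdChain_getLast? hj hq
    · have hpos : 0 < l.length := List.length_pos_iff.2 hne
      have hrk : ρ (l[l.length - 1 - j.val]'(by omega)) = ρ (l[0]'hpos) + (l.length - 1 - j.val) :=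
        rank_getElem ρ hρ hchain _ (by omega)
      have hhead : l.head hne = l[0]'hpos := by rw [List.head_eq_getElem]
      simp only [hrk, hhead]
      rw [hhead] at hkey
      omega
  · -- heads characterization
    rintro ⟨y, x⟩
    dsimp only
    constructor
    · rintro ⟨l', hl'S, hhd⟩
      obtain ⟨l, hlS, j, hj, rfl⟩ := hmem₂ l' hl'S
      obtain ⟨hne, hchain, hkey⟩ := hfacts l hlS
      have hq : l[l.length - 1 - j.val]? = some (l[l.length - 1 - j.val]'(by omega)) :=
        List.getElem?_eq_getElem _
      rw [scdChain_head? hj hq _ (List.head?_eq_head hne)] at hhd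
      have h1 : j = y := congrArg Prod.fst (Option.some.inj hhd)
      have h2 : l.head hne = x := congrArg Prod.snd (Option.some.inj hhd)
      subst h1
      refine ⟨⟨l, hlS, by rw [List.head?_eq_head hne, h2]⟩, ?_⟩
      rw [← h2]
      omega
    · rintro ⟨⟨l, hlS, hhd⟩, hbound⟩
      obtain ⟨hne, hchain, hkey⟩ := hfacts l hlS
      rw [List.head?_eq_head hne] at hhd
      have h2 : l.head hne = x := Option.some.inj hhd
      rw [← h2] at hbound
      have hpos : 0 < l.length := List.length_pos_iff.2 hne
      have hj : y.val < l.length := by omega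
      have hq : l[l.length - 1 - y.val]? = some (l[l.length - 1 - y.val]'(by omega)) :=
        List.getElem?_eq_getElem _
      refine ⟨scdChain r y l, hmem₁ l y hlS hj, ?_⟩
      rw [scdChain_head? hj hq _ (List.head?_eq_head hne), h2]

end Step

section Iso

/-- Order isomorphism between `Fin (β 0 + 1) × ∏_{i<n} Fin (β i.succ + 1)` and
`∏_{i<n+1} Fin (β i + 1)` given by `Fin.cons`. -/
def consIso (n : ℕ) (β : Fin (n+1) → ℕ) :
    (Fin (β 0 + 1) × ∀ i : Fin n, Fin (β i.succ + 1)) ≃o (∀ i : Fin (n+1), Fin (β i + 1)) where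
  toFun p := Fin.cons p.1 p.2
  invFun a := (a 0, Fin.tail a)
  left_inv p := by
    obtain ⟨p1, p2⟩ := p
    simp [Fin.tail_cons]
  right_inv a := Fin.cons_self_tail a
  map_rel_iff' := by
    intro p q
    obtain ⟨p1, p2⟩ := p
    obtain ⟨q1, q2⟩ := q
    constructor
    · intro h
      refine ⟨by simpa using h 0, fun i => by simpa using h i.succ⟩
    · rintro ⟨h1, h2⟩
      intro i
      induction i using Fin.cases with
      | zero => simpa using h1
      | succ i => simpa using h2 i

lemma sum_covBy : ∀ {n : ℕ} {β : Fin n → ℕ} {a b : ∀ i, Fin (β i + 1)}, a ⋖ b →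
    (∑ i, (b i : ℕ)) = (∑ i, (a i : ℕ)) + 1 := by
  intro n
  induction n with
  | zero =>
    intro β a b h
    exact absurd (Subsingleton.elim a b) h.ne
  | succ n ih =>
    intro β a b h
    have ha : (consIso n β) ((a 0, Fin.tail a)) = a := Fin.cons_self_tail a
    have hb : (consIso n β) ((b 0, Fin.tail b)) = b := Fin.cons_self_tail b
    have h' : ((a 0, Fin.tail a) : Fin (β 0 + 1) × ∀ i : Fin n, Fin (β i.succ + 1)) ⋖
        (b 0, Fin.tail b) := by
      rw [← apply_covBy_apply_iff (consIso n β), ha, hb]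
      exact h
    rw [Fin.sum_univ_succ (fun i => (b i : ℕ)), Fin.sum_univ_succ (fun i => (a i : ℕ))]
    rcases Prod.mk_covBy_mk_iff.1 h' with ⟨h1, h2⟩ | ⟨h1, h2⟩
    · have hv : (a 0 : ℕ) + 1 = (b 0 : ℕ) :=
        Order.covBy_iff_add_one_eq.1 (Fin.coe_covBy_iff.2 h1)
      have ht : ∀ i : Fin n, (b i.succ : ℕ) = (a i.succ : ℕ) := by
        intro i
        exact congrArg Fin.val (congrFun h2.symm i)
      rw [Finset.sum_congr rfl (fun i _ => ht i)]
      omega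
    · have hv : (a 0 : ℕ) = (b 0 : ℕ) := congrArg Fin.val h2
      have := ih h1
      rw [show (∑ i : Fin n, ((b i.succ : ℕ))) = ∑ i, ((Fin.tail b i : ℕ)) from rfl,
        show (∑ i : Fin n, ((a i.succ : ℕ))) = ∑ i, ((Fin.tail a i : ℕ)) from rfl, this]
      omega

end Iso

section Transfer

theorem scd_transfer {Q Q' : Type} [PartialOrder Q] [PartialOrder Q'] [DecidableEq Q']
    (e : Q ≃o Q') (ρ : Q' → ℕ) (N : ℕ) (S : Finset (List Q))
    (h : IsSCD (fun q => ρ (e q)) N S) :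
    ∃ S' : Finset (List Q'), IsSCD ρ N S' ∧
      ∀ x : Q', (∃ l ∈ S', l.head? = some x) ↔ (∃ l ∈ S, l.head? = some (e.symm x)) := by
  classical
  have hmap : ∀ (l : List Q) (x : Q'), (l.map e).head? = some x ↔ l.head? = some (e.symm x) := by
    intro l x
    rw [List.head?_map]
    cases hl : l.head? with
    | none => simp
    | some a =>
      simp only [Option.map_some, Option.some.injEq]
      constructor
      · rintro rfl; simp
      · intro hx; rw [hx]; simp
  refine ⟨S.image (List.map e), ⟨?_, ?_⟩, ?_⟩
  · intro x
    obtain ⟨l, ⟨hl, hmem⟩, huniq⟩ := h.1 (e.symm x)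
    refine ⟨l.map e, ⟨Finset.mem_image_of_mem _ hl, ?_⟩, ?_⟩
    · rw [List.mem_map]
      exact ⟨e.symm x, hmem, by simp⟩
    · rintro l' ⟨hl', hxl'⟩
      obtain ⟨l₂, hl₂, rfl⟩ := Finset.mem_image.1 hl'
      have : e.symm x ∈ l₂ := by
        rw [List.mem_map] at hxl'
        obtain ⟨a, ha, rfl⟩ := hxl'
        simpa using ha
      rw [huniq l₂ ⟨hl₂, this⟩]
  · intro l' hl'
    obtain ⟨l, hl, rfl⟩ := Finset.mem_image.1 hl'
    obtain ⟨hne, hchain, x, y, hx, hy, hrk⟩ := h.2 l hl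
    refine ⟨by simpa using hne, ?_, e x, e y, ?_, ?_, hrk⟩
    · rw [List.Chain', List.isChain_map]
      exact hchain.imp (fun a b hab => (apply_covBy_apply_iff e).2 hab)
    · rw [List.head?_map, hx]; rfl
    · rw [List.getLast?_map, hy]; rfl
  · intro x
    constructor
    · rintro ⟨l', hl', hhd⟩
      obtain ⟨l, hl, rfl⟩ := Finset.mem_image.1 hl'
      exact ⟨l, hl, (hmap l x).1 hhd⟩
    · rintro ⟨l, hl, hhd⟩
      exact ⟨l.map e, Finset.mem_image_of_mem _ hl, (hmap l x).2 hhd⟩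

end Transfer

/-- The product of chains `C_{r_1} × ⋯ × C_{r_n}` admits a symmetric chain
decomposition whose initial elements are exactly the tuples `(a_1, ..., a_n)` with
`a_s ≤ Σ_{i > s} (r_i - 2 a_i)` for all `s`. -/
theorem stmt5 (n : ℕ) (r : Fin n → ℕ) :
    ∃ S : Finset (List (∀ i, Fin (r i + 1))),
      IsSCD (fun a => ∑ i, (a i : ℕ)) (∑ i, r i) S ∧
      ∀ a : ∀ i, Fin (r i + 1),
        (∃ l ∈ S, l.head? = some a) ↔
          ∀ s : Fin n, (a s : ℤ) ≤ ∑ i ∈ Finset.Ioi s, ((r i : ℤ) - 2 * (a i : ℤ)) := by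
  induction n with
  | zero =>
    classical
    refine ⟨{[fun i => i.elim0]}, ⟨?_, ?_⟩, ?_⟩
    · intro q
      refine ⟨[fun i => i.elim0], ⟨Finset.mem_singleton_self _, ?_⟩, ?_⟩
      · rw [Subsingleton.elim q (fun i => i.elim0)]
        exact List.mem_singleton.2 rfl
      · rintro l ⟨hl, -⟩
        exact Finset.mem_singleton.1 hl
    · intro l hl
      rw [Finset.mem_singleton] at hl
      subst hl
      exact ⟨by simp, List.isChain_singleton _, fun i => i.elim0, fun i => i.elim0, rfl, rfl, by simp⟩
    · intro a
      constructor
      · intro _ s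
        exact s.elim0
      · intro _
        refine ⟨[fun i => i.elim0], Finset.mem_singleton_self _, ?_⟩
        rw [Subsingleton.elim a (fun i => i.elim0)]
        rfl
  | succ n ih =>
    classical
    obtain ⟨S, hS, hheads⟩ := ih (fun i => r i.succ)
    obtain ⟨S', hS', hheads'⟩ := scd_step _ _ (fun a b h => sum_covBy h) (r 0) S hS
    have hN : (∑ i, r i) = r 0 + ∑ i : Fin n, r i.succ := Fin.sum_univ_succ r
    have hrk : ∀ p : Fin (r 0 + 1) × (∀ i : Fin n, Fin (r i.succ + 1)),
        (∑ i, (((consIso n r) p) i : ℕ)) = p.1.val + ∑ i, (p.2 i : ℕ) := by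
      intro p
      rw [Fin.sum_univ_succ (fun i => (((consIso n r) p) i : ℕ))]
      show ((Fin.cons p.1 p.2 : ∀ i : Fin (n+1), Fin (r i + 1)) 0 : ℕ) + _ = _
      rw [Fin.cons_zero]
      congr 1
    have hSCD : IsSCD (fun q : Fin (r 0 + 1) × (∀ i : Fin n, Fin (r i.succ + 1)) =>
        ∑ i, (((consIso n r) q) i : ℕ)) (∑ i, r i) S' := by
      have hfun : (fun q : Fin (r 0 + 1) × (∀ i : Fin n, Fin (r i.succ + 1)) =>
          ∑ i, (((consIso n r) q) i : ℕ)) = fun p => p.1.val + ∑ i, (p.2 i : ℕ) := funext hrk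
      rw [hfun, hN]
      exact hS'
    obtain ⟨S'', hS'', hheads''⟩ := scd_transfer (consIso n r) (fun a => ∑ i, (a i : ℕ))
      (∑ i, r i) S' hSCD
    refine ⟨S'', hS'', ?_⟩
    intro a
    rw [hheads'' a, show (consIso n r).symm a = (a 0, Fin.tail a) from rfl,
      hheads' (a 0, Fin.tail a)]
    dsimp only
    rw [hheads (Fin.tail a)]
    have e1 : ((∑ i : Fin n, r i.succ : ℕ) : ℤ) = ∑ i : Fin n, (r i.succ : ℤ) := by
      push_cast; rfl
    have e2 : ((∑ i : Fin n, ((Fin.tail a i : ℕ)) : ℕ) : ℤ) = ∑ i : Fin n, ((a i.succ : ℕ) : ℤ) := by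
      push_cast; rfl
    have hz : ∑ i ∈ Finset.Ioi (0 : Fin (n+1)), ((r i : ℤ) - 2 * (a i : ℤ))
        = (∑ i : Fin n, (r i.succ : ℤ)) - 2 * ∑ i : Fin n, ((a i.succ : ℕ) : ℤ) := by
      rw [Fin.sum_Ioi_zero, Finset.sum_sub_distrib, ← Finset.mul_sum]
    constructor
    · rintro ⟨h1, h2⟩ s
      induction s using Fin.cases with
      | zero =>
        rw [hz]
        have h2' : ((a 0 : ℕ) : ℤ) + 2 * ((∑ i : Fin n, ((Fin.tail a i : ℕ)) : ℕ) : ℤ)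
            ≤ ((∑ i : Fin n, r i.succ : ℕ) : ℤ) := by exact_mod_cast h2
        omega
      | succ s =>
        have hts := h1 s
        rw [Fin.sum_Ioi_succ]
        exact hts
    · intro hall
      refine ⟨fun s => ?_, ?_⟩
      · have := hall s.succ
        rw [Fin.sum_Ioi_succ] at this
        exact this
      · have h0 := hall 0
        rw [hz] at h0
        have : ((a 0 : ℕ) : ℤ) + 2 * ((∑ i : Fin n, ((Fin.tail a i : ℕ)) : ℕ) : ℤ)
            ≤ ((∑ i : Fin n, r i.succ : ℕ) : ℤ) := by omega
        exact_mod_cast this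
end

section
/- Let P be a finite bounded weakly ranked poset with weak rank function ρ. Define SFY to be the set of monomials m = Π_{k=1}^{s} x_{p_k}^{ℓ_k} in variables indexed by P \ {0̂}, where 0̂ = p_0 < p_1 < ... < p_s < 1̂ is a chain in P and 1 ≤ ℓ_k ≤ min(ρ(p_k) - ρ(p_{k-1}) - 1, ρ(1̂) - ρ(p_k) - 2 Σ_{i=k+1}^{s} ℓ_i) for each k (the empty monomial 1 is included). Then SFY is a monomial order ideal: any monomial dividing an element of SFY also lies in SFY. -/
/-- The rank gap `ρ(p_i) - ρ(p_{i-1})` along a chain `⊥ = p_0 < f 0 < f 1 < ⋯`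
(where the predecessor of `f 0` is `⊥`, of rank `0`). -/
def gap {P : Type} [PartialOrder P] (ρ : P → ℕ) {s : ℕ} (f : Fin s → P) (i : Fin s) : ℕ :=
  ρ (f i) - (if (i : ℕ) = 0 then 0
    else ρ (f ⟨(i : ℕ) - 1, lt_of_le_of_lt (Nat.sub_le _ _) i.2⟩))

/-- The degree of a monomial. -/
def mdeg {σ : Type} (m : σ →₀ ℕ) : ℕ := m.sum fun _ e => e

/-- `m` is an SFY monomial for the weakly ranked bounded poset `P`: it is supported on a chain
`⊥ = p_0 < p_1 < ⋯ < p_s < ⊤` with exponents `ℓ_k` satisfying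
`1 ≤ ℓ_k ≤ min(ρ(p_k) - ρ(p_{k-1}) - 1, ρ(⊤) - ρ(p_k) - 2 Σ_{i>k} ℓ_i)`. -/
def IsSFY {P : Type} [PartialOrder P] [BoundedOrder P] (ρ : P → ℕ) (m : P →₀ ℕ) : Prop :=
  ∃ (s : ℕ) (f : Fin s → P) (ℓ : Fin s → ℕ),
    (∀ i j : Fin s, i < j → f i < f j) ∧ (∀ i, (⊥ : P) < f i) ∧ (∀ i, f i < (⊤ : P)) ∧
    (∀ i, 1 ≤ ℓ i) ∧ (∀ i, ℓ i < gap ρ f i) ∧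
    (∀ k : Fin s, (ℓ k : ℤ) + 2 * ∑ i ∈ Finset.univ.filter (fun j => k < j), (ℓ i : ℤ)
        ≤ (ρ ⊤ : ℤ) - (ρ (f k) : ℤ)) ∧
    m = ∑ i, Finsupp.single (f i) (ℓ i)

/-- For a finite bounded weakly ranked poset `P`, the set `SFY` of monomials is
a monomial order ideal: any monomial dividing an element of `SFY` also lies in `SFY`. -/
theorem stmt6 {P : Type} [Fintype P] [PartialOrder P] [BoundedOrder P]
    (ρ : P → ℕ) (hmono : ∀ x y : P, x < y → ρ x < ρ y) (hbot : ρ ⊥ = 0)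
    (m m' : P →₀ ℕ) (hm : IsSFY ρ m) (hdvd : m' ≤ m) :
    IsSFY ρ m' := by
  classical
  obtain ⟨s, f, ℓ, h1, h2, h3, h4, h5, h6, hrep⟩ := hm
  have hsf : StrictMono f := fun a b h => h1 a b h
  have hfinj : Function.Injective f := hsf.injective
  have hρf : Monotone fun a => ρ (f a) :=
    StrictMono.monotone fun a b h => hmono _ _ (hsf h)
  -- value of m at points of the chain
  have hmval : ∀ i, m (f i) = ℓ i := by
    intro i
    rw [hrep, Finsupp.finset_sum_apply, Finset.sum_eq_single i]
    · simp
    · intro j _ hj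
      rw [Finsupp.single_apply, if_neg (fun h => hj (hfinj h))]
    · simp
  have hmout : ∀ x, (∀ i, f i ≠ x) → m x = 0 := by
    intro x hx
    rw [hrep, Finsupp.finset_sum_apply]
    exact Finset.sum_eq_zero fun j _ => by rw [Finsupp.single_apply, if_neg (hx j)]
  -- the sub-chain on the support of m'
  set S : Finset (Fin s) := Finset.univ.filter (fun i => m' (f i) ≠ 0) with hS
  set g : Fin S.card → Fin s := fun i => ((S.orderIsoOfFin rfl) i : Fin s) with hgdef
  have hg : StrictMono g := fun a b h =>
    Subtype.coe_lt_coe.mpr ((S.orderIsoOfFin rfl).strictMono h)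
  have hginj : Function.Injective g := hg.injective
  have hgmem : ∀ i, g i ∈ S := fun i => ((S.orderIsoOfFin rfl) i).2
  have hgsurj : ∀ j ∈ S, ∃ i, g i = j := fun j hj =>
    ⟨(S.orderIsoOfFin rfl).symm ⟨j, hj⟩,
      congrArg Subtype.val ((S.orderIsoOfFin rfl).apply_symm_apply ⟨j, hj⟩)⟩
  have hgle : ∀ i : Fin S.card, (i : ℕ) ≤ (g i : ℕ) := by
    intro i
    obtain ⟨n, hn⟩ := i
    induction n with
    | zero => exact Nat.zero_le _
    | succ k ih =>
      have hk : k < S.card := Nat.lt_of_succ_lt hn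
      have := hg (show (⟨k, hk⟩ : Fin S.card) < ⟨k + 1, hn⟩ by simp)
      exact Nat.succ_le_of_lt (lt_of_le_of_lt (ih hk) this)
  refine ⟨S.card, fun i => f (g i), fun i => m' (f (g i)), ?_, ?_, ?_, ?_, ?_, ?_, ?_⟩
  · exact fun i j h => h1 _ _ (hg h)
  · exact fun i => h2 _
  · exact fun i => h3 _
  · intro i
    have := hgmem i
    rw [hS, Finset.mem_filter] at this
    exact Nat.one_le_iff_ne_zero.mpr this.2
  · -- gap condition
    intro i
    have hle : m' (f (g i)) ≤ ℓ (g i) := (hmval (g i)) ▸ hdvd (f (g i))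
    refine lt_of_le_of_lt hle (lt_of_lt_of_le (h5 (g i)) ?_)
    unfold gap
    apply Nat.sub_le_sub_left
    by_cases hi : (i : ℕ) = 0
    · simp [hi]
    · have hgi : ((g i : Fin s) : ℕ) ≠ 0 := by
        intro h
        exact hi (Nat.le_zero.mp (h ▸ hgle i))
      rw [if_neg hi, if_neg hgi]
      apply hρf
      have h1lt : (⟨(i : ℕ) - 1, lt_of_le_of_lt (Nat.sub_le _ _) i.2⟩ : Fin S.card) < i :=
        Fin.mk_lt_mk.mpr (Nat.sub_lt (Nat.pos_of_ne_zero hi) one_pos)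
      have := hg h1lt
      exact Fin.mk_le_mk.mpr (Nat.le_sub_one_of_lt this)
  · -- sum condition
    intro k
    have hle : ∀ j, m' (f (g j)) ≤ ℓ (g j) := fun j => (hmval (g j)) ▸ hdvd (f (g j))
    have hsum : (∑ i ∈ Finset.univ.filter (fun j => k < j), m' (f (g i)))
        ≤ ∑ i ∈ Finset.univ.filter (fun j => g k < j), ℓ i := by
      calc (∑ i ∈ Finset.univ.filter (fun j => k < j), m' (f (g i)))
          ≤ ∑ i ∈ Finset.univ.filter (fun j => k < j), ℓ (g i) :=
            Finset.sum_le_sum fun i _ => hle i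
        _ = ∑ i ∈ (Finset.univ.filter (fun j => k < j)).image g, ℓ i :=
            (Finset.sum_image fun a _ b _ h => hginj h).symm
        _ ≤ ∑ i ∈ Finset.univ.filter (fun j => g k < j), ℓ i := by
            apply Finset.sum_le_sum_of_subset
            intro x hx
            simp only [Finset.mem_image, Finset.mem_filter, Finset.mem_univ, true_and] at hx ⊢
            obtain ⟨a, ha, rfl⟩ := hx
            exact hg ha
    have hcast : (∑ i ∈ Finset.univ.filter (fun j => k < j), (m' (f (g i)) : ℤ))
        ≤ ∑ i ∈ Finset.univ.filter (fun j => g k < j), (ℓ i : ℤ) := by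
      rw [← Nat.cast_sum, ← Nat.cast_sum]
      exact_mod_cast hsum
    have hk' : (m' (f (g k)) : ℤ) ≤ (ℓ (g k) : ℤ) := by exact_mod_cast hle k
    have := h6 (g k)
    linarith
  · -- representation
    ext x
    rw [Finsupp.finset_sum_apply]
    by_cases hx : ∃ j, f j = x
    · obtain ⟨j, rfl⟩ := hx
      by_cases hj : j ∈ S
      · obtain ⟨i, rfl⟩ := hgsurj j hj
        rw [Finset.sum_eq_single i]
        · simp
        · intro b _ hb
          rw [Finsupp.single_apply, if_neg (fun h => hb (hginj (hfinj h)))]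
        · simp
      · have hz : m' (f j) = 0 := by
          rw [hS, Finset.mem_filter] at hj
          push_neg at hj
          exact hj (Finset.mem_univ j)
        rw [hz]
        refine (Finset.sum_eq_zero fun b _ => ?_).symm
        rw [Finsupp.single_apply, if_neg]
        intro h
        exact hj (hfinj h ▸ hgmem b)
    · push_neg at hx
      have : m' x = 0 := Nat.le_zero.mp ((hmout x hx) ▸ hdvd x)
      rw [this]
      exact (Finset.sum_eq_zero fun b _ => by
        rw [Finsupp.single_apply, if_neg (hx (g b))]).symm
end

section
/- Let P = C_n be the chain of rank n (so the only chains 0̂ < p_1 < ... < p_s < 1̂ are determined by ranks 0 < ρ(p_1) < ... < ρ(p_s) < n). Then every maximal monomial (under divisibility) of the monomial order ideal SFY associated to P has degree exactly ⌊(n-1)/2⌋; that is, SFY is a pure monomial order ideal of degree ⌊(n-1)/2⌋. -/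
/-- `gap` with an explicit baseline `b`, specialised to `Fin (n+1)`. -/
def gapb {n : ℕ} {s : ℕ} (b : ℕ) (f : Fin s → Fin (n+1)) (i : Fin s) : ℕ :=
  (f i : ℕ) - (if (i : ℕ) = 0 then b
    else (f ⟨(i : ℕ) - 1, lt_of_le_of_lt (Nat.sub_le _ _) i.2⟩ : ℕ))

lemma gapb_zero {n s : ℕ} (b : ℕ) (f : Fin (s+1) → Fin (n+1)) :
    gapb b f 0 = (f 0 : ℕ) - b := by simp [gapb]

lemma gapb_succ {n s b : ℕ} (f : Fin (s+1) → Fin (n+1)) (i : Fin s) :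
    gapb b f i.succ = (f i.succ : ℕ) - (f (Fin.castSucc i) : ℕ) := by
  rcases i with ⟨iv, hi⟩
  simp [gapb, Fin.castSucc, Fin.castAdd, Fin.castLE, Fin.succ]

lemma gapb_cons_zero {n s b : ℕ} (a : Fin (n+1)) (f : Fin s → Fin (n+1)) :
    gapb b (Fin.cons a f) 0 = (a : ℕ) - b := by simp [gapb]

lemma gapb_cons_succ {n s b : ℕ} (a : Fin (n+1)) (f : Fin s → Fin (n+1)) (i : Fin s) :
    gapb b (Fin.cons a f) i.succ = gapb (a : ℕ) f i := by
  rw [gapb_succ, Fin.cons_succ]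
  rcases i with ⟨iv, hi⟩
  unfold gapb
  congr 1
  cases iv with
  | zero => rw [if_pos rfl]; rfl
  | succ v => rw [if_neg (by simp)]; rfl

lemma gapb_tail {n s : ℕ} (b : ℕ) (f : Fin (s+1) → Fin (n+1)) (i : Fin s) :
    gapb ((f 0 : ℕ)) (fun j => f j.succ) i = gapb b f i.succ := by
  conv_rhs => rw [← Fin.cons_self_tail f]
  rw [gapb_cons_succ]
  rfl

lemma sum_filter_zero_lt {M : Type*} [AddCommMonoid M] {s : ℕ} (g : Fin (s+1) → M) :
    ∑ i ∈ Finset.univ.filter (fun j => (0:Fin (s+1)) < j), g i = ∑ i : Fin s, g i.succ := by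
  rw [Finset.sum_filter, Fin.sum_univ_succ]
  simp [Fin.succ_pos]

lemma sum_filter_succ_lt {M : Type*} [AddCommMonoid M] {s : ℕ} (g : Fin (s+1) → M) (k : Fin s) :
    ∑ i ∈ Finset.univ.filter (fun j => k.succ < j), g i
      = ∑ i ∈ Finset.univ.filter (fun j => k < j), g i.succ := by
  rw [Finset.sum_filter, Finset.sum_filter, Fin.sum_univ_succ]
  simp [Fin.succ_lt_succ_iff]

lemma mdeg_add {σ : Type} (a b : σ →₀ ℕ) : mdeg (a + b) = mdeg a + mdeg b :=
  Finsupp.sum_add_index' (fun _ => rfl) (fun _ _ _ => rfl)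

lemma mdeg_single {σ : Type} (a : σ) (k : ℕ) : mdeg (Finsupp.single a k) = k :=
  Finsupp.sum_single_index rfl

lemma mdeg_sum {σ : Type} {s : ℕ} (f : Fin s → σ) (ℓ : Fin s → ℕ) :
    mdeg (∑ i, Finsupp.single (f i) (ℓ i)) = ∑ i, ℓ i := by
  induction s with
  | zero => simp [mdeg]
  | succ s ih =>
    rw [Fin.sum_univ_succ, Fin.sum_univ_succ (f := ℓ), mdeg_add, mdeg_single, ih]

lemma cons_mono {n sz : ℕ} (a : Fin (n+1)) (f : Fin sz → Fin (n+1))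
    (hmono : ∀ i j, i < j → f i < f j) (ha : ∀ j, a < f j) :
    ∀ i j : Fin (sz+1), i < j →
      (Fin.cons (α := fun _ => Fin (n+1)) a f) i < (Fin.cons (α := fun _ => Fin (n+1)) a f) j := by
  intro i j
  induction i using Fin.cases with
  | zero =>
    induction j using Fin.cases with
    | zero => intro hij; exact absurd hij (lt_irrefl _)
    | succ j => intro _; rw [Fin.cons_zero, Fin.cons_succ]; exact ha j
  | succ i =>
    induction j using Fin.cases with
    | zero =>
      intro hij
      rw [Fin.lt_def, Fin.val_zero] at hij
      exact absurd hij (by omega)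
    | succ j =>
      intro hij
      rw [Fin.cons_succ, Fin.cons_succ]
      exact hmono i j (by rwa [Fin.succ_lt_succ_iff] at hij)

lemma cons_con {n sz : ℕ} (a : Fin (n+1)) (c : ℕ) (f : Fin sz → Fin (n+1)) (ℓ : Fin sz → ℕ)
    (h0 : (a : ℕ) + c + 2 * ∑ i, ℓ i ≤ n)
    (hcon : ∀ k : Fin sz,
      (f k : ℕ) + ℓ k + 2 * ∑ i ∈ Finset.univ.filter (fun j => k < j), ℓ i ≤ n) :
    ∀ k : Fin (sz+1), ((Fin.cons (α := fun _ => Fin (n+1)) a f) k : ℕ) + (Fin.cons (α := fun _ => ℕ) c ℓ) k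
      + 2 * ∑ i ∈ Finset.univ.filter (fun j => k < j), (Fin.cons (α := fun _ => ℕ) c ℓ) i ≤ n := by
  intro k
  induction k using Fin.cases with
  | zero =>
    rw [Fin.cons_zero, Fin.cons_zero, sum_filter_zero_lt]
    simpa using h0
  | succ k =>
    rw [Fin.cons_succ, Fin.cons_succ, sum_filter_succ_lt]
    simpa using hcon k

lemma improve (n : ℕ) : ∀ (s b : ℕ) (f : Fin s → Fin (n+1)) (ℓ : Fin s → ℕ),
    (∀ i j : Fin s, i < j → f i < f j) →
    (∀ i, b < (f i : ℕ)) →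
    (∀ i, (f i : ℕ) < n) →
    (∀ i, 1 ≤ ℓ i) →
    (∀ i, ℓ i < gapb b f i) →
    (∀ k : Fin s, (f k : ℕ) + ℓ k + 2 * ∑ i ∈ Finset.univ.filter (fun j => k < j), ℓ i ≤ n) →
    b + 2 * (∑ i, ℓ i) + 3 ≤ n →
    ∃ (s' : ℕ) (f' : Fin s' → Fin (n+1)) (ℓ' : Fin s' → ℕ) (q : Fin (n+1)),
      (∀ i j : Fin s', i < j → f' i < f' j) ∧
      (∀ i, b < (f' i : ℕ)) ∧
      (∀ i, (f' i : ℕ) < n) ∧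
      (∀ i, 1 ≤ ℓ' i) ∧
      (∀ i, ℓ' i < gapb b f' i) ∧
      (∀ k : Fin s', (f' k : ℕ) + ℓ' k
          + 2 * ∑ i ∈ Finset.univ.filter (fun j => k < j), ℓ' i ≤ n) ∧
      (∑ i, ℓ' i) = (∑ i, ℓ i) + 1 ∧
      (∑ i, Finsupp.single (f' i) (ℓ' i))
        = (∑ i, Finsupp.single (f i) (ℓ i)) + Finsupp.single q 1 := by
  intro s
  induction s with
  | zero =>
    intro b f ℓ _ _ _ _ _ _ hslack
    have hz : (∑ i : Fin 0, ℓ i) = 0 := rfl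
    rw [hz] at hslack
    have hlt : b + 2 < n + 1 := by omega
    refine ⟨1, fun _ => ⟨b+2, hlt⟩, fun _ => 1, ⟨b+2, hlt⟩, ?_, ?_, ?_, ?_, ?_, ?_, ?_, ?_⟩
    · intro i j hij
      have hi := i.2; have hj := j.2
      rw [Fin.lt_def] at hij; omega
    · intro i; show b < b + 2; omega
    · intro i; show b + 2 < n; omega
    · intro i; exact le_refl 1
    · intro i
      have h0 : (i : ℕ) = 0 := by omega
      simp [gapb, h0]
    · intro k
      have he : Finset.univ.filter (fun j : Fin 1 => k < j) = ∅ := by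
        apply Finset.filter_false_of_mem
        intro j _
        have hk := k.2; have hj := j.2
        rw [Fin.lt_def]; omega
      rw [he, Finset.sum_empty]
      show b + 2 + 1 + 2 * 0 ≤ n
      omega
    · simp
    · simp
  | succ s ih =>
    intro b f ℓ hmono hlb hub hl1 hgap hcon hslack
    have hgap0 : b + ℓ 0 < (f 0 : ℕ) := by
      have h := hgap 0
      rw [gapb_zero] at h
      omega
    have hsum : (∑ i, ℓ i) = ℓ 0 + ∑ i : Fin s, ℓ i.succ := Fin.sum_univ_succ ℓ
    have hcon0 : (f 0 : ℕ) + ℓ 0 + 2 * (∑ i : Fin s, ℓ i.succ) ≤ n := by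
      have h := hcon 0
      rwa [sum_filter_zero_lt] at h
    rw [hsum] at hslack
    by_cases hbump : b + (ℓ 0 + 1) < (f 0 : ℕ) ∧
        (f 0 : ℕ) + (ℓ 0 + 1) + 2 * (∑ i : Fin s, ℓ i.succ) ≤ n
    · -- increase ℓ 0 by one
      refine ⟨s+1, f, Function.update ℓ 0 (ℓ 0 + 1), f 0,
        hmono, hlb, hub, ?_, ?_, ?_, ?_, ?_⟩
      · intro i
        by_cases h0 : i = 0
        · subst h0; rw [Function.update_self]; omega
        · rw [Function.update_of_ne h0]; exact hl1 i
      · intro i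
        induction i using Fin.cases with
        | zero =>
          rw [Function.update_self, gapb_zero]
          omega
        | succ i =>
          rw [Function.update_of_ne (Fin.succ_ne_zero i)]
          exact hgap i.succ
      · intro k
        induction k using Fin.cases with
        | zero =>
          rw [sum_filter_zero_lt, Function.update_self]
          have hs : ∑ i : Fin s, Function.update ℓ 0 (ℓ 0 + 1) i.succ
              = ∑ i : Fin s, ℓ i.succ :=
            Finset.sum_congr rfl (fun i _ => Function.update_of_ne (Fin.succ_ne_zero i) _ _)
          rw [hs]
          omega
        | succ k =>
          have h := hcon k.succ
          rw [sum_filter_succ_lt] at h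
          have hs : ∑ i ∈ Finset.univ.filter (fun j => k < j),
              Function.update ℓ 0 (ℓ 0 + 1) i.succ
              = ∑ i ∈ Finset.univ.filter (fun j => k < j), ℓ i.succ :=
            Finset.sum_congr rfl (fun i _ => Function.update_of_ne (Fin.succ_ne_zero i) _ _)
          rw [sum_filter_succ_lt, hs, Function.update_of_ne (Fin.succ_ne_zero k)]
          exact h
      · have hs : ∑ i : Fin s, Function.update ℓ 0 (ℓ 0 + 1) i.succ
            = ∑ i : Fin s, ℓ i.succ :=
          Finset.sum_congr rfl (fun i _ => Function.update_of_ne (Fin.succ_ne_zero i) _ _)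
        rw [Fin.sum_univ_succ (f := Function.update ℓ 0 (ℓ 0 + 1)), Function.update_self,
          hs, hsum]
        omega
      · have hs2 : ∑ i : Fin s, Finsupp.single (f i.succ)
            (Function.update ℓ 0 (ℓ 0 + 1) i.succ)
            = ∑ i : Fin s, Finsupp.single (f i.succ) (ℓ i.succ) :=
          Finset.sum_congr rfl
            (fun i _ => by rw [Function.update_of_ne (Fin.succ_ne_zero i)])
        rw [Fin.sum_univ_succ (f := fun i => Finsupp.single (f i)
            (Function.update ℓ 0 (ℓ 0 + 1) i)), Function.update_self, hs2,
          Fin.sum_univ_succ (f := fun i => Finsupp.single (f i) (ℓ i)),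
          Finsupp.single_add]
        abel
    · by_cases hpre : b + ℓ 0 + 2 < (f 0 : ℕ)
      · -- prepend a new minimal element b+2 with exponent 1
        have hlt : b + 2 < n + 1 := by omega
        have haf : ∀ j : Fin (s+1), (⟨b+2, hlt⟩ : Fin (n+1)) < f j := by
          intro j
          rw [Fin.lt_def]
          show b + 2 < (f j : ℕ)
          rcases Nat.eq_zero_or_pos (j : ℕ) with h0 | h0
          · have hj0 : j = 0 := Fin.ext h0
            subst hj0; omega
          · have hlt2 : (0 : Fin (s+1)) < j := by rw [Fin.lt_def, Fin.val_zero]; omega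
            have h2 := hmono 0 j hlt2
            rw [Fin.lt_def] at h2
            omega
        refine ⟨s+2, Fin.cons ⟨b+2, hlt⟩ f, Fin.cons 1 ℓ, ⟨b+2, hlt⟩,
          cons_mono _ f hmono haf, ?_, ?_, ?_, ?_, ?_, ?_, ?_⟩
        · intro i
          induction i using Fin.cases with
          | zero => rw [Fin.cons_zero]; show b < b + 2; omega
          | succ i => rw [Fin.cons_succ]; exact hlb i
        · intro i
          induction i using Fin.cases with
          | zero => rw [Fin.cons_zero]; show b + 2 < n; omega
          | succ i => rw [Fin.cons_succ]; exact hub i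
        · intro i
          induction i using Fin.cases with
          | zero => rw [Fin.cons_zero]
          | succ i => rw [Fin.cons_succ]; exact hl1 i
        · intro i
          induction i using Fin.cases with
          | zero =>
            rw [Fin.cons_zero, gapb_cons_zero]
            show 1 < b + 2 - b
            omega
          | succ i =>
            rw [Fin.cons_succ, gapb_cons_succ]
            show ℓ i < gapb (b+2) f i
            rcases Nat.eq_zero_or_pos (i : ℕ) with h0 | h0
            · have hi0 : i = 0 := Fin.ext h0
              subst hi0
              rw [gapb_zero]
              omega
            · have he : gapb (b+2) f i = gapb b f i := by
                unfold gapb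
                rw [if_neg (by omega), if_neg (by omega)]
              rw [he]
              exact hgap i
        · refine cons_con _ 1 f ℓ ?_ hcon
          show b + 2 + 1 + 2 * ∑ i, ℓ i ≤ n
          omega
        · rw [Fin.sum_cons]
          omega
        · rw [Fin.sum_univ_succ]
          simp only [Fin.cons_zero, Fin.cons_succ]
          exact add_comm _ _
      · -- recursion on the tail, or impossible
        have hl10 := hl1 0
        have hF0 : (f 0 : ℕ) = b + ℓ 0 + 1 ∨ (f 0 : ℕ) = b + ℓ 0 + 2 := by omega
        rcases hF0 with hF0 | hF0
        · have hslack' : (f 0 : ℕ) + 2 * (∑ i : Fin s, ℓ i.succ) + 3 ≤ n := by omega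
          obtain ⟨s', f'', ℓ'', q, p1, p2, p3, p4, p5, p6, p7, p8⟩ :=
            ih ((f 0 : ℕ)) (fun i => f i.succ) (fun i => ℓ i.succ)
              (fun i j hij => hmono i.succ j.succ (by rwa [Fin.succ_lt_succ_iff]))
              (fun i => by
                have h2 := hmono 0 i.succ (Fin.succ_pos i)
                rwa [Fin.lt_def] at h2)
              (fun i => hub i.succ)
              (fun i => hl1 i.succ)
              (fun i => by rw [gapb_tail b f i]; exact hgap i.succ)
              (fun k => by
                have h := hcon k.succ
                rwa [sum_filter_succ_lt] at h)
              hslack'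
          have p7' : ∑ i, ℓ'' i = (∑ i : Fin s, ℓ i.succ) + 1 := p7
          have p8' : (∑ i, Finsupp.single (f'' i) (ℓ'' i))
              = (∑ i : Fin s, Finsupp.single (f i.succ) (ℓ i.succ)) + Finsupp.single q 1 := p8
          have haf : ∀ j, f 0 < f'' j := fun j => Fin.lt_def.mpr (p2 j)
          refine ⟨s'+1, Fin.cons (f 0) f'', Fin.cons (ℓ 0) ℓ'', q,
            cons_mono (f 0) f'' p1 haf, ?_, ?_, ?_, ?_, ?_, ?_, ?_⟩
          · intro i
            induction i using Fin.cases with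
            | zero => rw [Fin.cons_zero]; exact hlb 0
            | succ i =>
              rw [Fin.cons_succ]
              have := p2 i
              omega
          · intro i
            induction i using Fin.cases with
            | zero => rw [Fin.cons_zero]; exact hub 0
            | succ i => rw [Fin.cons_succ]; exact p3 i
          · intro i
            induction i using Fin.cases with
            | zero => rw [Fin.cons_zero]; exact hl1 0
            | succ i => rw [Fin.cons_succ]; exact p4 i
          · intro i
            induction i using Fin.cases with
            | zero =>
              rw [Fin.cons_zero, gapb_cons_zero]
              omega
            | succ i =>
              rw [Fin.cons_succ, gapb_cons_succ]
              exact p5 i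
          · refine cons_con (f 0) (ℓ 0) f'' ℓ'' ?_ p6
            rw [p7']
            omega
          · rw [Fin.sum_cons, p7', hsum]
            omega
          · rw [Fin.sum_univ_succ, Fin.sum_univ_succ
              (f := fun i => Finsupp.single (f i) (ℓ i))]
            simp only [Fin.cons_zero, Fin.cons_succ]
            rw [p8', add_assoc]
        · exfalso
          exact hbump ⟨by omega, by omega⟩

/-- For the chain `C_n = {0, 1, ..., n}`, every maximal monomial (under
divisibility) of the monomial order ideal `SFY` has degree exactly `⌊(n-1)/2⌋`. -/
theorem stmt7 (n : ℕ) (m : Fin (n + 1) →₀ ℕ)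
    (hm : IsSFY (fun i : Fin (n + 1) => (i : ℕ)) m)
    (hmax : ∀ m' : Fin (n + 1) →₀ ℕ, IsSFY (fun i : Fin (n + 1) => (i : ℕ)) m' → m ≤ m' → m' = m) :
    mdeg m = (n - 1) / 2 := by
  obtain ⟨s, f, ℓ, hmono, hlb, hub, hl1, hgap, hcon, hmeq⟩ := hm
  have htop : ((⊤ : Fin (n+1)) : ℕ) = n := rfl
  have hbot : ((⊥ : Fin (n+1)) : ℕ) = 0 := rfl
  have hlb' : ∀ i, 0 < (f i : ℕ) := by
    intro i
    have h := hlb i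
    rw [Fin.lt_def, hbot] at h
    exact h
  have hub' : ∀ i, (f i : ℕ) < n := by
    intro i
    have h := hub i
    rw [Fin.lt_def, htop] at h
    exact h
  have hgap' : ∀ i, ℓ i < gapb 0 f i := hgap
  have hconN : ∀ k : Fin s,
      (f k : ℕ) + ℓ k + 2 * ∑ i ∈ Finset.univ.filter (fun j => k < j), ℓ i ≤ n := by
    intro k
    have h : (ℓ k : ℤ) + 2 * ∑ i ∈ Finset.univ.filter (fun j => k < j), (ℓ i : ℤ)
        ≤ (n : ℤ) - ((f k : ℕ) : ℤ) := hcon k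
    rw [← Nat.cast_sum] at h
    omega
  have hdeg : mdeg m = ∑ i, ℓ i := by rw [hmeq, mdeg_sum]
  have hub2 : 2 * (∑ i, ℓ i) + 1 ≤ n ∨ (∑ i, ℓ i) = 0 := by
    cases s with
    | zero => right; simp
    | succ s =>
      left
      have h0 := hconN 0
      have hg0 := hgap' 0
      rw [gapb_zero] at hg0
      have h1 := hl1 0
      rw [sum_filter_zero_lt] at h0
      rw [Fin.sum_univ_succ]
      omega
  have hnoimp : ¬ (2 * (∑ i, ℓ i) + 3 ≤ n) := by
    intro hsl
    obtain ⟨s', f', ℓ', q, p1, p2, p3, p4, p5, p6, p7, p8⟩ :=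
      improve n s 0 f ℓ hmono hlb' hub' hl1 hgap' hconN (by omega)
    have hm' : IsSFY (fun i : Fin (n + 1) => (i : ℕ)) (m + Finsupp.single q 1) := by
      refine ⟨s', f', ℓ', p1, ?_, ?_, p4, p5, ?_, ?_⟩
      · intro i
        rw [Fin.lt_def, hbot]
        exact p2 i
      · intro i
        rw [Fin.lt_def, htop]
        exact p3 i
      · intro k
        have h := p6 k
        show (ℓ' k : ℤ) + 2 * ∑ i ∈ Finset.univ.filter (fun j => k < j), (ℓ' i : ℤ)
            ≤ (n : ℤ) - ((f' k : ℕ) : ℤ)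
        rw [← Nat.cast_sum]
        omega
      · rw [p8, hmeq]
    have h := hmax _ hm' (le_add_of_nonneg_right zero_le)
    have happ := congrArg (fun g => g q) h
    simp only [Finsupp.add_apply, Finsupp.single_eq_same] at happ
    omega
  rw [hdeg]
  rcases hub2 with h | h
  · omega
  · omega
end

section
/- Let P be a finite bounded weakly ranked poset. The number of Feichtner–Yuzvinsky monomials of degree k equals the coefficient of t^k in the Chow polynomial H_P(t); i.e., h_k = |FY^k|. -/
open scoped Classical in
/-- The (characteristic) Chow polynomial of a finite bounded weakly ranked poset:
`H_P(t) = Σ_{⊥ = p_0 < p_1 < ⋯ < p_s ≤ ⊤} Π_i (t + t² + ⋯ + t^{ρ(p_i)-ρ(p_{i-1})-1})`. -/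
noncomputable def chowPoly {P : Type} [Fintype P] [PartialOrder P] [BoundedOrder P]
    (ρ : P → ℕ) : Polynomial ℤ :=
  ∑ s ∈ Finset.range (Fintype.card P + 1),
    ∑ f ∈ Finset.univ.filter
        (fun f : Fin s → P => (∀ i j : Fin s, i < j → f i < f j) ∧ ∀ i, (⊥ : P) < f i),
      ∏ i : Fin s, ∑ j ∈ Finset.Ico 1 (gap ρ f i), (Polynomial.X : Polynomial ℤ) ^ j

/-- `m` is a Feichtner--Yuzvinsky monomial: supported on a chain
`⊥ = p_0 < p_1 < ⋯ < p_s ≤ ⊤` with exponents `1 ≤ ℓ_i ≤ ρ(p_i) - ρ(p_{i-1}) - 1`. -/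
def IsFY {P : Type} [PartialOrder P] [BoundedOrder P] (ρ : P → ℕ) (m : P →₀ ℕ) : Prop :=
  ∃ (s : ℕ) (f : Fin s → P) (ℓ : Fin s → ℕ),
    (∀ i j : Fin s, i < j → f i < f j) ∧ (∀ i, (⊥ : P) < f i) ∧
    (∀ i, 1 ≤ ℓ i) ∧ (∀ i, ℓ i < gap ρ f i) ∧
    m = ∑ i, Finsupp.single (f i) (ℓ i)

section Aux

set_option linter.unusedSectionVars false

variable {P : Type} [PartialOrder P]

/-- coefficient of a product of truncated geometric series -/
lemma coeff_prod_geom (k : ℕ) (s : ℕ) (g : Fin s → ℕ) :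
    (∏ i : Fin s, ∑ j ∈ Finset.Ico 1 (g i), (Polynomial.X : Polynomial ℤ) ^ j).coeff k
      = ((Fintype.piFinset (fun i => Finset.Ico 1 (g i))).filter
          (fun ℓ : Fin s → ℕ => ∑ i, ℓ i = k)).card := by
  classical
  rw [Finset.prod_univ_sum]
  simp only [Finset.prod_pow_eq_pow_sum]
  rw [Polynomial.finset_sum_coeff]
  simp only [Polynomial.coeff_X_pow]
  rw [Finset.card_filter]
  push_cast
  refine Finset.sum_congr rfl fun x _ => ?_
  by_cases h : (∑ i : Fin s, x i) = k
  · simp [h]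
  · rw [if_neg (fun hh => h hh.symm), if_neg h]

lemma sum_single_apply_eq {s : ℕ} {f : Fin s → P} (hf : Function.Injective f)
    (ℓ : Fin s → ℕ) (i : Fin s) :
    (∑ j, Finsupp.single (f j) (ℓ j)) (f i) = ℓ i := by
  classical
  rw [Finsupp.finset_sum_apply]
  rw [Finset.sum_eq_single i (fun j _ hji => by
    simp [Finsupp.single_apply, (hf.ne hji)]) (by simp)]
  simp

lemma sum_single_apply_ne {s : ℕ} {f : Fin s → P} (ℓ : Fin s → ℕ) {x : P}
    (hx : x ∉ Set.range f) :
    (∑ j, Finsupp.single (f j) (ℓ j)) x = 0 := by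
  classical
  rw [Finsupp.finset_sum_apply]
  refine Finset.sum_eq_zero fun j _ => ?_
  have : f j ≠ x := fun h => hx ⟨j, h⟩
  simp [Finsupp.single_apply, this]

lemma support_sum_single {s : ℕ} {f : Fin s → P} (hf : Function.Injective f)
    {ℓ : Fin s → ℕ} (hℓ : ∀ i, 1 ≤ ℓ i) [DecidableEq P] :
    (∑ j, Finsupp.single (f j) (ℓ j)).support = Finset.image f Finset.univ := by
  classical
  ext x
  simp only [Finsupp.mem_support_iff, Finset.mem_image, Finset.mem_univ, true_and]
  constructor
  · intro hx
    by_contra h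
    push_neg at h
    exact hx (sum_single_apply_ne ℓ (fun ⟨i, hi⟩ => h i hi))
  · rintro ⟨i, rfl⟩
    rw [sum_single_apply_eq hf]
    exact Nat.one_le_iff_ne_zero.mp (hℓ i)

lemma mdeg_sum_single {s : ℕ} (f : Fin s → P) (ℓ : Fin s → ℕ) :
    mdeg (∑ j, Finsupp.single (f j) (ℓ j)) = ∑ j, ℓ j := by
  unfold mdeg
  rw [← Finsupp.sum_finsetSum_index (fun _ => rfl) (fun _ _ _ => rfl)]
  simp [Finsupp.sum_single_index]


lemma strictMono_eq_of_image_eq [DecidableEq P] :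
    ∀ {s : ℕ} {f g : Fin s → P}, StrictMono f → StrictMono g →
      Finset.image f Finset.univ = Finset.image g Finset.univ → f = g := by
  intro s
  induction s with
  | zero => intro f g _ _ _; funext i; exact i.elim0
  | succ n ih =>
    intro f g hf hg himg
    classical
    have hmemf : ∀ x ∈ Finset.image f Finset.univ, x ≤ f (Fin.last n) := by
      simp only [Finset.mem_image, Finset.mem_univ, true_and]
      rintro x ⟨i, rfl⟩; exact hf.monotone (Fin.le_last i)
    have hmemg : ∀ x ∈ Finset.image g Finset.univ, x ≤ g (Fin.last n) := by
      simp only [Finset.mem_image, Finset.mem_univ, true_and]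
      rintro x ⟨i, rfl⟩; exact hg.monotone (Fin.le_last i)
    have htop : f (Fin.last n) = g (Fin.last n) := by
      refine le_antisymm ?_ ?_
      · exact hmemg _ (himg ▸ Finset.mem_image_of_mem f (Finset.mem_univ _))
      · exact hmemf _ (himg.symm ▸ Finset.mem_image_of_mem g (Finset.mem_univ _))
    have herase : ∀ (f : Fin (n+1) → P), StrictMono f →
        (Finset.image f Finset.univ).erase (f (Fin.last n)) =
          Finset.image (f ∘ Fin.castSucc) Finset.univ := by
      intro f hf
      ext x
      simp only [Finset.mem_erase, Finset.mem_image, Finset.mem_univ, true_and,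
        Function.comp_apply]
      constructor
      · rintro ⟨hne, i, rfl⟩
        have hil : i ≠ Fin.last n := fun h => hne (by rw [h])
        rcases Fin.eq_castSucc_of_ne_last hil with ⟨j, rfl⟩
        exact ⟨j, rfl⟩
      · rintro ⟨i, rfl⟩
        refine ⟨ne_of_lt (hf ?_), i.castSucc, rfl⟩
        exact Fin.castSucc_lt_last i
    have hcomp : f ∘ Fin.castSucc = g ∘ Fin.castSucc := by
      refine ih (hf.comp Fin.strictMono_castSucc) (hg.comp Fin.strictMono_castSucc) ?_
      rw [← herase f hf, ← herase g hg, himg, htop]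
    funext i
    rcases Fin.eq_castSucc_or_eq_last i with ⟨j, rfl⟩ | rfl
    · exact congrFun hcomp j
    · exact htop

end Aux

/-- For a finite bounded weakly ranked poset `P`, the number of FY monomials
of degree `k` equals the coefficient of `t^k` in the Chow polynomial: `h_k = |FY^k|`. -/
theorem stmt11 {P : Type} [Fintype P] [PartialOrder P] [BoundedOrder P]
    (ρ : P → ℕ) (hmono : ∀ x y : P, x < y → ρ x < ρ y) (hbot : ρ ⊥ = 0) (k : ℕ) :
    (chowPoly ρ).coeff k = (Set.ncard {m : P →₀ ℕ | IsFY ρ m ∧ mdeg m = k} : ℤ) := by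
  classical
  set T : Finset (Σ s : ℕ, Σ f : Fin s → P, Fin s → ℕ) :=
    (Finset.range (Fintype.card P + 1)).sigma (fun s =>
      (Finset.univ.filter
        (fun f : Fin s → P => (∀ i j : Fin s, i < j → f i < f j) ∧ ∀ i, (⊥ : P) < f i)).sigma
        (fun f => (Fintype.piFinset (fun i => Finset.Ico 1 (gap ρ f i))).filter
          (fun ℓ : Fin s → ℕ => ∑ i, ℓ i = k))) with hT
  set Φ : (Σ s : ℕ, Σ f : Fin s → P, Fin s → ℕ) → (P →₀ ℕ) :=
    fun x => ∑ i, Finsupp.single (x.2.1 i) (x.2.2 i) with hΦ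
  -- LHS
  have hL : (chowPoly ρ).coeff k = (T.card : ℤ) := by
    rw [hT, Finset.card_sigma]
    simp only [Finset.card_sigma]
    unfold chowPoly
    rw [Polynomial.finset_sum_coeff]
    push_cast
    refine Finset.sum_congr rfl fun s _ => ?_
    rw [Polynomial.finset_sum_coeff]
    refine Finset.sum_congr rfl fun f _ => ?_
    rw [coeff_prod_geom]
  -- membership characterization
  have hmemT : ∀ x : (Σ s : ℕ, Σ f : Fin s → P, Fin s → ℕ), x ∈ T ↔
      (x.1 ∈ Finset.range (Fintype.card P + 1) ∧
       ((∀ i j, i < j → x.2.1 i < x.2.1 j) ∧ ∀ i, (⊥ : P) < x.2.1 i) ∧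
       (∀ i, x.2.2 i ∈ Finset.Ico 1 (gap ρ x.2.1 i)) ∧ ∑ i, x.2.2 i = k) := by
    rintro ⟨s, f, ℓ⟩
    simp [hT, Finset.mem_sigma, Finset.mem_filter, Fintype.mem_piFinset, and_assoc]
  -- the set equals the image
  have hset : {m : P →₀ ℕ | IsFY ρ m ∧ mdeg m = k} = ↑(T.image Φ) := by
    ext m
    simp only [Set.mem_setOf_eq, Finset.coe_image, Set.mem_image, Finset.mem_coe]
    constructor
    · rintro ⟨⟨s, f, ℓ, hchain, hbotlt, h1, h2, rfl⟩, hdeg⟩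
      have hsm : StrictMono f := fun i j h => hchain i j h
      refine ⟨⟨s, f, ℓ⟩, ?_, rfl⟩
      rw [hmemT]
      refine ⟨?_, ⟨hchain, hbotlt⟩, fun i => Finset.mem_Ico.2 ⟨h1 i, h2 i⟩, ?_⟩
      · have := Fintype.card_le_of_injective f hsm.injective
        simpa [Finset.mem_range] using Nat.lt_succ_of_le (by simpa using this)
      · rw [← hdeg, mdeg_sum_single]
    · rintro ⟨⟨s, f, ℓ⟩, hx, rfl⟩
      rw [hmemT] at hx
      obtain ⟨_, ⟨hchain, hbotlt⟩, hico, hsum⟩ := hx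
      refine ⟨⟨s, f, ℓ, hchain, hbotlt,
        fun i => (Finset.mem_Ico.1 (hico i)).1, fun i => (Finset.mem_Ico.1 (hico i)).2, rfl⟩, ?_⟩
      rw [mdeg_sum_single]; exact hsum
  -- injectivity on T
  have hinj : Set.InjOn Φ ↑T := by
    rintro ⟨s₁, f₁, ℓ₁⟩ ha ⟨s₂, f₂, ℓ₂⟩ hb hab
    rw [Finset.mem_coe, hmemT] at ha hb
    obtain ⟨-, ⟨hc₁, -⟩, hi₁, -⟩ := ha
    obtain ⟨-, ⟨hc₂, -⟩, hi₂, -⟩ := hb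
    have hm₁ : StrictMono f₁ := fun i j h => hc₁ i j h
    have hm₂ : StrictMono f₂ := fun i j h => hc₂ i j h
    have h1le : ∀ i, 1 ≤ ℓ₁ i := fun i => (Finset.mem_Ico.1 (hi₁ i)).1
    have h2le : ∀ i, 1 ≤ ℓ₂ i := fun i => (Finset.mem_Ico.1 (hi₂ i)).1
    have hsupp : Finset.image f₁ Finset.univ = Finset.image f₂ Finset.univ := by
      rw [← support_sum_single hm₁.injective h1le, ← support_sum_single hm₂.injective h2le]
      simpa [hΦ] using congrArg Finsupp.support hab
    have hs : s₁ = s₂ := by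
      have c1 : (Finset.image f₁ Finset.univ).card = s₁ := by
        rw [Finset.card_image_of_injective _ hm₁.injective, Finset.card_univ, Fintype.card_fin]
      have c2 : (Finset.image f₂ Finset.univ).card = s₂ := by
        rw [Finset.card_image_of_injective _ hm₂.injective, Finset.card_univ, Fintype.card_fin]
      rw [← c1, ← c2, hsupp]
    subst hs
    have hf : f₁ = f₂ := strictMono_eq_of_image_eq hm₁ hm₂ hsupp
    subst hf
    have hℓ : ℓ₁ = ℓ₂ := by
      funext i
      have := congrArg (fun m : P →₀ ℕ => m (f₁ i)) hab
      simpa [hΦ, sum_single_apply_eq hm₁.injective] using this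
    subst hℓ
    rfl
  rw [hL, hset, Set.ncard_coe_finset, Finset.card_image_of_injOn hinj]
end

section
/- For a pure O-sequence (h_0, h_1, ..., h_e) (with h_0 = 1), one has h_i ≤ h_j whenever i ≤ j ≤ e - i. In particular, h_i ≤ h_{e-i} for i ≤ e/2, and h_0 ≤ h_1 ≤ ... ≤ h_{⌊e/2⌋}. -/
set_option linter.unusedSectionVars false
set_option linter.unusedVariables false

namespace Stmt13Aux

/-- chain bottom rank of `n` in the box `∏ [0, L i]` (de Bruijn–Tengbergen–Kruyswijk). -/
def K : List ℕ → List ℕ → ℕ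
  | c :: L, u :: n => K L n + min (n.sum - K L n) (c - u)
  | _, _ => 0

/-- move along the symmetric chain of `n` to rank `r`. -/
def CM : List ℕ → List ℕ → ℕ → List ℕ
  | c :: L, u :: n, r =>
    if r - K L n ≤ c then
      (r - K L n - min (n.sum - K L n) (c - u)) :: CM L n (K L n + min (n.sum - K L n) (c - u))
    else
      (c - min (n.sum - K L n) (c - u)) ::
        CM L n (K L n + (r - K L n - c + min (n.sum - K L n) (c - u)))
  | _, _, _ => []

theorem K_le {L n : List ℕ} (h : List.Forall₂ (· ≤ ·) n L) :
    K L n ≤ n.sum ∧ K L n + n.sum ≤ L.sum := by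
  induction h with
  | nil => simp [K]
  | @cons u c n L hu _ ih =>
    simp only [K, List.sum_cons]
    omega

theorem CM_main {L n : List ℕ} (h : List.Forall₂ (· ≤ ·) n L) :
    ∀ r, K L n ≤ r → K L n + r ≤ L.sum →
      List.Forall₂ (· ≤ ·) (CM L n r) L ∧ (CM L n r).sum = r ∧ K L (CM L n r) = K L n := by
  induction h with
  | nil => intro r h1 h2; simp_all [K, CM]
  | @cons u c n L hu hn ih =>
    intro r h1 h2
    have hK := K_le hn
    simp only [K, List.sum_cons] at h1 h2 ⊢
    set k' := K L n with hk'
    set s := min (n.sum - k') (c - u) with hs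
    -- inner call ranges
    have hrange1 : k' ≤ k' + s := by omega
    simp only [CM, ← hk', ← hs]
    split_ifs with hcase
    · -- vertical: ρ ≤ c
      have hin := ih (k' + s) (by omega) (by omega)
      refine ⟨List.Forall₂.cons (by omega) hin.1, ?_, ?_⟩
      · simp only [List.sum_cons, hin.2.1]; omega
      · simp only [K, hin.2.2, hin.2.1, ← hk']
        have : min (k' + s - k') (c - (r - k' - s)) = s := by omega
        rw [this]
    · -- horizontal: ρ > c
      have hin := ih (k' + (r - k' - c + s)) (by omega) (by omega)
      refine ⟨List.Forall₂.cons (by omega) hin.1, ?_, ?_⟩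
      · simp only [List.sum_cons, hin.2.1]; omega
      · simp only [K, hin.2.2, hin.2.1, ← hk']
        have : min (k' + (r - k' - c + s) - k') (c - (c - s)) = s := by omega
        rw [this]

theorem CM_self {L n : List ℕ} (h : List.Forall₂ (· ≤ ·) n L) : CM L n n.sum = n := by
  induction h with
  | nil => simp [CM]
  | @cons u c n L hu hn ih =>
    have hK := K_le hn
    simp only [List.sum_cons, CM]
    set k' := K L n with hk'
    set s := min (n.sum - k') (c - u) with hs
    split_ifs with hcase
    · have h1 : s = n.sum - k' := by omega
      have h2 : u + n.sum - k' - s = u := by omega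
      have h3 : k' + s = n.sum := by omega
      rw [h2, h3, ih]; exact if_pos hcase
    · have h1 : s = c - u := by omega
      have h2 : c - s = u := by omega
      have h3 : k' + (u + n.sum - k' - c + s) = n.sum := by omega
      rw [h2, h3, ih]; exact if_neg hcase

theorem CM_coherent {L n : List ℕ} (h : List.Forall₂ (· ≤ ·) n L) :
    ∀ r r', K L n ≤ r → K L n + r ≤ L.sum → K L n ≤ r' → K L n + r' ≤ L.sum →
      CM L (CM L n r) r' = CM L n r' := by
  induction h with
  | nil => intro r r' _ _ _ _; simp [CM]
  | @cons u c n L hu hn ih =>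
    intro r r' h1 h2 h3 h4
    have hK := K_le hn
    simp only [K, List.sum_cons] at h1 h2 h3 h4
    set k' := K L n with hk'
    set s := min (n.sum - k') (c - u) with hs
    by_cases hcase : r - k' ≤ c
    · have e1 : CM (c :: L) (u :: n) r
          = (r - k' - s) :: CM L n (k' + s) := by
        simp only [CM, ← hk', ← hs]; rw [if_pos hcase]
      have hin := CM_main hn (k' + s) (by omega) (by omega)
      rw [e1]
      simp only [CM, hin.2.2, hin.2.1, ← hk', ← hs]
      have hmin : min (k' + s - k') (c - (r - k' - s)) = s := by omega
      rw [hmin]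
      by_cases hcase2 : r' - k' ≤ c
      · rw [if_pos hcase2, if_pos hcase2,
          ih _ _ (by omega) (by omega) (by omega) (by omega)]
      · rw [if_neg hcase2, if_neg hcase2,
          ih _ _ (by omega) (by omega) (by omega) (by omega)]
    · have e1 : CM (c :: L) (u :: n) r
          = (c - s) :: CM L n (k' + (r - k' - c + s)) := by
        simp only [CM, ← hk', ← hs]; rw [if_neg hcase]
      have hin := CM_main hn (k' + (r - k' - c + s)) (by omega) (by omega)
      rw [e1]
      simp only [CM, hin.2.2, hin.2.1, ← hk', ← hs]
      have hmin : min (k' + (r - k' - c + s) - k') (c - (c - s)) = s := by omega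
      rw [hmin]
      by_cases hcase2 : r' - k' ≤ c
      · rw [if_pos hcase2, if_pos hcase2,
          ih _ _ (by omega) (by omega) (by omega) (by omega)]
      · rw [if_neg hcase2, if_neg hcase2,
          ih _ _ (by omega) (by omega) (by omega) (by omega)]

theorem CM_mono {L n : List ℕ} (h : List.Forall₂ (· ≤ ·) n L) :
    ∀ r r', K L n ≤ r → r ≤ r' → K L n + r' ≤ L.sum →
      List.Forall₂ (· ≤ ·) (CM L n r) (CM L n r') := by
  induction h with
  | nil => intro r r' _ _ _; simp [CM]
  | @cons u c n L hu hn ih =>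
    intro r r' h1 h2 h3
    have hK := K_le hn
    simp only [K, List.sum_cons] at h1 h3
    set k' := K L n with hk'
    set s := min (n.sum - k') (c - u) with hs
    simp only [CM, ← hk', ← hs]
    split_ifs with hc1 hc2 hc2
    · exact List.Forall₂.cons (by omega)
        (List.forall₂_same.2 fun x _ => le_refl x)
    · exact List.Forall₂.cons (by omega)
        (ih _ _ (by omega) (by omega) (by omega))
    · omega
    · exact List.Forall₂.cons (by omega)
        (ih _ _ (by omega) (by omega) (by omega))


variable {σ : Type} [DecidableEq σ]

omit [DecidableEq σ] in
theorem mdeg_add (a b : σ →₀ ℕ) : mdeg (a + b) = mdeg a + mdeg b :=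
  Finsupp.sum_add_index' (fun _ => rfl) (fun _ _ _ => rfl)

omit [DecidableEq σ] in
theorem mdeg_single (v : σ) (c : ℕ) : mdeg (Finsupp.single v c) = c :=
  Finsupp.sum_single_index rfl

omit [DecidableEq σ] in
theorem mdeg_mono {a b : σ →₀ ℕ} (h : a ≤ b) : mdeg a ≤ mdeg b := by
  obtain ⟨c, rfl⟩ := le_iff_exists_add.1 h
  rw [mdeg_add]; omega

omit [DecidableEq σ] in
theorem mdeg_eq_sum {m : σ →₀ ℕ} {s : Finset σ} (h : m.support ⊆ s) :
    mdeg m = ∑ x ∈ s, m x :=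
  Finsupp.sum_of_support_subset m h _ (fun _ _ => rfl)

/-- reconstruct a finsupp from a list of values on a list of variables -/
noncomputable def fromL : List σ → List ℕ → (σ →₀ ℕ)
  | v :: vs, c :: cs => Finsupp.single v c + fromL vs cs
  | _, _ => 0

theorem fromL_apply_not_mem : ∀ (vs : List σ) (cs : List ℕ) (x : σ), x ∉ vs → fromL vs cs x = 0
  | [], _, x, _ => by simp [fromL]
  | _ :: _, [], x, _ => by simp [fromL]
  | v :: vs, c :: cs, x, hx => by
    have hxv : v ≠ x := fun h => hx (h ▸ List.mem_cons_self)
    simp only [fromL, Finsupp.add_apply]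
    rw [Finsupp.single_eq_of_ne' hxv,
      fromL_apply_not_mem vs cs x (fun h => hx (List.mem_cons_of_mem _ h))]

theorem fromL_mdeg : ∀ (vs : List σ) (cs : List ℕ), cs.length = vs.length →
    mdeg (fromL vs cs) = cs.sum
  | [], [], _ => by simp [fromL, mdeg]
  | [], _ :: _, h => by simp at h
  | _ :: _, [], h => by simp at h
  | v :: vs, c :: cs, h => by
    simp only [fromL, mdeg_add, mdeg_single, List.sum_cons]
    rw [fromL_mdeg vs cs (by simpa using h)]

theorem fromL_mono : ∀ (vs : List σ) (cs cs' : List ℕ),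
    List.Forall₂ (· ≤ ·) cs cs' → fromL vs cs ≤ fromL vs cs'
  | [], _, _, _ => by simp [fromL]
  | v :: vs, _, _, List.Forall₂.nil => le_refl _
  | v :: vs, _, _, @List.Forall₂.cons _ _ _ c c' cs cs' hc hcs => by
    simp only [fromL]
    exact add_le_add (Finsupp.single_le_single.2 hc) (fromL_mono vs cs cs' hcs)

theorem map_fromL : ∀ (vs : List σ), vs.Nodup → ∀ (cs : List ℕ), cs.length = vs.length →
    vs.map (fromL vs cs) = cs
  | [], _, [], _ => rfl
  | [], _, _ :: _, h => by simp at h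
  | v :: vs, hnd, [], h => by simp at h
  | v :: vs, hnd, c :: cs, h => by
    simp only [List.nodup_cons] at hnd
    simp only [List.map_cons, fromL, List.cons.injEq]
    constructor
    · rw [Finsupp.add_apply, Finsupp.single_eq_same,
        fromL_apply_not_mem vs cs v hnd.1]
      omega
    · have h2 : vs.map ((Finsupp.single v c + fromL vs cs) : σ →₀ ℕ)
          = vs.map (fromL vs cs) := by
        apply List.map_congr_left
        intro x hx
        have hvx : v ≠ x := fun hh => hnd.1 (hh ▸ hx)
        rw [Finsupp.add_apply, Finsupp.single_eq_of_ne' hvx, zero_add]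
      rw [h2, map_fromL vs hnd.2 cs (by simpa using h)]

theorem fromL_map : ∀ (vs : List σ), vs.Nodup → ∀ (m : σ →₀ ℕ),
    (∀ x, x ∉ vs → m x = 0) → fromL vs (vs.map m) = m
  | [], _, m, hm => by
    ext x
    have h0 := hm x (by simp)
    simp [fromL, h0]
  | v :: vs, hnd, m, hm => by
    simp only [List.map_cons, fromL]
    simp only [List.nodup_cons] at hnd
    have h1 : vs.map m = vs.map (m.erase v) := by
      apply List.map_congr_left
      intro x hx
      rw [Finsupp.erase_ne (fun hh => by subst hh; exact hnd.1 hx)]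
    rw [h1, fromL_map vs hnd.2 (m.erase v) (fun x hx => by
      by_cases hxv : x = v
      · subst hxv; exact Finsupp.erase_same
      · rw [Finsupp.erase_ne hxv]; exact hm x (by simp [hx, hxv])),
      Finsupp.single_add_erase]

omit [DecidableEq σ] in
theorem forall₂_map_iff (vs : List σ) (a b : σ →₀ ℕ) :
    List.Forall₂ (· ≤ ·) (vs.map a) (vs.map b) ↔ ∀ x ∈ vs, a x ≤ b x := by
  induction vs with
  | nil => simp
  | cons v vs ih => simp [List.forall₂_cons, ih]

/-- The key box injection: in the box `[0,F]`, there is a pointwise-dominated injection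
from level `hi` down to level `lo`, whenever `lo ≤ hi` and `lo + hi ≥ mdeg F`. -/
theorem box_inj (F : σ →₀ ℕ) (lo hi : ℕ) (hlohi : lo ≤ hi) (hsum : mdeg F ≤ lo + hi) :
    ∃ Φ : (σ →₀ ℕ) → (σ →₀ ℕ),
      (∀ n, n ≤ F → mdeg n = hi → Φ n ≤ n ∧ mdeg (Φ n) = lo) ∧
      (∀ n n', n ≤ F → mdeg n = hi → n' ≤ F → mdeg n' = hi → Φ n = Φ n' → n = n') := by
  classical
  set lv := F.support.toList with hlv
  have hnd : lv.Nodup := F.support.nodup_toList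
  set Lc := lv.map F with hLc
  have hLsum : Lc.sum = mdeg F := by
    rw [hLc, hlv, Finset.sum_map_toList, mdeg_eq_sum (subset_refl _)]
  have key : ∀ n : σ →₀ ℕ, n ≤ F → mdeg n = hi →
      List.Forall₂ (· ≤ ·) (lv.map n) Lc ∧ (lv.map n).sum = hi ∧
      (∀ x, x ∉ lv → n x = 0) := by
    intro n hn hdeg
    have hsupp : n.support ⊆ F.support := Finsupp.support_mono hn
    refine ⟨(forall₂_map_iff lv n F).2 (fun x _ => Finsupp.le_def.1 hn x), ?_, ?_⟩
    · rw [hlv, Finset.sum_map_toList, ← mdeg_eq_sum hsupp, hdeg]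
    · intro x hx
      by_contra hne
      exact hx (by rw [hlv]; exact Finset.mem_toList.2 (hsupp (Finsupp.mem_support_iff.2 hne)))
  refine ⟨fun n => fromL lv (CM Lc (lv.map n) lo), fun n hn hdeg => ?_, ?_⟩
  · dsimp only
    obtain ⟨hBdd, hsumn, hout⟩ := key n hn hdeg
    have hKn := K_le hBdd
    rw [hsumn, hLsum] at hKn
    have main := CM_main hBdd lo (by omega) (by rw [hLsum]; omega)
    constructor
    · have hmono := CM_mono hBdd lo hi (by omega) hlohi (by rw [hLsum]; omega)
      have hself : CM Lc (lv.map n) hi = lv.map n := by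
        rw [← hsumn, CM_self hBdd]
      rw [hself] at hmono
      calc fromL lv (CM Lc (lv.map n) lo) ≤ fromL lv (lv.map n) :=
            fromL_mono _ _ _ hmono
        _ = n := fromL_map lv hnd n hout
    · rw [fromL_mdeg lv _ (by
        rw [(main.1.length_eq : (CM Lc (lv.map n) lo).length = Lc.length), hLc,
          List.length_map]), main.2.1]
  · intro n n' hn hdn hn' hdn' heq
    dsimp only at heq
    obtain ⟨hBdd, hsumn, hout⟩ := key n hn hdn
    obtain ⟨hBdd', hsumn', hout'⟩ := key n' hn' hdn'
    have hKn := K_le hBdd; rw [hsumn, hLsum] at hKn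
    have hKn' := K_le hBdd'; rw [hsumn', hLsum] at hKn'
    have main := CM_main hBdd lo (by omega) (by rw [hLsum]; omega)
    have main' := CM_main hBdd' lo (by omega) (by rw [hLsum]; omega)
    have hlen : (CM Lc (lv.map n) lo).length = lv.length := by
      rw [(main.1.length_eq), hLc, List.length_map]
    have hlen' : (CM Lc (lv.map n') lo).length = lv.length := by
      rw [(main'.1.length_eq), hLc, List.length_map]
    have hcs : CM Lc (lv.map n) lo = CM Lc (lv.map n') lo := by
      have h3 : lv.map ⇑(fromL lv (CM Lc (lv.map ⇑n) lo))
          = lv.map ⇑(fromL lv (CM Lc (lv.map ⇑n') lo)) := by rw [heq]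
      simpa [map_fromL lv hnd _ hlen, map_fromL lv hnd _ hlen'] using h3
    have hcoh := CM_coherent hBdd lo hi (by omega) (by rw [hLsum]; omega)
      (by omega) (by rw [hLsum]; omega)
    have hcoh' := CM_coherent hBdd' lo hi (by omega) (by rw [hLsum]; omega)
      (by omega) (by rw [hLsum]; omega)
    have hselfn : CM Lc (lv.map n) hi = lv.map n := by rw [← hsumn, CM_self hBdd]
    have hselfn' : CM Lc (lv.map n') hi = lv.map n' := by rw [← hsumn', CM_self hBdd']
    have hmaps : lv.map n = lv.map n' := by
      rw [← hselfn, ← hselfn', ← hcoh, ← hcoh', hcs]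
    calc n = fromL lv (lv.map n) := (fromL_map lv hnd n hout).symm
      _ = fromL lv (lv.map n') := by rw [hmaps]
      _ = n' := fromL_map lv hnd n' hout'
/-- levels of a monomial order ideal -/
noncomputable def lvl (M : Finset (σ →₀ ℕ)) (d : ℕ) : Finset (σ →₀ ℕ) :=
  M.filter (fun m => mdeg m = d)

theorem exists_le_maximal (M : Finset (σ →₀ ℕ)) {m : σ →₀ ℕ} (hm : m ∈ M) :
    ∃ G ∈ M, m ≤ G ∧ ∀ x ∈ M, G ≤ x → x = G := by
  classical
  obtain ⟨G, hG, hGmax⟩ : ∃ G ∈ M.filter (fun x => m ≤ x),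
      ∀ x ∈ M.filter (fun x => m ≤ x), ¬ G < x := by
    obtain ⟨G, hG1, hG2⟩ := Finset.exists_maximal (s := M.filter (fun x => m ≤ x))
      ⟨m, Finset.mem_filter.2 ⟨hm, le_refl m⟩⟩
    exact ⟨G, hG1, fun x hx hlt => lt_irrefl _ (lt_of_lt_of_le hlt (hG2 hx hlt.le))⟩
  rw [Finset.mem_filter] at hG
  refine ⟨G, hG.1, hG.2, fun x hx hGx => ?_⟩
  by_contra hne
  exact hGmax x (Finset.mem_filter.2 ⟨hx, le_trans hG.2 hGx⟩)
    (lt_of_le_of_ne hGx (fun h => hne h.symm))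

theorem step_up (M : Finset (σ →₀ ℕ))
    (hdown : ∀ m ∈ M, ∀ m' : σ →₀ ℕ, m' ≤ m → m' ∈ M)
    {m x : σ →₀ ℕ} (hm : m ∈ M) (hx : x ∈ M) (hle : m ≤ x) (hne : x ≠ m) :
    ∃ y ∈ M, m ≤ y ∧ mdeg y = mdeg m + 1 := by
  have hv : ∃ v, m v < x v := by
    by_contra hc
    push_neg at hc
    exact hne (le_antisymm (Finsupp.le_def.2 hc) hle)
  obtain ⟨v, hv⟩ := hv
  refine ⟨m + Finsupp.single v 1, ?_, self_le_add_right m _, by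
    rw [mdeg_add, mdeg_single]⟩
  refine hdown x hx _ (Finsupp.le_def.2 (fun w => ?_))
  rw [Finsupp.add_apply]
  by_cases hwv : w = v
  · subst hwv; rw [Finsupp.single_eq_same]; omega
  · rw [Finsupp.single_eq_of_ne' (fun h => hwv h.symm)]
    have := Finsupp.le_def.1 hle w
    omega

theorem flawless : ∀ (N : ℕ) (M : Finset (σ →₀ ℕ)) (e i : ℕ), M.card ≤ N →
    (∀ m ∈ M, ∀ m' : σ →₀ ℕ, m' ≤ m → m' ∈ M) →
    (∀ m ∈ M, (∀ x ∈ M, m ≤ x → x = m) → mdeg m = e) →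
    2 * i ≤ e → (lvl M i).card ≤ (lvl M (e - i)).card := by
  intro N
  induction N with
  | zero =>
    intro M e i hcard _ _ _
    rw [Nat.le_zero, Finset.card_eq_zero] at hcard
    subst hcard
    simp [lvl]
  | succ N ih =>
    intro M e i hcard hdown hpure hie
    rcases M.eq_empty_or_nonempty with rfl | hne
    · simp [lvl]
    classical
    obtain ⟨F, hF, hFmax'⟩ : ∃ F ∈ M, ∀ x ∈ M, ¬ F < x := by
      obtain ⟨F, hF1, hF2⟩ := Finset.exists_maximal (s := M) hne
      exact ⟨F, hF1, fun x hx hlt => lt_irrefl _ (lt_of_lt_of_le hlt (hF2 hx hlt.le))⟩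
    have hFmax : ∀ x ∈ M, F ≤ x → x = F := fun x hx hFx => by
      by_contra hne2
      exact hFmax' x hx (lt_of_le_of_ne hFx (fun h => hne2 h.symm))
    have hFe : mdeg F = e := hpure F hF hFmax
    set priv := fun m : σ →₀ ℕ =>
      m ≤ F ∧ ∀ G ∈ M, (∀ x ∈ M, G ≤ x → x = G) → m ≤ G → G = F with hpriv
    set U := M.filter priv with hU
    set M' := M.filter (fun m => ¬ priv m) with hM'
    -- membership helpers
    have hprivF : priv F := ⟨le_refl F, fun G hG _ hFG => hFmax G hG hFG⟩
    have hFU : F ∉ M' := by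
      rw [hM', Finset.mem_filter]
      push_neg
      intro _
      exact hprivF
    have hM'sub : M' ⊆ M := Finset.filter_subset _ _
    have hM'card : M'.card ≤ N := by
      have : M' ⊂ M := (Finset.ssubset_iff_of_subset hM'sub).2 ⟨F, hF, hFU⟩
      have := Finset.card_lt_card this
      omega
    -- not priv m gives a maximal witness ≠ F above m
    have hnotpriv : ∀ m ∈ M, ¬ priv m →
        ∃ G ∈ M, (∀ x ∈ M, G ≤ x → x = G) ∧ m ≤ G ∧ G ≠ F := by
      intro m hm hnp
      by_cases hmF : m ≤ F
      · have hnp' : ¬ (m ≤ F ∧ ∀ G ∈ M, (∀ x ∈ M, G ≤ x → x = G) → m ≤ G → G = F) := hnp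
        push_neg at hnp'
        obtain ⟨G, hG, hGmax, hmG, hGF⟩ := hnp' hmF
        exact ⟨G, hG, hGmax, hmG, hGF⟩
      · obtain ⟨G, hG, hmG, hGmax⟩ := exists_le_maximal M hm
        refine ⟨G, hG, hGmax, hmG, fun h => hmF (h ▸ hmG)⟩
    have hdownM' : ∀ m ∈ M', ∀ m'' : σ →₀ ℕ, m'' ≤ m → m'' ∈ M' := by
      intro m hm m'' hle
      rw [hM', Finset.mem_filter] at hm ⊢
      obtain ⟨G, hG, hGmax, hmG, hGF⟩ := hnotpriv m hm.1 hm.2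
      refine ⟨hdown m hm.1 m'' hle, fun hp => hGF (hp.2 G hG hGmax (le_trans hle hmG))⟩
    have hmaxM' : ∀ G ∈ M, (∀ x ∈ M, G ≤ x → x = G) → G ≠ F → G ∈ M' := by
      intro G hG hGmax hGF
      rw [hM', Finset.mem_filter]
      exact ⟨hG, fun hp => hGF (hGmax F hF hp.1).symm⟩
    have hpureM' : ∀ m ∈ M', (∀ x ∈ M', m ≤ x → x = m) → mdeg m = e := by
      intro m hm hmax
      have hmM : m ∈ M := hM'sub hm
      by_cases hMmax : ∀ x ∈ M, m ≤ x → x = m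
      · exact hpure m hmM hMmax
      · exfalso
        push_neg at hMmax
        obtain ⟨x, hx, hmx, hxm⟩ := hMmax
        obtain ⟨G, hG, hGmax, hmG, hGF⟩ :=
          hnotpriv m hmM (Finset.mem_filter.1 hm).2
        have hGM' : G ∈ M' := hmaxM' G hG hGmax hGF
        have : G = m := hmax G hGM' hmG
        subst this
        exact hxm (hGmax x hx hmx)
    have IH := ih M' e i hM'card hdownM' hpureM' hie
    -- the up-set U inside the box of F
    have hUmem : ∀ n, n ∈ U ↔ n ∈ M ∧ priv n := fun n => Finset.mem_filter
    have hUup : ∀ n ∈ U, ∀ y : σ →₀ ℕ, n ≤ y → y ≤ F → y ∈ U := by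
      intro n hn y hny hyF
      rw [hUmem] at hn ⊢
      exact ⟨hdown F hF y hyF,
        ⟨hyF, fun G hG hGmax hyG => hn.2.2 G hG hGmax (le_trans hny hyG)⟩⟩
    -- box injection for U
    have hie2 : i ≤ e - i := by omega
    obtain ⟨Φ, hΦ1, hΦ2⟩ := box_inj F i (e - i) hie2 (by omega)
    have hUcard : (lvl U i).card ≤ (lvl U (e - i)).card := by
      apply Finset.card_le_card_of_injOn (fun n => F - Φ (F - n))
      · intro n hn
        rw [lvl, Finset.mem_coe, Finset.mem_filter] at hn ⊢
        obtain ⟨hnU, hndeg⟩ := hn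
        have hnF : n ≤ F := ((hUmem n).1 hnU).2.1
        have hwF : F - n ≤ F := tsub_le_self
        have hadd : n + (F - n) = F := add_tsub_cancel_of_le hnF
        have hwdeg : mdeg (F - n) = e - i := by
          have := congrArg mdeg hadd
          rw [mdeg_add] at this
          omega
        obtain ⟨hΦle, hΦdeg⟩ := hΦ1 (F - n) hwF hwdeg
        have hΦF : Φ (F - n) ≤ F := le_trans hΦle hwF
        have hadd2 : Φ (F - n) + (F - Φ (F - n)) = F := add_tsub_cancel_of_le hΦF
        constructor
        · refine hUup n hnU _ ?_ tsub_le_self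
          calc n = F - (F - n) := (tsub_tsub_cancel_of_le hnF).symm
            _ ≤ F - Φ (F - n) := tsub_le_tsub_left hΦle F
        · have := congrArg mdeg hadd2
          rw [mdeg_add] at this
          beta_reduce; omega
      · intro n hn n' hn' heq
        simp only [Finset.mem_coe, lvl, Finset.mem_filter] at hn hn'
        have hnF : n ≤ F := ((hUmem n).1 hn.1).2.1
        have hnF' : n' ≤ F := ((hUmem n').1 hn'.1).2.1
        have hwdeg : mdeg (F - n) = e - i := by
          have := congrArg mdeg (add_tsub_cancel_of_le hnF)
          rw [mdeg_add] at this
          omega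
        have hwdeg' : mdeg (F - n') = e - i := by
          have := congrArg mdeg (add_tsub_cancel_of_le hnF')
          rw [mdeg_add] at this
          omega
        have hΦF : Φ (F - n) ≤ F := le_trans (hΦ1 _ tsub_le_self hwdeg).1 tsub_le_self
        have hΦF' : Φ (F - n') ≤ F := le_trans (hΦ1 _ tsub_le_self hwdeg').1 tsub_le_self
        have hΦeq : Φ (F - n) = Φ (F - n') := by
          have h1 := tsub_tsub_cancel_of_le hΦF
          have h2 := tsub_tsub_cancel_of_le hΦF'
          rw [← h1, ← h2]
          simp only at heq
          rw [heq]
        have hw : F - n = F - n' := hΦ2 _ _ tsub_le_self hwdeg tsub_le_self hwdeg' hΦeq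
        calc n = F - (F - n) := (tsub_tsub_cancel_of_le hnF).symm
          _ = F - (F - n') := by rw [hw]
          _ = n' := tsub_tsub_cancel_of_le hnF'
    -- combine the counts
    have hsplit : ∀ d, (lvl M d).card = (lvl M' d).card + (lvl U d).card := by
      intro d
      have h1 : lvl M' d = (lvl M d).filter (fun m => ¬ priv m) := by
        rw [lvl, lvl, hM', Finset.filter_comm]
      have h2 : lvl U d = (lvl M d).filter priv := by
        rw [lvl, lvl, hU, Finset.filter_comm]
      have hq : (Finset.filter priv (lvl M d)).card
          + (Finset.filter (fun m => ¬ priv m) (lvl M d)).card = (lvl M d).card :=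
        Finset.card_filter_add_card_filter_not priv
      rw [h1, h2]
      omega
    rw [hsplit i, hsplit (e - i)]
    omega
theorem levels_mono (M : Finset (σ →₀ ℕ)) (e : ℕ)
    (hdown : ∀ m ∈ M, ∀ m' : σ →₀ ℕ, m' ≤ m → m' ∈ M)
    (hpure : ∀ m ∈ M, (∀ m' ∈ M, m ≤ m' → m' = m) → mdeg m = e)
    {i j : ℕ} (hij : i ≤ j) (hije : i + j ≤ e) :
    (lvl M i).card ≤ (lvl M j).card := by
  classical
  rcases eq_or_lt_of_le hij with rfl | hlt
  · exact le_refl _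
  set Mt := M.filter (fun m => mdeg m ≤ i + j) with hMt
  have hdownt : ∀ m ∈ Mt, ∀ m' : σ →₀ ℕ, m' ≤ m → m' ∈ Mt := by
    intro m hm m' hle
    rw [hMt, Finset.mem_filter] at hm ⊢
    exact ⟨hdown m hm.1 m' hle, le_trans (mdeg_mono hle) hm.2⟩
  have hpuret : ∀ m ∈ Mt, (∀ x ∈ Mt, m ≤ x → x = m) → mdeg m = i + j := by
    intro m hm hmax
    rw [hMt, Finset.mem_filter] at hm
    rcases eq_or_lt_of_le hm.2 with h | h
    · exact h
    · exfalso
      have hMmax : ∀ x ∈ M, m ≤ x → x = m := by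
        intro x hx hmx
        by_contra hne
        obtain ⟨y, hy, hmy, hydeg⟩ := step_up M hdown hm.1 hx hmx hne
        have hyt : y ∈ Mt := Finset.mem_filter.2 ⟨hy, by omega⟩
        have h9 := hmax y hyt hmy
        rw [h9] at hydeg
        omega
      have := hpure m hm.1 (fun m' hm' hmm' => hMmax m' hm' hmm')
      omega
  have hfl := flawless Mt.card Mt (i + j) i (le_refl _) hdownt hpuret (by omega)
  have hlv : ∀ d, d ≤ i + j → lvl Mt d = lvl M d := by
    intro d hd
    ext m
    simp only [lvl, hMt, Finset.filter_filter, Finset.mem_filter]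
    constructor
    · rintro ⟨h1, _, h3⟩; exact ⟨h1, h3⟩
    · rintro ⟨h1, h2⟩; exact ⟨h1, by omega, h2⟩
  rw [hlv i (by omega), show i + j - i = j by omega, hlv j (by omega)] at hfl
  exact hfl

end Stmt13Aux

/-- **Hibi.** For a pure `O`-sequence `(h_0, ..., h_e)` one has `h_i ≤ h_j`
whenever `i ≤ j ≤ e - i`; in particular `h_i ≤ h_{e-i}` for `i ≤ e/2` and
`h_0 ≤ h_1 ≤ ⋯ ≤ h_{⌊e/2⌋}`. -/
theorem stmt13 {σ : Type} [DecidableEq σ] (M : Finset (σ →₀ ℕ)) (e : ℕ)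
    (hdown : ∀ m ∈ M, ∀ m' : σ →₀ ℕ, m' ≤ m → m' ∈ M)
    (hpure : ∀ m ∈ M, (∀ m' ∈ M, m ≤ m' → m' = m) → mdeg m = e)
    (h : ℕ → ℕ) (hh : ∀ i, h i = (M.filter fun m => mdeg m = i).card) :
    (∀ i j, i ≤ j → i + j ≤ e → h i ≤ h j) ∧
    (∀ i, 2 * i ≤ e → h i ≤ h (e - i)) ∧
    (∀ i, 1 ≤ i → i ≤ e / 2 → h (i - 1) ≤ h i) := by
  have main : ∀ i j, i ≤ j → i + j ≤ e → h i ≤ h j := by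
    intro i j hij hije
    rw [hh i, hh j]
    exact Stmt13Aux.levels_mono M e hdown hpure hij hije
  refine ⟨main, fun i hi => main i (e - i) (by omega) (by omega),
    fun i hi1 hi2 => main (i - 1) i (by omega) (by omega)⟩
end

section
/- In the monomial order ideal SFY for a chain C_n, the number of monomials of degree k equals h_k - h_{k-1} for 1 ≤ k ≤ ⌊(n-1)/2⌋ and equals 1 for k = 0, where h_k are the coefficients of the Chow polynomial of C_n (with h_{-1} = 0). That is, the h-vector of SFY equals the differential sequence Δh of the coefficients of H_{C_n}(t). -/
namespace St18


/-- length of the run of `T` ending just below `x`. -/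
def runlen (T : Finset ℕ) : ℕ → ℕ
  | 0 => 0
  | x+1 => if x ∈ T then runlen T x + 1 else 0

lemma runlen_le (T : Finset ℕ) : ∀ x, runlen T x ≤ x
  | 0 => le_refl 0
  | x+1 => by
      rw [runlen]; split
      · exact Nat.succ_le_succ (runlen_le T x)
      · exact Nat.zero_le _

lemma mem_of_runlen (T : Finset ℕ) : ∀ x, ∀ j ∈ Finset.Ico (x - runlen T x) x, j ∈ T
  | 0 => by simp
  | x+1 => by
      intro j hj
      rw [Finset.mem_Ico] at hj
      rw [runlen] at hj
      split at hj
      · rcases Nat.lt_succ_iff_lt_or_eq.1 hj.2 with h | h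
        · exact mem_of_runlen T x j (Finset.mem_Ico.2 ⟨by omega, h⟩)
        · subst h; assumption
      · omega

lemma runlen_left_not_mem (T : Finset ℕ) :
    ∀ x, x - runlen T x = 0 ∨ x - runlen T x - 1 ∉ T
  | 0 => Or.inl rfl
  | x+1 => by
      rw [runlen]; split
      · rcases runlen_left_not_mem T x with h | h
        · left; omega
        · right; have := runlen_le T x; 
          have : x + 1 - (runlen T x + 1) - 1 = x - runlen T x - 1 := by omega
          rw [this]; assumption
      · right; simpa using ‹x ∉ T›

lemma runlen_eq (T : Finset ℕ) (x r : ℕ) (hr : r ≤ x)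
    (hsub : ∀ j ∈ Finset.Ico (x - r) x, j ∈ T)
    (hout : x - r = 0 ∨ x - r - 1 ∉ T) : runlen T x = r := by
  induction r generalizing x with
  | zero =>
    match x, hout with
    | 0, _ => rfl
    | x+1, hout => rw [runlen, if_neg]; simpa using hout
  | succ r ih =>
    match x with
    | x+1 =>
      have hx : x ∈ T := hsub x (by rw [Finset.mem_Ico]; omega)
      rw [runlen, if_pos hx]
      congr 1
      exact ih x (by omega) (fun j hj => hsub j (by rw [Finset.mem_Ico] at *; omega))
        (by rcases hout with h | h; · left; omega
            · right; have : x - r - 1 = x + 1 - (r+1) - 1 := by omega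
              rw [this]; exact h)

lemma runlen_eq_zero (T : Finset ℕ) (x : ℕ) (h : x = 0 ∨ x - 1 ∉ T) : runlen T x = 0 :=
  runlen_eq T x 0 (Nat.zero_le x) (by simp) (by simpa using h)

lemma choose_le_choose_succ {n k : ℕ} (h : k + 1 ≤ n - k) :
    n.choose k ≤ n.choose (k+1) := by
  have h2 := Nat.choose_succ_right_eq n k
  have hp : 0 < k + 1 := Nat.succ_pos k
  have : n.choose k * (k+1) ≤ n.choose (k+1) * (k+1) := by
    calc n.choose k * (k+1) ≤ n.choose k * (n - k) := Nat.mul_le_mul_left _ h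
    _ = n.choose (k+1) * (k+1) := h2.symm
  exact Nat.le_of_mul_le_mul_right this hp

/-- the target value for `(Bal m k).card`. -/
def chfun (m k : ℕ) : ℕ :=
  if k = 0 then 1 else if 2*k ≤ m+1 then (m+1).choose k - (m+1).choose (k-1) else 0



def Bal (m k : ℕ) : Finset (Finset ℕ) :=
  ((Finset.Icc 1 m).powersetCard k).filter
    (fun T => ∀ x ∈ T, x + 2 * ((T.filter (fun y => x < y)).card) ≤ m)

lemma mem_Bal {m k : ℕ} {T : Finset ℕ} : T ∈ Bal m k ↔
    T ⊆ Finset.Icc 1 m ∧ T.card = k ∧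
    ∀ x ∈ T, x + 2 * ((T.filter (fun y => x < y)).card) ≤ m := by
  simp only [Bal, Finset.mem_filter, Finset.mem_powersetCard]
  tauto

lemma filter_gt_image_sub (T : Finset ℕ) (hT : ∀ y ∈ T, 2 ≤ y) (x : ℕ) (hx : 1 ≤ x) :
    ((T.image (· - 1)).filter (fun y => x - 1 < y)).card
      = (T.filter (fun y => x < y)).card := by
  rw [Finset.filter_image]
  have : (T.filter fun a => x - 1 < a - 1) = T.filter (fun y => x < y) := by
    apply Finset.filter_congr
    intro y hy
    have := hT y hy
    omega
  rw [this]
  apply Finset.card_image_of_injOn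
  intro a ha b hb hab
  simp only at hab
  have := hT a (Finset.mem_filter.1 ha).1
  have := hT b (Finset.mem_filter.1 hb).1
  omega

lemma filter_gt_image_add (T : Finset ℕ) (x : ℕ) :
    ((T.image (· + 1)).filter (fun y => x + 1 < y)).card
      = (T.filter (fun y => x < y)).card := by
  rw [Finset.filter_image]
  have : (T.filter fun a => x + 1 < a + 1) = T.filter (fun y => x < y) := by
    apply Finset.filter_congr; intro y hy; omega
  rw [this]
  exact Finset.card_image_of_injOn (fun a _ b _ hab => by simpa using hab)

lemma mem_image_sub {T : Finset ℕ} (hT : ∀ y ∈ T, 2 ≤ y) {x : ℕ} :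
    x ∈ T.image (· - 1) ↔ (x + 1 ∈ T ∧ 1 ≤ x) := by
  simp only [Finset.mem_image]
  constructor
  · rintro ⟨y, hy, rfl⟩; have := hT y hy
    constructor
    · have : y - 1 + 1 = y := by omega
      rwa [this]
    · omega
  · rintro ⟨h, _⟩; exact ⟨x + 1, h, by omega⟩

/-- case A : subsets not containing 1. -/
lemma balA (m k : ℕ) :
    ((Bal (m+1) k).filter (fun T => 1 ∉ T)).card = (Bal m k).card := by
  apply Finset.card_nbij' (fun T => T.image (· - 1)) (fun T => T.image (· + 1))
  · -- forward membership
    intro T hT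
    simp only [Finset.mem_coe] at hT ⊢
    rw [Finset.mem_filter] at hT
    obtain ⟨hT, h1⟩ := hT
    rw [mem_Bal] at hT ⊢
    obtain ⟨hsub, hcard, hcond⟩ := hT
    have h2 : ∀ y ∈ T, 2 ≤ y := by
      intro y hy; have := hsub hy; rw [Finset.mem_Icc] at this
      rcases Nat.lt_or_ge y 2 with h | h
      · interval_cases y <;> simp_all
      · exact h
    refine ⟨?_, ?_, ?_⟩
    · intro y hy
      rw [mem_image_sub h2] at hy
      have := hsub hy.1; rw [Finset.mem_Icc] at this ⊢; omega
    · rw [Finset.card_image_of_injOn (fun a ha b hb hab => by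
        have := h2 a ha; have := h2 b hb; omega)]
      exact hcard
    · intro x hx
      rw [mem_image_sub h2] at hx
      have hc := hcond (x+1) hx.1
      have : x = (x + 1) - 1 := by omega
      rw [this, filter_gt_image_sub T h2 (x+1) (by omega)]
      omega
  · -- backward membership
    intro T hT
    simp only [Finset.mem_coe] at hT ⊢
    rw [mem_Bal] at hT
    obtain ⟨hsub, hcard, hcond⟩ := hT
    rw [Finset.mem_filter, mem_Bal]
    have hmem : ∀ x, x ∈ T.image (· + 1) ↔ ∃ y ∈ T, y + 1 = x := by
      intro x; simp [Finset.mem_image]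
    refine ⟨⟨?_, ?_, ?_⟩, ?_⟩
    · intro y hy
      rw [hmem] at hy
      obtain ⟨z, hz, rfl⟩ := hy
      have := hsub hz; rw [Finset.mem_Icc] at this ⊢; omega
    · rw [Finset.card_image_of_injOn (fun a _ b _ hab => by omega)]; exact hcard
    · intro x hx
      rw [hmem] at hx
      obtain ⟨z, hz, rfl⟩ := hx
      have := hcond z hz
      rw [filter_gt_image_add]
      omega
    · rw [hmem]
      rintro ⟨y, hy, h⟩
      have := hsub hy; rw [Finset.mem_Icc] at this; omega
  · -- left inverse
    intro T hT
    rw [Finset.mem_coe] at hT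
    dsimp only
    rw [Finset.mem_filter] at hT
    obtain ⟨hT, h1⟩ := hT
    rw [mem_Bal] at hT
    have h2 : ∀ y ∈ T, 2 ≤ y := by
      intro y hy; have := hT.1 hy; rw [Finset.mem_Icc] at this
      rcases Nat.lt_or_ge y 2 with h | h
      · interval_cases y <;> simp_all
      · exact h
    rw [Finset.image_image]
    ext x
    simp only [Finset.mem_image, Function.comp]
    constructor
    · rintro ⟨y, hy, rfl⟩; have := h2 y hy
      have : y - 1 + 1 = y := by omega
      rwa [this]
    · intro hx; exact ⟨x, hx, by have := h2 x hx; omega⟩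
  · -- right inverse
    intro T hT
    dsimp only
    rw [Finset.image_image]
    ext x
    simp only [Finset.mem_image, Function.comp]
    constructor
    · rintro ⟨y, hy, rfl⟩
      simpa using hy
    · intro hx; exact ⟨x, hx, by omega⟩

lemma erase_one_filter (T : Finset ℕ) (c : ℕ) (hc : 1 ≤ c) :
    (T.erase 1).filter (fun y => c < y) = T.filter (fun y => c < y) := by
  ext y
  simp only [Finset.mem_filter, Finset.mem_erase]
  constructor
  · rintro ⟨⟨_, h⟩, hc⟩; exact ⟨h, hc⟩
  · rintro ⟨h, hc⟩; exact ⟨⟨by omega, h⟩, hc⟩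

lemma filter_one_lt_eq_erase (T : Finset ℕ) (hT : ∀ y ∈ T, 1 ≤ y) :
    T.filter (fun y => 1 < y) = T.erase 1 := by
  ext y
  simp only [Finset.mem_filter, Finset.mem_erase]
  constructor
  · rintro ⟨h1, h2⟩; exact ⟨by omega, h1⟩
  · rintro ⟨h1, h2⟩; exact ⟨h2, by have := hT y h2; omega⟩

lemma balB_empty (m k : ℕ) (hk : 1 ≤ k) (h2 : ¬ 2*k ≤ m+2) :
    (Bal (m+1) k).filter (fun T => 1 ∈ T) = ∅ := by
  rw [Finset.filter_eq_empty_iff]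
  intro T hT h1
  rw [mem_Bal] at hT
  obtain ⟨hsub, hcard, hcond⟩ := hT
  have hc := hcond 1 h1
  rw [filter_one_lt_eq_erase T (fun y hy => (Finset.mem_Icc.1 (hsub hy)).1),
    Finset.card_erase_of_mem h1, hcard] at hc
  omega

lemma balB (m k : ℕ) (hk : 1 ≤ k) (h2 : 2*k ≤ m+2) :
    ((Bal (m+1) k).filter (fun T => 1 ∈ T)).card = (Bal m (k-1)).card := by
  apply Finset.card_nbij' (fun T => (T.erase 1).image (· - 1))
    (fun T => insert 1 (T.image (· + 1)))
  · intro T hT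
    simp only [Finset.mem_coe] at hT ⊢
    rw [Finset.mem_filter] at hT
    obtain ⟨hT, h1⟩ := hT
    rw [mem_Bal] at hT ⊢
    obtain ⟨hsub, hcard, hcond⟩ := hT
    have h2e : ∀ y ∈ T.erase 1, 2 ≤ y := by
      intro y hy
      rw [Finset.mem_erase] at hy
      have := Finset.mem_Icc.1 (hsub hy.2); omega
    refine ⟨?_, ?_, ?_⟩
    · intro y hy
      rw [mem_image_sub h2e] at hy
      have := Finset.mem_Icc.1 (hsub (Finset.mem_erase.1 hy.1).2)
      rw [Finset.mem_Icc]; omega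
    · rw [Finset.card_image_of_injOn (fun a ha b hb hab => by
        have := h2e a ha; have := h2e b hb; omega),
        Finset.card_erase_of_mem h1, hcard]
    · intro x hx
      rw [mem_image_sub h2e] at hx
      obtain ⟨hx1, hx2⟩ := hx
      have hc := hcond (x+1) (Finset.mem_erase.1 hx1).2
      have hxe : x = (x + 1) - 1 := by omega
      rw [hxe, filter_gt_image_sub _ h2e (x+1) (by omega), erase_one_filter _ _ (by omega)]
      omega
  · intro T hT
    simp only [Finset.mem_coe] at hT ⊢
    rw [mem_Bal] at hT
    obtain ⟨hsub, hcard, hcond⟩ := hT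
    have hmemi : ∀ x, x ∈ T.image (· + 1) ↔ ∃ y ∈ T, y + 1 = x := by
      intro x; simp [Finset.mem_image]
    have h1ni : 1 ∉ T.image (· + 1) := by
      rw [hmemi]; rintro ⟨y, hy, h⟩
      have := Finset.mem_Icc.1 (hsub hy); omega
    rw [Finset.mem_filter, mem_Bal]
    refine ⟨⟨?_, ?_, ?_⟩, Finset.mem_insert_self 1 _⟩
    · intro y hy
      rcases Finset.mem_insert.1 hy with rfl | hy
      · rw [Finset.mem_Icc]; omega
      · rw [hmemi] at hy
        obtain ⟨z, hz, rfl⟩ := hy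
        have := Finset.mem_Icc.1 (hsub hz); rw [Finset.mem_Icc]; omega
    · rw [Finset.card_insert_of_notMem h1ni,
        Finset.card_image_of_injOn (fun a _ b _ hab => by simpa using hab), hcard]
      omega
    · intro x hx
      rcases Finset.mem_insert.1 hx with rfl | hx
      · have : (insert 1 (T.image (· + 1))).filter (fun y => 1 < y) = T.image (· + 1) := by
          ext y
          simp only [Finset.mem_filter, Finset.mem_insert, hmemi]
          constructor
          · rintro ⟨rfl | ⟨z, hz, rfl⟩, h⟩
            · omega
            · exact ⟨z, hz, rfl⟩
          · rintro ⟨z, hz, rfl⟩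
            have := Finset.mem_Icc.1 (hsub hz)
            exact ⟨Or.inr ⟨z, hz, rfl⟩, by omega⟩
        rw [this, Finset.card_image_of_injOn (fun a _ b _ hab => by simpa using hab), hcard]
        omega
      · rw [hmemi] at hx
        obtain ⟨z, hz, rfl⟩ := hx
        have hc := hcond z hz
        have : (insert 1 (T.image (· + 1))).filter (fun y => z + 1 < y)
            = (T.image (· + 1)).filter (fun y => z + 1 < y) := by
          rw [Finset.filter_insert, if_neg (by omega)]
        rw [this, filter_gt_image_add]
        omega
  · -- left inverse
    intro T hT
    rw [Finset.mem_coe] at hT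
    dsimp only
    rw [Finset.mem_filter] at hT
    obtain ⟨hT, h1⟩ := hT
    rw [mem_Bal] at hT
    have h2e : ∀ y ∈ T.erase 1, 2 ≤ y := by
      intro y hy
      rw [Finset.mem_erase] at hy
      have := Finset.mem_Icc.1 (hT.1 hy.2); omega
    rw [Finset.image_image]
    have himg : ((T.erase 1).image fun x => x - 1 + 1) = T.erase 1 := by
      ext x
      simp only [Finset.mem_image]
      constructor
      · rintro ⟨y, hy, rfl⟩
        have := h2e y hy
        have he : y - 1 + 1 = y := by omega
        rwa [he]
      · intro hx; exact ⟨x, hx, by have := h2e x hx; omega⟩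
    rw [show ((fun x => x + 1) ∘ fun x => x - 1) = fun x => x - 1 + 1 from rfl, himg,
      Finset.insert_erase h1]
  · -- right inverse
    intro T hT
    rw [Finset.mem_coe] at hT
    dsimp only
    rw [mem_Bal] at hT
    have h1ni : 1 ∉ T.image (· + 1) := by
      simp only [Finset.mem_image]
      rintro ⟨y, hy, h⟩
      have := Finset.mem_Icc.1 (hT.1 hy); omega
    rw [Finset.erase_insert h1ni, Finset.image_image]
    ext x
    simp only [Finset.mem_image, Function.comp]
    constructor
    · rintro ⟨y, hy, rfl⟩; simpa using hy
    · intro hx; exact ⟨x, hx, by omega⟩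
lemma Bal_zero_eq (m : ℕ) : Bal m 0 = {∅} := by
  ext T
  rw [mem_Bal, Finset.mem_singleton]
  constructor
  · rintro ⟨-, hc, -⟩; exact Finset.card_eq_zero.1 hc
  · rintro rfl; simp

lemma chfun_ne (m k : ℕ) (hk : k ≠ 0) (h : 2*k ≤ m+1) :
    chfun m k = (m+1).choose k - (m+1).choose (k-1) := by
  simp [chfun, hk, h]

lemma chfun_nz (m k : ℕ) (hk : k ≠ 0) (h : ¬ 2*k ≤ m+1) : chfun m k = 0 := by
  simp [chfun, hk, h]

lemma chfun_z (m : ℕ) : chfun m 0 = 1 := by simp [chfun]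

lemma chfun_rec (m k : ℕ) (hk : 1 ≤ k) (h2 : 2*k ≤ m+2) :
    chfun (m+1) k = chfun m k + chfun m (k-1) := by
  obtain ⟨j, rfl⟩ : ∃ j, k = j + 1 := ⟨k - 1, by omega⟩
  have hP1 : (m+2).choose (j+1) = (m+1).choose j + (m+1).choose (j+1) :=
    Nat.choose_succ_succ' (m+1) j
  have hba : (m+1).choose j ≤ (m+1).choose (j+1) :=
    choose_le_choose_succ (by omega)
  have e1 : chfun (m+1) (j+1) = (m+2).choose (j+1) - (m+2).choose j := by
    rw [chfun_ne (m+1) (j+1) (by omega) (by omega)]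
    rfl
  rcases Nat.eq_or_lt_of_le h2 with heq | hlt
  · -- 2k = m + 2, boundary
    have hm : m + 1 = 2*j + 1 := by omega
    have hsym : (m+1).choose (j+1) = (m+1).choose j := by
      rw [hm]
      have := Nat.choose_symm (n := 2*j+1) (k := j+1) (by omega)
      have hd : 2*j+1 - (j+1) = j := by omega
      rw [hd] at this
      exact this.symm
    have e2 : chfun m (j+1) = 0 := chfun_nz m (j+1) (by omega) (by omega)
    rcases Nat.eq_zero_or_pos j with rfl | hj
    · have hm0 : m = 0 := by omega
      subst hm0
      simp [chfun]
    · obtain ⟨i, rfl⟩ : ∃ i, j = i + 1 := ⟨j - 1, by omega⟩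
      have hP2 : (m+2).choose (i+1) = (m+1).choose i + (m+1).choose (i+1) :=
        Nat.choose_succ_succ' (m+1) i
      have e3 : chfun m (i+1) = (m+1).choose (i+1) - (m+1).choose i := by
        rw [chfun_ne m (i+1) (by omega) (by omega)]
        rfl
      have hcb : (m+1).choose i ≤ (m+1).choose (i+1) :=
        choose_le_choose_succ (by omega)
      have hred : (i+1+1 : ℕ) - 1 = i + 1 := rfl
      rw [hred] at *
      rw [e1, e2, e3]
      omega
  · -- 2k ≤ m + 1
    have e2 : chfun m (j+1) = (m+1).choose (j+1) - (m+1).choose j := by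
      rw [chfun_ne m (j+1) (by omega) (by omega)]
      rfl
    rcases Nat.eq_zero_or_pos j with rfl | hj
    · have e3 : chfun m 0 = 1 := chfun_z m
      have h0 : (m+2).choose 0 = 1 := Nat.choose_zero_right _
      have h1 : (m+1).choose 0 = 1 := Nat.choose_zero_right _
      rw [e1, e2, show (0+1 : ℕ) - 1 = 0 from rfl, e3]
      omega
    · obtain ⟨i, rfl⟩ : ∃ i, j = i + 1 := ⟨j - 1, by omega⟩
      have hP2 : (m+2).choose (i+1) = (m+1).choose i + (m+1).choose (i+1) :=
        Nat.choose_succ_succ' (m+1) i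
      have e3 : chfun m (i+1) = (m+1).choose (i+1) - (m+1).choose i := by
        rw [chfun_ne m (i+1) (by omega) (by omega)]
        rfl
      have hcb : (m+1).choose i ≤ (m+1).choose (i+1) :=
        choose_le_choose_succ (by omega)
      have hred : (i+1+1 : ℕ) - 1 = i + 1 := rfl
      rw [hred] at *
      rw [e1, e2, e3]
      omega

lemma bal_card : ∀ m k, (Bal m k).card = chfun m k := by
  intro m
  induction m with
  | zero =>
    intro k
    rcases Nat.eq_zero_or_pos k with rfl | hk
    · rw [Bal_zero_eq]; simp [chfun]
    · have : Bal 0 k = ∅ := by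
        rw [Finset.eq_empty_iff_forall_notMem]
        intro T hT
        rw [mem_Bal] at hT
        have : T ⊆ ∅ := by simpa using hT.1
        have := Finset.card_eq_zero.2 (Finset.subset_empty.1 this)
        omega
      rw [this]
      simp only [chfun, Finset.card_empty]
      rw [if_neg (by omega), if_neg (by omega)]
    | succ m ih =>
      intro k
      rcases Nat.eq_zero_or_pos k with rfl | hk
      · rw [Bal_zero_eq]; simp [chfun]
      · have hsplit := Finset.card_filter_add_card_filter_not
          (s := Bal (m+1) k) (p := fun T => 1 ∈ T)
        by_cases h2 : 2*k ≤ m+2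
        · rw [chfun_rec m k hk h2]
          have := balB m k hk h2
          have := balA m k
          rw [ih k, ih (k-1)] at *
          omega
        · have hBe := balB_empty m k hk h2
          have hA := balA m k
          rw [ih k] at hA
          have hz : chfun m k = 0 := by
            simp only [chfun]
            rw [if_neg (by omega), if_neg (by omega)]
          have hz2 : chfun (m+1) k = 0 := by
            simp only [chfun]
            rw [if_neg (by omega), if_neg (by omega)]
          rw [hz2]
          rw [hBe] at hsplit
          simp only [Finset.card_empty] at hsplit
          omega


/-! ### extra runlen lemmas -/

lemma runlen_ne_zero_iff (T : Finset ℕ) (x : ℕ) :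
    runlen T x ≠ 0 ↔ 1 ≤ x ∧ x - 1 ∈ T := by
  match x with
  | 0 => simp [runlen]
  | x+1 =>
    rw [runlen]
    constructor
    · intro h
      refine ⟨by omega, ?_⟩
      by_contra hx
      rw [if_neg (by simpa using hx)] at h
      exact h rfl
    · rintro ⟨-, hx⟩
      simp only [Nat.add_sub_cancel] at hx
      rw [if_pos hx]
      omega

lemma runlen_ge (T : Finset ℕ) (a : ℕ) :
    ∀ x, (∀ j, a ≤ j → j < x → j ∈ T) → x - a ≤ runlen T x
  | 0 => by simp
  | x+1 => by
    intro h
    rcases Nat.lt_or_ge x a with h1 | h1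
    · omega
    · rw [runlen, if_pos (h x h1 (by omega))]
      have := runlen_ge T a x (fun j hj hj' => h j hj (by omega))
      omega

/-! ### monomials over `Fin (n+1)` -/

/-- the monomial associated to a subset `T` (run lengths). -/
noncomputable def monoFin (n : ℕ) (T : Finset ℕ) : Fin (n+1) →₀ ℕ :=
  Finsupp.equivFunOnFinite.symm (fun x => if (x:ℕ) ∈ T then 0 else runlen T x)

lemma monoFin_apply (n : ℕ) (T : Finset ℕ) (x : Fin (n+1)) :
    monoFin n T x = if (x:ℕ) ∈ T then 0 else runlen T x := rfl

/-- chain admissibility of a monomial. -/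
def AdmF (n : ℕ) (m : Fin (n+1) →₀ ℕ) : Prop :=
  (∀ p ∈ m.support, m p < (p:ℕ)) ∧
  ∀ p ∈ m.support, ∀ q ∈ m.support, (q:ℕ) < (p:ℕ) → (q:ℕ) + m p < (p:ℕ)

/-- the "suffix" degree condition. -/
def SufF (n : ℕ) (m : Fin (n+1) →₀ ℕ) : Prop :=
  ∀ p ∈ m.support, (p:ℕ) + m p + 2 * ∑ q ∈ m.support.filter (fun q => p < q), m q ≤ n

/-- the subset associated to a monomial. -/
def tsetF {n : ℕ} (m : Fin (n+1) →₀ ℕ) : Finset ℕ :=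
  m.support.biUnion (fun p => Finset.Ico ((p:ℕ) - m p) (p:ℕ))

lemma mem_tsetF {n : ℕ} (m : Fin (n+1) →₀ ℕ) (x : ℕ) :
    x ∈ tsetF m ↔ ∃ p ∈ m.support, (p:ℕ) - m p ≤ x ∧ x < (p:ℕ) := by
  simp [tsetF, Finset.mem_biUnion, Finset.mem_Ico]

lemma mdeg_eq_sum {σ : Type} (m : σ →₀ ℕ) : mdeg m = ∑ p ∈ m.support, m p := rfl

lemma tsetF_subset {n : ℕ} (m : Fin (n+1) →₀ ℕ) (hm : AdmF n m) :
    tsetF m ⊆ Finset.Icc 1 (n-1) := by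
  intro x hx
  rw [mem_tsetF] at hx
  obtain ⟨p, hp, h1, h2⟩ := hx
  have h3 := hm.1 p hp
  have h4 : (p:ℕ) ≤ n := Nat.lt_succ_iff.1 p.2
  rw [Finset.mem_Icc]
  omega

lemma supp_not_mem_tsetF {n : ℕ} {m : Fin (n+1) →₀ ℕ} (hm : AdmF n m)
    {p : Fin (n+1)} (hp : p ∈ m.support) : (p:ℕ) ∉ tsetF m := by
  rw [mem_tsetF]
  rintro ⟨q, hq, h1, h2⟩
  have := hm.2 q hq p hp h2
  omega

lemma left_not_mem_tsetF {n : ℕ} {m : Fin (n+1) →₀ ℕ} (hm : AdmF n m)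
    {p : Fin (n+1)} (hp : p ∈ m.support) : (p:ℕ) - m p - 1 ∉ tsetF m := by
  rw [mem_tsetF]
  rintro ⟨q, hq, h1, h2⟩
  rcases Nat.lt_trichotomy (q:ℕ) (p:ℕ) with h | h | h
  · have := hm.2 p hp q hq h
    omega
  · have hqp : q = p := Fin.ext h
    subst hqp
    have := hm.1 q hq
    omega
  · have := hm.2 q hq p hp h
    omega

lemma tsetF_disjoint {n : ℕ} {m : Fin (n+1) →₀ ℕ} (hm : AdmF n m) :
    ∀ p ∈ m.support, ∀ q ∈ m.support, p ≠ q →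
      Disjoint (Finset.Ico ((p:ℕ) - m p) (p:ℕ)) (Finset.Ico ((q:ℕ) - m q) (q:ℕ)) := by
  intro p hp q hq hne
  rw [Finset.disjoint_left]
  intro x hx1 hx2
  rw [Finset.mem_Ico] at hx1 hx2
  rcases Nat.lt_trichotomy (q:ℕ) (p:ℕ) with h | h | h
  · have := hm.2 p hp q hq h; omega
  · exact hne (Fin.ext h.symm)
  · have := hm.2 q hq p hp h; omega

lemma card_tsetF {n : ℕ} (m : Fin (n+1) →₀ ℕ) (hm : AdmF n m) :
    (tsetF m).card = mdeg m := by
  rw [tsetF, Finset.card_biUnion (tsetF_disjoint hm), mdeg_eq_sum]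
  apply Finset.sum_congr rfl
  intro p hp
  rw [Nat.card_Ico]
  have := hm.1 p hp
  omega

lemma monoFin_tsetF {n : ℕ} (m : Fin (n+1) →₀ ℕ) (hm : AdmF n m) :
    monoFin n (tsetF m) = m := by
  ext x
  rw [monoFin_apply]
  by_cases hx : x ∈ m.support
  · rw [if_neg (supp_not_mem_tsetF hm hx)]
    apply runlen_eq
    · exact (hm.1 x hx).le
    · intro j hj
      rw [mem_tsetF]
      exact ⟨x, hx, by rw [Finset.mem_Ico] at hj; omega⟩
    · rcases Nat.eq_zero_or_pos ((x:ℕ) - m x) with h | h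
      · exact Or.inl h
      · exact Or.inr (left_not_mem_tsetF hm hx)
  · have hx0 : m x = 0 := Finsupp.notMem_support_iff.1 hx
    rw [hx0]
    by_cases ht : (x:ℕ) ∈ tsetF m
    · rw [if_pos ht]
    · rw [if_neg ht]
      apply runlen_eq_zero
      by_contra hc
      push_neg at hc
      obtain ⟨h1, h2⟩ := hc
      rw [mem_tsetF] at h2
      obtain ⟨q, hq, hq1, hq2⟩ := h2
      rcases Nat.lt_or_ge ((x:ℕ) - 1) ((q:ℕ) - 1) with h | h
      · exact ht (by rw [mem_tsetF]; exact ⟨q, hq, by omega, by omega⟩)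
      · have hxq : (x:ℕ) = (q:ℕ) := by omega
        exact hx (by rwa [Fin.ext hxq])

lemma mem_supp_monoFin {n : ℕ} {T : Finset ℕ} {p : Fin (n+1)} :
    p ∈ (monoFin n T).support ↔ ((p:ℕ) ∉ T ∧ 1 ≤ (p:ℕ) ∧ (p:ℕ) - 1 ∈ T) := by
  rw [Finsupp.mem_support_iff, monoFin_apply]
  by_cases h : (p:ℕ) ∈ T
  · simp [h]
  · rw [if_neg h]
    rw [runlen_ne_zero_iff]
    tauto

lemma monoFin_AdmF {n : ℕ} (T : Finset ℕ) (hT : T ⊆ Finset.Icc 1 (n-1)) :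
    AdmF n (monoFin n T) := by
  have hT1 : ∀ y ∈ T, 1 ≤ y := fun y hy => (Finset.mem_Icc.1 (hT hy)).1
  constructor
  · intro p hp
    have hps := mem_supp_monoFin.1 hp
    rw [monoFin_apply, if_neg hps.1]
    have hle := runlen_le T (p:ℕ)
    rcases Nat.lt_or_ge (runlen T (p:ℕ)) (p:ℕ) with h | h
    · exact h
    · exfalso
      have heq : runlen T (p:ℕ) = (p:ℕ) := by omega
      have h0 : 0 ∈ T := by
        apply mem_of_runlen T (p:ℕ)
        rw [Finset.mem_Ico]
        omega
      have := hT1 0 h0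
      omega
  · intro p hp q hq hlt
    have hps := mem_supp_monoFin.1 hp
    have hqs := mem_supp_monoFin.1 hq
    rw [monoFin_apply, if_neg hps.1]
    by_contra hc
    push_neg at hc
    have : (q:ℕ) ∈ T := by
      apply mem_of_runlen T (p:ℕ)
      rw [Finset.mem_Ico]
      omega
    exact hqs.1 this

lemma tsetF_monoFin {n : ℕ} (T : Finset ℕ) (hT : T ⊆ Finset.Icc 1 (n-1)) :
    tsetF (monoFin n T) = T := by
  have hT' : ∀ y ∈ T, 1 ≤ y ∧ y ≤ n - 1 := fun y hy => Finset.mem_Icc.1 (hT hy)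
  ext x
  rw [mem_tsetF]
  constructor
  · rintro ⟨p, hp, h1, h2⟩
    have hps := mem_supp_monoFin.1 hp
    rw [monoFin_apply, if_neg hps.1] at h1
    exact mem_of_runlen T (p:ℕ) x (by rw [Finset.mem_Ico]; exact ⟨h1, h2⟩)
  · intro hx
    have hx' := hT' x hx
    have hn2 : 2 ≤ n := by omega
    have hex : ∃ p, x < p ∧ p ∉ T := by
      refine ⟨n, by omega, fun hc => by have := hT' n hc; omega⟩
    set p := Nat.find hex with hpdef
    obtain ⟨hxp, hpT⟩ := Nat.find_spec hex
    have hple : p ≤ n := Nat.find_le ⟨by omega, fun hc => by have := hT' n hc; omega⟩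
    have hmin : ∀ j, x < j → j < p → j ∈ T := by
      intro j hj1 hj2
      by_contra hc
      exact Nat.find_min hex hj2 ⟨hj1, hc⟩
    have hallin : ∀ j, x ≤ j → j < p → j ∈ T := by
      intro j hj1 hj2
      rcases Nat.eq_or_lt_of_le hj1 with rfl | h
      · exact hx
      · exact hmin j h hj2
    have hrl : p - x ≤ runlen T p := runlen_ge T x p hallin
    set pF : Fin (n+1) := ⟨p, by omega⟩ with hpF
    have hsupp : pF ∈ (monoFin n T).support := by
      rw [mem_supp_monoFin]
      refine ⟨hpT, by simp [hpF]; omega, ?_⟩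
      show (pF:ℕ) - 1 ∈ T
      have : (pF:ℕ) - 1 = p - 1 := rfl
      rw [this]
      exact hallin (p-1) (by omega) (by omega)
    refine ⟨pF, hsupp, ?_, ?_⟩
    · rw [monoFin_apply, if_neg hpT]
      show (p:ℕ) - runlen T p ≤ x
      omega
    · show x < p
      omega


lemma filter_tsetF_card {n : ℕ} {m : Fin (n+1) →₀ ℕ} (hm : AdmF n m)
    {p : Fin (n+1)} (hp : p ∈ m.support) {x : ℕ}
    (hx1 : (p:ℕ) - m p ≤ x) (hx2 : x < (p:ℕ)) :
    ((tsetF m).filter (fun y => x < y)).card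
      = ((p:ℕ) - 1 - x) + ∑ q ∈ m.support.filter (fun q => p < q), m q := by
  classical
  rw [tsetF, Finset.filter_biUnion, Finset.card_biUnion (fun a ha b hb hab =>
    Disjoint.mono (Finset.filter_subset _ _) (Finset.filter_subset _ _)
      (tsetF_disjoint hm a ha b hb hab))]
  have hpt : ∀ q ∈ m.support,
      ((Finset.Ico ((q:ℕ) - m q) (q:ℕ)).filter (fun y => x < y)).card
        = (if q = p then (p:ℕ) - 1 - x else 0) + (if p < q then m q else 0) := by
    intro q hq
    rcases Nat.lt_trichotomy (q:ℕ) (p:ℕ) with h | h | h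
    · have hmm := hm.2 p hp q hq h
      rw [Finset.filter_eq_empty_iff.2 (fun y hy => by
        rw [Finset.mem_Ico] at hy; omega)]
      rw [if_neg (fun hc => by subst hc; omega), if_neg (fun hc => by
        rw [Fin.lt_def] at hc; omega)]
      rfl
    · have hqp : q = p := Fin.ext h
      subst hqp
      rw [if_pos rfl, if_neg (lt_irrefl q)]
      have : (Finset.Ico ((q:ℕ) - m q) (q:ℕ)).filter (fun y => x < y)
          = Finset.Ico (x+1) (q:ℕ) := by
        ext y
        simp only [Finset.mem_filter, Finset.mem_Ico]
        omega
      rw [this, Nat.card_Ico]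
      omega
    · have hmm := hm.2 q hq p hp h
      rw [Finset.filter_true_of_mem (fun y hy => by
        rw [Finset.mem_Ico] at hy; omega)]
      rw [if_neg (fun hc => by subst hc; omega), if_pos (by rwa [Fin.lt_def]),
        Nat.card_Ico]
      have := hm.1 q hq
      omega
  rw [Finset.sum_congr rfl hpt, Finset.sum_add_distrib]
  congr 1
  · rw [Finset.sum_ite_eq' m.support p (fun _ => (p:ℕ) - 1 - x), if_pos hp]
  · rw [Finset.sum_filter]

lemma sufF_iff {n : ℕ} (hn : 2 ≤ n) {m : Fin (n+1) →₀ ℕ} (hm : AdmF n m) :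
    SufF n m ↔ ∀ x ∈ tsetF m,
      x + 2 * (((tsetF m).filter (fun y => x < y)).card) ≤ n - 2 := by
  constructor
  · intro hs x hx
    rw [mem_tsetF] at hx
    obtain ⟨p, hp, h1, h2⟩ := hx
    rw [filter_tsetF_card hm hp h1 h2]
    have := hs p hp
    have := hm.1 p hp
    omega
  · intro hb p hp
    have hm1 : m p ≠ 0 := Finsupp.mem_support_iff.1 hp
    have hmp := hm.1 p hp
    have hx : (p:ℕ) - m p ∈ tsetF m := by
      rw [mem_tsetF]
      exact ⟨p, hp, le_refl _, by omega⟩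
    have := hb _ hx
    rw [filter_tsetF_card hm hp (le_refl _) (by omega)] at this
    omega


/-! ### packaged finsets of monomials -/

noncomputable def AdmFin (n k : ℕ) : Finset (Fin (n+1) →₀ ℕ) :=
  ((Finset.Icc 1 (n-1)).powersetCard k).image (monoFin n)

noncomputable def SFYfin (n k : ℕ) : Finset (Fin (n+1) →₀ ℕ) :=
  (Bal (n-2) k).image (monoFin n)

lemma mem_AdmFin {n k : ℕ} {m : Fin (n+1) →₀ ℕ} :
    m ∈ AdmFin n k ↔ AdmF n m ∧ mdeg m = k := by
  rw [AdmFin, Finset.mem_image]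
  constructor
  · rintro ⟨T, hT, rfl⟩
    rw [Finset.mem_powersetCard] at hT
    have hA := monoFin_AdmF T hT.1
    refine ⟨hA, ?_⟩
    rw [← card_tsetF _ hA, tsetF_monoFin T hT.1, hT.2]
  · rintro ⟨hA, hd⟩
    refine ⟨tsetF m, ?_, monoFin_tsetF m hA⟩
    rw [Finset.mem_powersetCard]
    exact ⟨tsetF_subset m hA, by rw [card_tsetF m hA, hd]⟩

lemma card_AdmFin (n k : ℕ) : (AdmFin n k).card = (n-1).choose k := by
  rw [AdmFin, Finset.card_image_of_injOn (fun S hS T hT hST => by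
    rw [Finset.mem_coe, Finset.mem_powersetCard] at hS hT
    rw [← tsetF_monoFin S hS.1, ← tsetF_monoFin T hT.1, hST]),
    Finset.card_powersetCard, Nat.card_Icc]
  norm_num

lemma mem_SFYfin {n k : ℕ} (hn : 2 ≤ n) {m : Fin (n+1) →₀ ℕ} :
    m ∈ SFYfin n k ↔ AdmF n m ∧ SufF n m ∧ mdeg m = k := by
  rw [SFYfin, Finset.mem_image]
  constructor
  · rintro ⟨T, hT, rfl⟩
    rw [mem_Bal] at hT
    obtain ⟨hsub, hcard, hcond⟩ := hT
    have hsub' : T ⊆ Finset.Icc 1 (n-1) := by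
      intro y hy
      have := Finset.mem_Icc.1 (hsub hy)
      rw [Finset.mem_Icc]
      omega
    have hA := monoFin_AdmF T hsub'
    refine ⟨hA, ?_, ?_⟩
    · rw [sufF_iff hn hA, tsetF_monoFin T hsub']
      intro x hx
      have := hcond x hx
      omega
    · rw [← card_tsetF _ hA, tsetF_monoFin T hsub', hcard]
  · rintro ⟨hA, hS, hd⟩
    refine ⟨tsetF m, ?_, monoFin_tsetF m hA⟩
    rw [mem_Bal]
    have hcond := (sufF_iff hn hA).1 hS
    refine ⟨?_, by rw [card_tsetF m hA, hd], fun x hx => by have := hcond x hx; omega⟩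
    intro x hx
    have h1 := Finset.mem_Icc.1 (tsetF_subset m hA hx)
    have h2 := hcond x hx
    rw [Finset.mem_Icc]
    omega

lemma card_SFYfin (n k : ℕ) (hn : 2 ≤ n) : (SFYfin n k).card = chfun (n-2) k := by
  rw [SFYfin, ← bal_card, Finset.card_image_of_injOn (fun S hS T hT hST => by
    rw [Finset.mem_coe, mem_Bal] at hS hT
    have hS' : S ⊆ Finset.Icc 1 (n-1) := fun y hy => by
      have := Finset.mem_Icc.1 (hS.1 hy); rw [Finset.mem_Icc]; omega
    have hT' : T ⊆ Finset.Icc 1 (n-1) := fun y hy => by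
      have := Finset.mem_Icc.1 (hT.1 hy); rw [Finset.mem_Icc]; omega
    rw [← tsetF_monoFin S hS', ← tsetF_monoFin T hT', hST])]


/-! ### packing a chain with exponents into a monomial -/

noncomputable def packM {n s : ℕ} (f : Fin s → Fin (n+1)) (ℓ : Fin s → ℕ) : Fin (n+1) →₀ ℕ :=
  ∑ i, Finsupp.single (f i) (ℓ i)

section pack
variable {n s : ℕ} {f : Fin s → Fin (n+1)} {ℓ : Fin s → ℕ}

lemma packM_apply_eq (hinj : Function.Injective f) (j : Fin s) :
    packM f ℓ (f j) = ℓ j := by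
  rw [packM, Finsupp.finset_sum_apply]
  rw [Finset.sum_eq_single j]
  · rw [Finsupp.single_apply, if_pos rfl]
  · intro i _ hij
    rw [Finsupp.single_apply, if_neg (fun hc => hij (hinj hc))]
  · intro h
    exact absurd (Finset.mem_univ j) h

lemma packM_apply_notmem {x : Fin (n+1)} (hx : ∀ i, f i ≠ x) : packM f ℓ x = 0 := by
  rw [packM, Finsupp.finset_sum_apply]
  apply Finset.sum_eq_zero
  intro i _
  rw [Finsupp.single_apply, if_neg (hx i)]

lemma packM_support (hinj : Function.Injective f) (hl : ∀ i, 1 ≤ ℓ i) :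
    (packM f ℓ).support = Finset.image f Finset.univ := by
  ext x
  rw [Finsupp.mem_support_iff, Finset.mem_image]
  constructor
  · intro hx
    by_contra hc
    push_neg at hc
    exact hx (packM_apply_notmem (fun i => hc i (Finset.mem_univ i)))
  · rintro ⟨i, -, rfl⟩
    rw [packM_apply_eq hinj]
    have := hl i
    omega

lemma packM_mdeg (hinj : Function.Injective f) (hl : ∀ i, 1 ≤ ℓ i) :
    mdeg (packM f ℓ) = ∑ i, ℓ i := by
  rw [mdeg_eq_sum, packM_support hinj hl, Finset.sum_image (fun a _ b _ h => hinj h)]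
  apply Finset.sum_congr rfl
  intro i _
  rw [packM_apply_eq hinj]

lemma strictMono_of_hmono (hmono : ∀ i j : Fin s, i < j → f i < f j) :
    StrictMono f := fun a b h => hmono a b h

lemma packM_AdmF (hmono : ∀ i j : Fin s, i < j → f i < f j) (hbot : ∀ i, (⊥ : Fin (n+1)) < f i) (hl : ∀ i, 1 ≤ ℓ i)
    (hgap : ∀ i, ℓ i < gap (fun p : Fin (n+1) => (p:ℕ)) f i) :
    AdmF n (packM f ℓ) := by
  have hsm := strictMono_of_hmono hmono
  have hinj := hsm.injective
  have happ : ∀ x ∈ (packM f ℓ).support, ∃ i, f i = x := by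
    intro x hx
    rw [packM_support hinj hl, Finset.mem_image] at hx
    obtain ⟨i, -, rfl⟩ := hx
    exact ⟨i, rfl⟩
  constructor
  · intro p hp
    obtain ⟨i, rfl⟩ := happ p hp
    rw [packM_apply_eq hinj]
    have := hgap i
    rw [gap] at this
    omega
  · intro p hp q hq hlt
    obtain ⟨i, rfl⟩ := happ p hp
    obtain ⟨i', rfl⟩ := happ q hq
    rw [packM_apply_eq hinj]
    have hii : i' < i := by
      rcases lt_trichotomy i' i with h | h | h
      · exact h
      · subst h; omega
      · have := hmono i i' h
        rw [Fin.lt_def] at this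
        omega
    have hi0 : (i:ℕ) ≠ 0 := by
      rw [Fin.lt_def] at hii
      omega
    have hgapi := hgap i
    rw [gap, if_neg hi0] at hgapi
    set iprev : Fin s := ⟨(i:ℕ) - 1, lt_of_le_of_lt (Nat.sub_le _ _) i.2⟩ with hiprev
    have hle : f i' ≤ f iprev := by
      apply hsm.monotone
      rw [Fin.le_def]
      rw [Fin.lt_def] at hii
      simp [hiprev]
      omega
    rw [Fin.le_def] at hle
    omega

/-- transfer of the suffix sums. -/
lemma packM_sum_gt (hmono : ∀ i j : Fin s, i < j → f i < f j)
    (hl : ∀ i, 1 ≤ ℓ i) (i : Fin s) :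
    ∑ q ∈ (packM f ℓ).support.filter (fun q => f i < q), packM f ℓ q
      = ∑ j ∈ Finset.univ.filter (fun j => i < j), ℓ j := by
  have hsm := strictMono_of_hmono hmono
  have hinj := hsm.injective
  rw [packM_support hinj hl, Finset.filter_image]
  rw [Finset.sum_image (fun a _ b _ h => hinj h)]
  rw [Finset.filter_congr (fun j _ => by rw [hsm.lt_iff_lt])]
  apply Finset.sum_congr rfl
  intro j _
  rw [packM_apply_eq hinj]

end pack

/-! ### unpacking a monomial into a chain with exponents -/

section unpack
variable {n : ℕ} (m : Fin (n+1) →₀ ℕ)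

noncomputable def uf : Fin (m.support.card) → Fin (n+1) :=
  ⇑(m.support.orderEmbOfFin rfl)

lemma uf_strictMono : StrictMono (uf m) := (m.support.orderEmbOfFin rfl).strictMono

lemma uf_mem (i : Fin m.support.card) : uf m i ∈ m.support :=
  Finset.orderEmbOfFin_mem _ rfl i

lemma uf_image : Finset.image (uf m) Finset.univ = m.support := by
  apply Finset.eq_of_subset_of_card_le
  · intro x hx
    rw [Finset.mem_image] at hx
    obtain ⟨i, -, rfl⟩ := hx
    exact uf_mem m i
  · rw [Finset.card_image_of_injective _ (uf_strictMono m).injective, Finset.card_univ,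
      Fintype.card_fin]

lemma packM_uf : packM (uf m) (fun i => m (uf m i)) = m := by
  ext x
  by_cases hx : x ∈ m.support
  · rw [← uf_image] at hx
    rw [Finset.mem_image] at hx
    obtain ⟨i, -, rfl⟩ := hx
    rw [packM_apply_eq (uf_strictMono m).injective]
  · have h0 : m x = 0 := Finsupp.notMem_support_iff.1 hx
    rw [h0]
    apply packM_apply_notmem
    intro i hc
    exact hx (hc ▸ uf_mem m i)

lemma uf_sum : ∑ i, m (uf m i) = mdeg m := by
  rw [mdeg_eq_sum]
  conv_rhs => rw [← uf_image m]
  rw [Finset.sum_image (fun a _ b _ h => (uf_strictMono m).injective h)]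

variable {m}

lemma uf_bot (hA : AdmF n m) (i : Fin m.support.card) : (⊥ : Fin (n+1)) < uf m i := by
  have h1 := hA.1 _ (uf_mem m i)
  have h2 : m (uf m i) ≠ 0 := Finsupp.mem_support_iff.1 (uf_mem m i)
  rw [Fin.lt_def]
  have : ((⊥ : Fin (n+1)) : ℕ) = 0 := rfl
  omega

lemma uf_pos (hA : AdmF n m) (i : Fin m.support.card) : 1 ≤ m (uf m i) := by
  have h2 : m (uf m i) ≠ 0 := Finsupp.mem_support_iff.1 (uf_mem m i)
  omega

lemma uf_gap (hA : AdmF n m) (i : Fin m.support.card) :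
    m (uf m i) < gap (fun p : Fin (n+1) => (p:ℕ)) (uf m) i := by
  rw [gap]
  by_cases hi : (i:ℕ) = 0
  · rw [if_pos hi]
    have := hA.1 _ (uf_mem m i)
    omega
  · rw [if_neg hi]
    set iprev : Fin m.support.card := ⟨(i:ℕ) - 1, lt_of_le_of_lt (Nat.sub_le _ _) i.2⟩
    have hlt : uf m iprev < uf m i := by
      apply uf_strictMono
      rw [Fin.lt_def]
      simp [iprev]
      omega
    rw [Fin.lt_def] at hlt
    have := hA.2 _ (uf_mem m i) _ (uf_mem m iprev) hlt
    omega

/-- transfer of the suffix sums, unpacking direction. -/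
lemma uf_sum_gt (i : Fin m.support.card) :
    ∑ q ∈ m.support.filter (fun q => uf m i < q), m q
      = ∑ j ∈ Finset.univ.filter (fun j => i < j), m (uf m j) := by
  conv_lhs => rw [← uf_image m]
  rw [Finset.filter_image,
    Finset.sum_image (fun a _ b _ h => (uf_strictMono m).injective h),
    Finset.filter_congr (fun j _ => by rw [(uf_strictMono m).lt_iff_lt])]

end unpack


lemma val_top {n : ℕ} : ((⊤ : Fin (n+1)) : ℕ) = n := rfl

lemma isSFY_iff {n : ℕ} (m : Fin (n+1) →₀ ℕ) :
    IsSFY (fun i : Fin (n+1) => (i:ℕ)) m ↔ AdmF n m ∧ SufF n m := by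
  constructor
  · rintro ⟨s, f, ℓ, hmono, hbot, htop, hl, hgap, hsuf, rfl⟩
    have hpm : (∑ i, Finsupp.single (f i) (ℓ i)) = packM f ℓ := rfl
    rw [hpm]
    have hinj := (strictMono_of_hmono hmono).injective
    refine ⟨packM_AdmF hmono hbot hl hgap, ?_⟩
    intro p hp
    rw [packM_support hinj hl, Finset.mem_image] at hp
    obtain ⟨i, -, rfl⟩ := hp
    rw [packM_apply_eq hinj, packM_sum_gt hmono hl]
    have hs := hsuf i
    beta_reduce at hs
    rw [val_top] at hs
    rw [← Nat.cast_sum] at hs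
    have : ((f i : ℕ) : ℤ) ≤ (n : ℤ) := by
      exact_mod_cast Nat.lt_succ_iff.1 (f i).2
    omega
  · rintro ⟨hA, hS⟩
    refine ⟨m.support.card, uf m, fun i => m (uf m i),
      fun i j h => uf_strictMono m h, uf_bot hA, ?_, uf_pos hA, uf_gap hA, ?_,
      (packM_uf m).symm⟩
    · intro i
      have hs := hS _ (uf_mem m i)
      have h1 := uf_pos hA i
      rw [Fin.lt_def, val_top]
      omega
    · intro i
      have hs := hS _ (uf_mem m i)
      rw [uf_sum_gt] at hs
      beta_reduce
      rw [val_top, ← Nat.cast_sum]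
      have h2 : (uf m i : ℕ) ≤ n := Nat.lt_succ_iff.1 (uf m i).2
      omega


lemma mem_filter' {α : Type*} {p : α → Prop} {inst : DecidablePred p} {s : Finset α} {a : α} :
    a ∈ @Finset.filter α p inst s ↔ a ∈ s ∧ p a := by
  classical
  rw [Finset.filter_congr_decidable]
  exact Finset.mem_filter

open scoped Classical in
lemma chow_coeff (n k : ℕ) :
    (chowPoly (fun i : Fin (n+1) => (i:ℕ))).coeff k = ((n-1).choose k : ℤ) := by
  rw [chowPoly]
  simp only [Polynomial.finset_sum_coeff, Finset.prod_univ_sum,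
    Finset.prod_pow_eq_pow_sum, Polynomial.coeff_X_pow, Finset.sum_boole]
  rw [← card_AdmFin n k]
  norm_cast
  simp only [← Finset.card_sigma]
  apply Finset.card_bij (fun a _ => packM a.2.1 a.2.2)
  · -- maps into AdmFin
    rintro ⟨s, f, e⟩ ha
    rw [Finset.mem_sigma, Finset.mem_sigma] at ha
    obtain ⟨-, hf, he⟩ := ha
    rw [mem_filter'] at hf he
    obtain ⟨-, hmono, hbot⟩ := hf
    obtain ⟨hpi, hsum⟩ := he
    dsimp only at hmono hbot hpi hsum ⊢
    rw [Fintype.mem_piFinset] at hpi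
    have hl : ∀ i, 1 ≤ e i := fun i => (Finset.mem_Ico.1 (hpi i)).1
    have hgap : ∀ i, e i < gap (fun p : Fin (n+1) => (p:ℕ)) f i :=
      fun i => (Finset.mem_Ico.1 (hpi i)).2
    rw [mem_AdmFin]
    refine ⟨packM_AdmF hmono hbot hl hgap, ?_⟩
    rw [packM_mdeg (strictMono_of_hmono hmono).injective hl]
    omega
  · -- injective
    rintro ⟨s₁, f₁, e₁⟩ ha₁ ⟨s₂, f₂, e₂⟩ ha₂ heq
    rw [Finset.mem_sigma, Finset.mem_sigma] at ha₁ ha₂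
    obtain ⟨-, hf₁, he₁⟩ := ha₁
    obtain ⟨-, hf₂, he₂⟩ := ha₂
    rw [mem_filter'] at hf₁ hf₂ he₁ he₂
    obtain ⟨-, hmono₁, hbot₁⟩ := hf₁
    obtain ⟨-, hmono₂, hbot₂⟩ := hf₂
    dsimp only at hmono₁ hbot₁ hmono₂ hbot₂ he₁ he₂ heq
    rw [Fintype.mem_piFinset] at he₁ he₂
    have hl₁ : ∀ i, 1 ≤ e₁ i := fun i => (Finset.mem_Ico.1 (he₁.1 i)).1
    have hl₂ : ∀ i, 1 ≤ e₂ i := fun i => (Finset.mem_Ico.1 (he₂.1 i)).1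
    have hinj₁ := (strictMono_of_hmono hmono₁).injective
    have hinj₂ := (strictMono_of_hmono hmono₂).injective
    have hsupp : Finset.image f₁ Finset.univ = Finset.image f₂ Finset.univ := by
      rw [← packM_support hinj₁ hl₁, ← packM_support hinj₂ hl₂, heq]
    have hs : s₁ = s₂ := by
      have h1 : (Finset.image f₁ Finset.univ).card = s₁ := by
        rw [Finset.card_image_of_injective _ hinj₁, Finset.card_univ, Fintype.card_fin]
      have h2 : (Finset.image f₂ Finset.univ).card = s₂ := by
        rw [Finset.card_image_of_injective _ hinj₂, Finset.card_univ, Fintype.card_fin]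
      rw [← h1, ← h2, hsupp]
    subst hs
    have hcard : (Finset.image f₁ Finset.univ).card = s₁ := by
      rw [Finset.card_image_of_injective _ hinj₁, Finset.card_univ, Fintype.card_fin]
    have hmem₂ : ∀ x, f₂ x ∈ Finset.image f₁ Finset.univ := by
      intro x
      rw [hsupp]
      exact Finset.mem_image_of_mem f₂ (Finset.mem_univ x)
    have e1 : f₁ = (Finset.image f₁ Finset.univ).orderEmbOfFin hcard :=
      Finset.orderEmbOfFin_unique hcard
        (fun x => Finset.mem_image_of_mem f₁ (Finset.mem_univ x))
        (strictMono_of_hmono hmono₁)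
    have e2 : f₂ = (Finset.image f₁ Finset.univ).orderEmbOfFin hcard :=
      Finset.orderEmbOfFin_unique hcard hmem₂ (strictMono_of_hmono hmono₂)
    have hf : f₁ = f₂ := e1.trans e2.symm
    subst hf
    have he : e₁ = e₂ := by
      funext j
      have := congrArg (fun m => m (f₁ j)) heq
      simpa [packM_apply_eq hinj₁] using this
    rw [he]
  · -- surjective
    intro m hm
    rw [mem_AdmFin] at hm
    obtain ⟨hA, hd⟩ := hm
    refine ⟨⟨m.support.card, uf m, fun i => m (uf m i)⟩, ?_, packM_uf m⟩
    rw [Finset.mem_sigma, Finset.mem_sigma]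
    refine ⟨?_, ?_, ?_⟩
    · rw [Finset.mem_range]
      dsimp only
      simp only [Fintype.card_fin]
      have := Finset.card_le_univ m.support
      rw [Fintype.card_fin] at this
      omega
    · rw [mem_filter']
      exact ⟨Finset.mem_univ _, fun i j h => uf_strictMono m h, uf_bot hA⟩
    · rw [mem_filter', Fintype.mem_piFinset]
      refine ⟨fun i => Finset.mem_Ico.2 ⟨uf_pos hA i, uf_gap hA i⟩, ?_⟩
      rw [uf_sum, hd]


lemma mdeg_zero_iff {n : ℕ} (m : Fin (n+1) →₀ ℕ) : mdeg m = 0 ↔ m = 0 := by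
  rw [mdeg_eq_sum]
  constructor
  · intro hm
    have h0 : ∀ p ∈ m.support, m p = 0 := (Finset.sum_eq_zero_iff).1 hm
    ext p
    by_cases hp : p ∈ m.support
    · exact h0 p hp
    · exact Finsupp.notMem_support_iff.1 hp
  · rintro rfl
    simp

lemma isSFY_zero {n : ℕ} : IsSFY (fun i : Fin (n+1) => (i:ℕ)) 0 := by
  refine ⟨0, Fin.elim0, Fin.elim0, fun i => i.elim0, fun i => i.elim0, fun i => i.elim0,
    fun i => i.elim0, fun i => i.elim0, fun i => i.elim0, ?_⟩
  simp

end St18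

open St18 in
/-- For the chain `C_n`, the `h`-vector of the monomial order ideal `SFY`
equals the differential sequence `Δh` of the coefficients of the Chow polynomial `H_{C_n}(t)`:
the number of SFY monomials of degree `0` is `1`, and of degree `k` is `h_k - h_{k-1}` for
`1 ≤ k ≤ ⌊(n-1)/2⌋`. -/
theorem stmt18 (n : ℕ) (h : ℕ → ℤ)
    (hh : ∀ k, h k = (chowPoly (fun i : Fin (n + 1) => (i : ℕ))).coeff k) :
    Set.ncard {m : Fin (n + 1) →₀ ℕ |
        IsSFY (fun i : Fin (n + 1) => (i : ℕ)) m ∧ mdeg m = 0} = 1 ∧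
    ∀ k, 1 ≤ k → k ≤ (n - 1) / 2 →
      (Set.ncard {m : Fin (n + 1) →₀ ℕ |
          IsSFY (fun i : Fin (n + 1) => (i : ℕ)) m ∧ mdeg m = k} : ℤ) = h k - h (k - 1) := by
  constructor
  · have hset : {m : Fin (n + 1) →₀ ℕ |
        IsSFY (fun i : Fin (n + 1) => (i : ℕ)) m ∧ mdeg m = 0} = {0} := by
      ext m
      simp only [Set.mem_setOf_eq, Set.mem_singleton_iff]
      constructor
      · rintro ⟨-, hd⟩
        exact (mdeg_zero_iff m).1 hd
      · rintro rfl
        exact ⟨isSFY_zero, (mdeg_zero_iff 0).2 rfl⟩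
    rw [hset, Set.ncard_singleton]
  · intro k hk1 hk2
    have h2k : 2 * k ≤ n - 1 := by
      have := Nat.div_mul_le_self (n-1) 2
      omega
    have hn : 3 ≤ n := by omega
    have hset : {m : Fin (n + 1) →₀ ℕ |
        IsSFY (fun i : Fin (n + 1) => (i : ℕ)) m ∧ mdeg m = k} = ↑(SFYfin n k) := by
      ext m
      rw [Set.mem_setOf_eq, Finset.mem_coe, mem_SFYfin (by omega), isSFY_iff]
      tauto
    rw [hset, Set.ncard_coe_finset, card_SFYfin n k (by omega),
      chfun_ne (n-2) k (by omega) (by omega)]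
    have hm1 : n - 2 + 1 = n - 1 := by omega
    rw [hm1]
    have hle : (n-1).choose (k-1) ≤ (n-1).choose k := by
      have := choose_le_choose_succ (n := n-1) (k := k-1) (by omega)
      have hk' : k - 1 + 1 = k := by omega
      rwa [hk'] at this
    rw [hh k, hh (k-1), chow_coeff, chow_coeff]
    rw [Nat.cast_sub hle]
end
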